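/- arXiv:1905.12811 — 6 statements merged into one kernel-verified Lean document; each statement's English description precedes it below -/
import Mathlib

section
/- Let ν be a Borel probability measure on [0,∞) with finite first moment. For each l ≥ 0, writing A_l^ν = {0 = a₁ ≤ a₂ ≤ … ≤ a_{2^l+1} = +∞}, define the discrete probability measure ν_{l+1} := Σ_{i=1}^{2^l} ν([a_i, a_{i+1})) · δ_{m^ν_{[a_i,a_{i+1})}}. Then the sequence (ν_{l+1})_{l≥0} converges weakly to ν as l → +∞. -/
open MeasureTheory Set Filter
open Topology ENNReal

/-- Barycenter of `ν` over the interval `[a, b) ⊂ [0,∞]` (endpoints in `EReal`),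
with the convention that it equals the left endpoint `a` when the interval is null. -/
noncomputable def ebary (ν : Measure ℝ) (a b : EReal) : EReal :=
  if ν {x : ℝ | a ≤ (x : EReal) ∧ (x : EReal) < b} = 0 then a
  else (((∫ r in {x : ℝ | a ≤ (x : EReal) ∧ (x : EReal) < b}, r ∂ν) /
      (ν {x : ℝ | a ≤ (x : EReal) ∧ (x : EReal) < b}).toReal : ℝ) : EReal)

/-- The sorted points `0 = a₁ ≤ a₂ ≤ ⋯ ≤ a_{2^l+1} = +∞` of the recursively defined
set `A_l^ν`: `pts ν l i` is `a_{i+1}` for `i = 0, …, 2^l`.  At each stage the barycenter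
of each interval `[aᵢ, aᵢ₊₁)` is inserted between its endpoints. -/
noncomputable def pts (ν : Measure ℝ) : ℕ → ℕ → EReal
  | 0, 0 => 0
  | 0, _ + 1 => ⊤
  | l + 1, i =>
      if i % 2 = 0 then pts ν l (i / 2)
      else ebary ν (pts ν l (i / 2)) (pts ν l (i / 2 + 1))

/-- The `i`-th interval `[aᵢ, aᵢ₊₁)` of the partition at stage `l` (as a subset of `ℝ`). -/
def seg (ν : Measure ℝ) (l i : ℕ) : Set ℝ :=
  {x : ℝ | pts ν l i ≤ (x : EReal) ∧ (x : EReal) < pts ν l (i + 1)}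

/-- The discrete approximation `ν_{l+1} = ∑_{i=1}^{2^l} ν([aᵢ, aᵢ₊₁)) δ_{m^ν_{[aᵢ,aᵢ₊₁)}}`. -/
noncomputable def discreteApprox (ν : Measure ℝ) (l : ℕ) : Measure ℝ :=
  ∑ i ∈ Finset.range (2 ^ l),
    ν (seg ν l i) • Measure.dirac ((ebary ν (pts ν l i) (pts ν l (i + 1))).toReal)

/-- the interval `[a,b)` as a subset of `ℝ`, with `EReal` endpoints -/
def Iseg (a b : EReal) : Set ℝ := {x : ℝ | a ≤ (x : EReal) ∧ (x : EReal) < b}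

lemma measurableSet_Iseg (a b : EReal) : MeasurableSet (Iseg a b) := by
  have : Iseg a b = ((↑) : ℝ → EReal) ⁻¹' (Ici a ∩ Iio b) := rfl
  rw [this]
  exact measurable_coe_real_ereal (measurableSet_Ici.inter measurableSet_Iio)

lemma Iseg_mono {a a' b b' : EReal} (ha : a ≤ a') (hb : b' ≤ b) : Iseg a' b' ⊆ Iseg a b :=
  fun x hx => ⟨le_trans ha hx.1, lt_of_lt_of_le hx.2 hb⟩

lemma Iseg_split {a m b : EReal} (h1 : a ≤ m) (h2 : m ≤ b) :
    Iseg a b = Iseg a m ∪ Iseg m b := by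
  ext x
  constructor
  · rintro ⟨hx1, hx2⟩
    rcases lt_or_ge (x : EReal) m with h | h
    · exact Or.inl ⟨hx1, h⟩
    · exact Or.inr ⟨h, hx2⟩
  · rintro (⟨h1', h2'⟩ | ⟨h1', h2'⟩)
    · exact ⟨h1', lt_of_lt_of_le h2' h2⟩
    · exact ⟨le_trans h1 h1', h2'⟩

lemma Iseg_disjoint {a m b : EReal} : Disjoint (Iseg a m) (Iseg m b) := by
  rw [Set.disjoint_left]
  rintro x ⟨_, h2⟩ ⟨h1, _⟩
  exact absurd h1 (not_le.2 h2)

lemma ebary_of_eq {ν : Measure ℝ} {a b : EReal} (h : ν (Iseg a b) = 0) : ebary ν a b = a :=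
  if_pos h

lemma ebary_of_ne {ν : Measure ℝ} {a b : EReal} (h : ν (Iseg a b) ≠ 0) :
    ebary ν a b = (((∫ r in Iseg a b, r ∂ν) / (ν (Iseg a b)).toReal : ℝ) : EReal) :=
  if_neg h

lemma Iseg_subset_Ici {a b : EReal} (ha : 0 ≤ a) : Iseg a b ⊆ Ici (0:ℝ) := by
  rintro x ⟨h1, _⟩
  have : (0 : EReal) ≤ (x : EReal) := le_trans ha h1
  exact_mod_cast this

/-- main facts about the barycenter of a non-null interval -/
lemma ebary_mem (ν : Measure ℝ) [IsProbabilityMeasure ν]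
    (hmom : Integrable (fun r : ℝ => r) ν) {a b : EReal} (ha : 0 ≤ a)
    (h : ν (Iseg a b) ≠ 0) :
    ∃ m : ℝ, ebary ν a b = (m : EReal) ∧ a ≤ (m : EReal) ∧ (m : EReal) < b ∧
      ∫ r in Iseg a b, r ∂ν = m * (ν (Iseg a b)).toReal := by
  have haT : a ≠ ⊤ := by
    intro hT
    apply h
    have : Iseg a b = ∅ := by
      ext x; simp only [Iseg, mem_setOf_eq, mem_empty_iff_false, iff_false, not_and]
      intro h1
      exact absurd (lt_of_le_of_lt h1 (EReal.coe_lt_top x)) (by simp [hT])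
    simp [this]
  have haB : a ≠ ⊥ := ne_of_gt (lt_of_lt_of_le EReal.bot_lt_zero ha)
  set S := Iseg a b with hS
  have hmeas : MeasurableSet S := measurableSet_Iseg a b
  have hfin : ν S ≠ ⊤ := measure_ne_top ν S
  have hpos : 0 < (ν S).toReal := ENNReal.toReal_pos h hfin
  set m : ℝ := (∫ r in S, r ∂ν) / (ν S).toReal with hm
  have hint : IntegrableOn (fun r : ℝ => r) S ν := hmom.integrableOn
  refine ⟨m, ebary_of_ne h, ?_, ?_, (div_mul_cancel₀ _ (ne_of_gt hpos)).symm⟩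
  · -- a ≤ m
    set ar := a.toReal with har
    have hae : a = (ar : EReal) := (EReal.coe_toReal haT haB).symm
    have hlow : ar * (ν S).toReal ≤ ∫ r in S, r ∂ν := by
      apply setIntegral_ge_of_const_le_real hmeas hfin _ hint
      rintro x ⟨h1, _⟩
      rw [hae] at h1
      exact_mod_cast h1
    rw [hae]
    apply EReal.coe_le_coe_iff.2
    rw [hm, le_div_iff₀ hpos]
    exact hlow
  · -- m < b
    induction b with
    | bot =>
      exfalso; apply h
      have : S = ∅ := by
        ext x; simp only [hS, Iseg, mem_setOf_eq, mem_empty_iff_false, iff_false, not_and]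
        intro _; exact not_lt_bot
      simp [this]
    | coe β =>
      apply EReal.coe_lt_coe_iff.2
      have hlt : ∀ x ∈ S, x < β := by
        rintro x ⟨_, h2⟩; exact_mod_cast h2
      have h1 : 0 < ∫ r in S, (β - r) ∂ν := by
        rw [setIntegral_pos_iff_support_of_nonneg_ae]
        · apply lt_of_lt_of_le (lt_of_le_of_ne zero_le (Ne.symm h))
          apply measure_mono
          intro x hx
          exact ⟨fun h0 => (ne_of_gt (sub_pos.2 (hlt x hx))) h0, hx⟩
        · rw [EventuallyLE, ae_restrict_iff' hmeas]
          exact ae_of_all _ (fun x hx => sub_nonneg.2 (le_of_lt (hlt x hx)))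
        · exact (integrableOn_const (measure_ne_top ν S)).sub hint
      have h2 : ∫ r in S, (β - r) ∂ν = β * (ν S).toReal - ∫ r in S, r ∂ν := by
        rw [integral_sub (integrableOn_const (measure_ne_top ν S) : IntegrableOn (fun _ => β) S ν) hint]
        simp [setIntegral_const, smul_eq_mul, mul_comm, measureReal_def]
      rw [h2] at h1
      rw [hm, div_lt_iff₀ hpos]
      linarith
    | top => exact EReal.coe_lt_top m

section PtsLemmas

variable (ν : Measure ℝ) [IsProbabilityMeasure ν] (hmom : Integrable (fun r : ℝ => r) ν)

lemma pts_even (l i : ℕ) : pts ν (l+1) (2*i) = pts ν l i := by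
  show (if (2*i) % 2 = 0 then _ else _) = _
  simp [Nat.mul_mod_right, Nat.mul_div_cancel_left i (by norm_num : 0 < 2)]

lemma pts_odd (l i : ℕ) :
    pts ν (l+1) (2*i+1) = ebary ν (pts ν l i) (pts ν l (i+1)) := by
  show (if (2*i+1) % 2 = 0 then _ else _) = _
  have h2 : (2*i+1) % 2 = 1 := by omega
  have h3 : (2*i+1) / 2 = i := by omega
  rw [h2, h3]
  simp

lemma pts_zero' (l : ℕ) : pts ν l 0 = 0 := by
  induction l with
  | zero => rfl
  | succ l ih => rw [show (0:ℕ) = 2*0 by norm_num, pts_even, ih]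

include hmom in
lemma pts_nonneg (l : ℕ) : ∀ i, 0 ≤ pts ν l i := by
  induction l with
  | zero => intro i; cases i with
    | zero => exact le_refl _
    | succ n => exact le_top
  | succ l ih =>
    intro i
    rcases Nat.even_or_odd i with ⟨k, hk⟩ | ⟨k, hk⟩
    · rw [hk, show k + k = 2*k by ring, pts_even]; exact ih k
    · rw [hk, pts_odd]
      by_cases h : ν (Iseg (pts ν l k) (pts ν l (k+1))) = 0
      · rw [ebary_of_eq h]; exact ih k
      · obtain ⟨m, hm1, hm2, _, _⟩ := ebary_mem ν hmom (ih k) h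
        rw [hm1]; exact le_trans (ih k) hm2

include hmom in
lemma pts_mono_succ (l : ℕ) : ∀ i, pts ν l i ≤ pts ν l (i+1) := by
  induction l with
  | zero => intro i; cases i with
    | zero => exact le_top
    | succ n => exact le_refl _
  | succ l ih =>
    intro i
    rcases Nat.even_or_odd i with ⟨k, hk⟩ | ⟨k, hk⟩
    · rw [hk, show k + k = 2*k by ring, pts_even, show 2*k+1 = 2*k+1 by rfl, pts_odd]
      by_cases h : ν (Iseg (pts ν l k) (pts ν l (k+1))) = 0
      · rw [ebary_of_eq h]
      · obtain ⟨m, hm1, hm2, _, _⟩ := ebary_mem ν hmom (pts_nonneg ν hmom l k) h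
        rw [hm1]; exact hm2
    · rw [hk, pts_odd, show 2*k+1+1 = 2*(k+1) by ring, pts_even]
      by_cases h : ν (Iseg (pts ν l k) (pts ν l (k+1))) = 0
      · rw [ebary_of_eq h]; exact ih k
      · obtain ⟨m, hm1, _, hm3, _⟩ := ebary_mem ν hmom (pts_nonneg ν hmom l k) h
        rw [hm1]; exact le_of_lt hm3

include hmom in
lemma pts_mono (l : ℕ) : Monotone (pts ν l) :=
  monotone_nat_of_le_succ (pts_mono_succ ν hmom l)

lemma seg_eq_Iseg (l i : ℕ) : seg ν l i = Iseg (pts ν l i) (pts ν l (i+1)) := rfl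

include hmom in
lemma seg_split (l i : ℕ) :
    seg ν l i = seg ν (l+1) (2*i) ∪ seg ν (l+1) (2*i+1) := by
  rw [seg_eq_Iseg, seg_eq_Iseg, seg_eq_Iseg, pts_even, pts_odd,
    show 2*i+1+1 = 2*(i+1) by ring, pts_even]
  refine Iseg_split ?_ ?_
  · have h := pts_mono_succ ν hmom (l+1) (2*i)
    rwa [pts_even, pts_odd] at h
  · have h := pts_mono_succ ν hmom (l+1) (2*i+1)
    rwa [pts_odd, show 2*i+1+1 = 2*(i+1) by ring, pts_even] at h

include hmom in
lemma seg_disjoint {l i j : ℕ} (hij : i ≠ j) : Disjoint (seg ν l i) (seg ν l j) := by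
  wlog h : i < j generalizing i j
  · exact (this hij.symm (by omega)).symm
  rw [Set.disjoint_left]
  rintro x ⟨_, h2⟩ ⟨h3, _⟩
  have : pts ν l (i+1) ≤ pts ν l j := pts_mono ν hmom l (by omega)
  exact absurd (le_trans this h3) (not_le.2 h2)

include hmom in
lemma seg_cover {x : ℝ} (hx : 0 ≤ x) (l : ℕ) : ∃ i < 2^l, x ∈ seg ν l i := by
  induction l with
  | zero =>
    refine ⟨0, by norm_num, ?_⟩
    constructor
    · rw [pts_zero']; exact_mod_cast hx
    · exact EReal.coe_lt_top x
  | succ l ih =>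
    obtain ⟨i, hilt, hmem⟩ := ih
    rw [seg_split ν hmom l i] at hmem
    rcases hmem with h | h
    · exact ⟨2*i, by omega, h⟩
    · exact ⟨2*i+1, by omega, h⟩

end PtsLemmas

noncomputable def Mfun (ν : Measure ℝ) (l : ℕ) (x : ℝ) : ℝ :=
  ∑ i ∈ Finset.range (2^l),
    (seg ν l i).indicator (fun _ => (ebary ν (pts ν l i) (pts ν l (i+1))).toReal) x

lemma measurable_Mfun (ν : Measure ℝ) (l : ℕ) : Measurable (Mfun ν l) := by
  apply Finset.measurable_sum
  intro i _
  exact Measurable.indicator measurable_const (measurableSet_Iseg _ _)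

section MfunLemmas

variable (ν : Measure ℝ) [IsProbabilityMeasure ν] (hmom : Integrable (fun r : ℝ => r) ν)

include hmom in
lemma Mfun_eq_on {l i : ℕ} (hi : i < 2^l) {x : ℝ} (hx : x ∈ seg ν l i) :
    Mfun ν l x = (ebary ν (pts ν l i) (pts ν l (i+1))).toReal := by
  rw [Mfun, Finset.sum_eq_single i]
  · rw [Set.indicator_of_mem hx]
  · intro j _ hj
    apply Set.indicator_of_notMem
    intro hxj
    exact (Set.disjoint_left.1 (seg_disjoint ν hmom hj) hxj) hx
  · intro h; exact absurd (Finset.mem_range.2 hi) h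

include hmom in
lemma integral_discreteApprox (hsupp : ν (Set.Iio 0) = 0) (l : ℕ)
    (f : BoundedContinuousFunction ℝ ℝ) :
    ∫ x, f x ∂(discreteApprox ν l) = ∫ x, f (Mfun ν l x) ∂ν := by
  have hfi : ∀ i ∈ Finset.range (2^l), Integrable (fun x => f x)
      (ν (seg ν l i) • Measure.dirac ((ebary ν (pts ν l i) (pts ν l (i+1))).toReal)) := by
    intro i _
    haveI : IsFiniteMeasure (ν (seg ν l i) •
        Measure.dirac ((ebary ν (pts ν l i) (pts ν l (i+1))).toReal)) := by
      constructor
      rw [Measure.smul_apply, smul_eq_mul]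
      exact ENNReal.mul_lt_top (measure_lt_top ν _) (measure_lt_top _ _)
    exact f.integrable _
  rw [discreteApprox, integral_finset_sum_measure hfi]
  have hterm : ∀ i ∈ Finset.range (2^l),
      ∫ x, f x ∂(ν (seg ν l i) • Measure.dirac ((ebary ν (pts ν l i) (pts ν l (i+1))).toReal))
        = (ν (seg ν l i)).toReal * f ((ebary ν (pts ν l i) (pts ν l (i+1))).toReal) := by
    intro i _
    rw [integral_smul_measure, integral_dirac, smul_eq_mul]
  rw [Finset.sum_congr rfl hterm]
  -- now RHS
  have hrestr : ν.restrict (⋃ i ∈ Finset.range (2^l), seg ν l i) = ν := by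
    apply Measure.restrict_eq_self_of_ae_mem
    rw [Filter.Eventually, mem_ae_iff]
    apply measure_mono_null _ hsupp
    intro x hx
    simp only [mem_compl_iff, mem_setOf_eq] at hx ⊢
    by_contra hge
    rw [mem_Iio, not_lt] at hge
    obtain ⟨i, hilt, hmem⟩ := seg_cover ν hmom hge l
    exact hx (Set.mem_biUnion (Finset.mem_range.2 hilt) hmem)
  have hintf : Integrable (fun x => f (Mfun ν l x)) ν := by
    apply Integrable.mono' (integrable_const ‖f‖)
    · exact (f.continuous.measurable.comp (measurable_Mfun ν l)).aestronglyMeasurable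
    · exact ae_of_all _ (fun x => f.norm_coe_le_norm _)
  set g : ℝ → ℝ := fun x => f (Mfun ν l x) with hg
  have key : ∫ x, g x ∂ν = ∫ x in (⋃ i ∈ Finset.range (2^l), seg ν l i), g x ∂ν := by
    conv_lhs => rw [← hrestr]
  rw [key, integral_biUnion_finset (Finset.range (2^l)) (s := fun i => seg ν l i)
      (fun i _ => measurableSet_Iseg _ _)
      (fun i _ j _ hij => seg_disjoint ν hmom hij)
      (fun i _ => hintf.integrableOn)]
  apply Finset.sum_congr rfl
  intro i hi
  have heq : ∀ x ∈ seg ν l i, g x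
      = f ((ebary ν (pts ν l i) (pts ν l (i+1))).toReal) := by
    intro x hx
    rw [hg]
    simp only []
    rw [Mfun_eq_on ν hmom (Finset.mem_range.1 hi) hx]
  have hmeas : MeasurableSet (seg ν l i) := measurableSet_Iseg _ _
  rw [setIntegral_congr_fun hmeas heq, setIntegral_const, smul_eq_mul, measureReal_def]

end MfunLemmas

def Vset (ν : Measure ℝ) : Set ℝ := ⋃ q : ℚ, {y : ℝ | y < (q:ℝ) ∧ ν (Ico y (q:ℝ)) = 0}

def Wset (ν : Measure ℝ) : Set ℝ := ⋃ q : ℚ, {y : ℝ | (q:ℝ) < y ∧ ν (Ioc (q:ℝ) y) = 0}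

def badSeg (ν : Measure ℝ) : Set ℝ := ⋃ l, ⋃ i, ⋃ (_ : ν (seg ν l i) = 0), seg ν l i

lemma badSeg_null (ν : Measure ℝ) : ν (badSeg ν) = 0 :=
  measure_iUnion_null fun l => measure_iUnion_null fun i => measure_iUnion_null fun h => h

lemma Vset_null (ν : Measure ℝ) : ν (Vset ν) = 0 := by
  apply measure_iUnion_null
  intro q
  set c : ℝ := (q : ℝ)
  set S : Set ℝ := {y : ℝ | y < c ∧ ν (Ico y c) = 0} with hS
  have hup : ∀ y ∈ S, ∀ z, y ≤ z → z < c → z ∈ S := by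
    rintro y ⟨_, hy2⟩ z hyz hzc
    exact ⟨hzc, measure_mono_null (Ico_subset_Ico_left hyz) hy2⟩
  by_cases hne : S.Nonempty
  · by_cases hb : BddBelow S
    · set a : ℝ := sInf S with ha
      have hIoo : ν (Ioo a c) = 0 := by
        have hsub : Ioo a c ⊆ ⋃ q' : ℚ, ⋃ (_ : a < (q':ℝ) ∧ (q':ℝ) < c), Ico (q':ℝ) c := by
          intro y ⟨hy1, hy2⟩
          obtain ⟨q', hq1, hq2⟩ := exists_rat_btwn hy1
          exact Set.mem_iUnion.2 ⟨q', Set.mem_iUnion.2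
            ⟨⟨hq1, lt_trans hq2 hy2⟩, ⟨le_of_lt hq2, hy2⟩⟩⟩
        apply measure_mono_null hsub
        apply measure_iUnion_null
        intro q'
        apply measure_iUnion_null
        rintro ⟨h1, h2⟩
        obtain ⟨y', hy'S, hy'lt⟩ := exists_lt_of_csInf_lt hne h1
        exact measure_mono_null (Ico_subset_Ico_left (le_of_lt hy'lt)) hy'S.2
      by_cases haS : a ∈ S
      · apply measure_mono_null _ haS.2
        intro y hy
        exact ⟨csInf_le hb hy, hy.1⟩
      · apply measure_mono_null _ hIoo
        intro y hy
        refine ⟨lt_of_le_of_ne (csInf_le hb hy) ?_, hy.1⟩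
        intro hcontra
        exact haS (hcontra ▸ hy)
    · -- S unbounded below : every Ico y c is null, so Iio c is null
      have hall : ∀ y : ℝ, ν (Ico y c) = 0 := by
        intro y
        rw [not_bddBelow_iff] at hb
        obtain ⟨y', hy'S, hy'lt⟩ := hb y
        exact measure_mono_null (Ico_subset_Ico_left (le_of_lt hy'lt)) hy'S.2
      have : ν (Iio c) = 0 := by
        have : Iio c = ⋃ n : ℕ, Ico (c - (n+1)) c := by
          ext y
          simp only [mem_Iio, mem_iUnion, mem_Ico]
          constructor
          · intro hy
            obtain ⟨n, hn⟩ := exists_nat_gt (c - y)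
            exact ⟨n, by linarith, hy⟩
          · rintro ⟨n, _, h⟩; exact h
        rw [this]
        exact measure_iUnion_null fun n => hall _
      exact measure_mono_null (fun y hy => hy.1) this
  · rw [Set.not_nonempty_iff_eq_empty] at hne
    simp [hne]

lemma Wset_null (ν : Measure ℝ) : ν (Wset ν) = 0 := by
  apply measure_iUnion_null
  intro q
  set c : ℝ := (q : ℝ)
  set S : Set ℝ := {y : ℝ | c < y ∧ ν (Ioc c y) = 0} with hS
  by_cases hne : S.Nonempty
  · by_cases hb : BddAbove S
    · set a : ℝ := sSup S with ha
      have hIoo : ν (Ioo c a) = 0 := by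
        have hsub : Ioo c a ⊆ ⋃ q' : ℚ, ⋃ (_ : c < (q':ℝ) ∧ (q':ℝ) < a), Ioc c (q':ℝ) := by
          intro y ⟨hy1, hy2⟩
          obtain ⟨q', hq1, hq2⟩ := exists_rat_btwn hy2
          exact Set.mem_iUnion.2 ⟨q', Set.mem_iUnion.2
            ⟨⟨lt_trans hy1 hq1, hq2⟩, ⟨hy1, le_of_lt hq1⟩⟩⟩
        apply measure_mono_null hsub
        apply measure_iUnion_null
        intro q'
        apply measure_iUnion_null
        rintro ⟨h1, h2⟩
        obtain ⟨y', hy'S, hy'lt⟩ := exists_lt_of_lt_csSup hne h2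
        exact measure_mono_null (Ioc_subset_Ioc_right (le_of_lt hy'lt)) hy'S.2
      by_cases haS : a ∈ S
      · apply measure_mono_null _ haS.2
        intro y hy
        exact ⟨hy.1, le_csSup hb hy⟩
      · apply measure_mono_null _ hIoo
        intro y hy
        refine ⟨hy.1, lt_of_le_of_ne (le_csSup hb hy) ?_⟩
        intro hcontra
        exact haS (hcontra ▸ hy)
    · have hall : ∀ y : ℝ, ν (Ioc c y) = 0 := by
        intro y
        rw [not_bddAbove_iff] at hb
        obtain ⟨y', hy'S, hy'lt⟩ := hb y
        exact measure_mono_null (Ioc_subset_Ioc_right (le_of_lt hy'lt)) hy'S.2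
      have : ν (Ioi c) = 0 := by
        have : Ioi c = ⋃ n : ℕ, Ioc c (c + (n+1)) := by
          ext y
          simp only [mem_Ioi, mem_iUnion, mem_Ioc]
          constructor
          · intro hy
            obtain ⟨n, hn⟩ := exists_nat_gt (y - c)
            exact ⟨n, hy, by linarith⟩
          · rintro ⟨n, h, _⟩; exact h
        rw [this]
        exact measure_iUnion_null fun n => hall _
      exact measure_mono_null (fun y hy => hy.1) this
  · rw [Set.not_nonempty_iff_eq_empty] at hne
    simp [hne]

lemma main_ptwise (ν : Measure ℝ) [IsProbabilityMeasure ν]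
    (hsupp : ν (Set.Iio 0) = 0) (hmom : Integrable (fun r : ℝ => r) ν)
    {x : ℝ} (hx : 0 ≤ x)
    (hV : ∀ t : ℝ, x < t → ν (Ico x t) ≠ 0)
    (hW : ∀ t : ℝ, t < x → ν (Ioc t x) ≠ 0)
    (hbad : x ∉ badSeg ν) :
    Tendsto (fun l => Mfun ν l x) atTop (𝓝 x) := by
  classical
  set I : ℕ → ℕ :=
    fun l => Nat.rec 0 (fun l i => if x ∈ seg ν (l+1) (2*i) then 2*i else 2*i+1) l with hIdef
  have hIsucc : ∀ l, I (l+1) = if x ∈ seg ν (l+1) (2*(I l)) then 2*(I l) else 2*(I l)+1 :=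
    fun l => rfl
  have hmem : ∀ l, x ∈ seg ν l (I l) := by
    intro l
    induction l with
    | zero =>
      refine ⟨?_, ?_⟩
      · show pts ν 0 0 ≤ (x : EReal)
        rw [pts_zero']; exact_mod_cast hx
      · exact EReal.coe_lt_top x
    | succ l ih =>
      rw [hIsucc l]
      split_ifs with h
      · exact h
      · have h2 := (seg_split ν hmom l (I l)) ▸ ih
        rcases h2 with h' | h'
        · exact absurd h' h
        · exact h'
  have hIlt : ∀ l, I l < 2^l := by
    intro l
    induction l with
    | zero => exact Nat.lt_of_lt_of_le Nat.zero_lt_one (by norm_num)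
    | succ l ih =>
      have h2 : (2:ℕ)^(l+1) = 2^l * 2 := pow_succ 2 l
      rw [hIsucc l]
      split_ifs <;> omega
  have hpos : ∀ l, ν (Iseg (pts ν l (I l)) (pts ν l (I l + 1))) ≠ 0 := by
    intro l h0
    exact hbad (Set.mem_iUnion.2 ⟨l, Set.mem_iUnion.2 ⟨I l, Set.mem_iUnion.2 ⟨h0, hmem l⟩⟩⟩)
  have hA0 : ∀ l, (0:EReal) ≤ pts ν l (I l) := fun l => pts_nonneg ν hmom l (I l)
  have hAx : ∀ l, pts ν l (I l) ≤ (x:EReal) := fun l => (hmem l).1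
  have hxB : ∀ l, (x:EReal) < pts ν l (I l + 1) := fun l => (hmem l).2
  choose m hm1 hm2 hm3 hm4 using fun l => ebary_mem ν hmom (hA0 l) (hpos l)
  set α : ℕ → ℝ := fun l => (pts ν l (I l)).toReal with hαdef
  have hAfin : ∀ l, pts ν l (I l) = ((α l : ℝ) : EReal) := by
    intro l
    refine (EReal.coe_toReal ?_ ?_).symm
    · exact ne_top_of_le_ne_top (EReal.coe_lt_top x).ne (hAx l)
    · exact ne_bot_of_le_ne_bot (by simp) (hA0 l)
  have hα0 : ∀ l, 0 ≤ α l := by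
    intro l
    have h := hA0 l; rw [hAfin l] at h; exact_mod_cast h
  have hαx : ∀ l, α l ≤ x := by
    intro l
    have h := hAx l; rw [hAfin l] at h; exact_mod_cast h
  have hαm : ∀ l, α l ≤ m l := by
    intro l
    have h := hm2 l; rw [hAfin l] at h; exact_mod_cast h
  have hm0 : ∀ l, 0 ≤ m l := fun l => le_trans (hα0 l) (hαm l)
  -- the step dichotomy
  have hstep : ∀ l,
      (x < m l ∧ pts ν (l+1) (I (l+1)) = pts ν l (I l)
        ∧ pts ν (l+1) (I (l+1) + 1) = ((m l : ℝ) : EReal))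
      ∨ (m l ≤ x ∧ pts ν (l+1) (I (l+1)) = ((m l : ℝ) : EReal)
        ∧ pts ν (l+1) (I (l+1) + 1) = pts ν l (I l + 1)) := by
    intro l
    have hodd : pts ν (l+1) (2*(I l) + 1) = ((m l : ℝ) : EReal) := by
      rw [pts_odd]; exact hm1 l
    by_cases hxm : x ∈ seg ν (l+1) (2*(I l))
    · left
      have hIl : I (l+1) = 2*(I l) := by rw [hIsucc l, if_pos hxm]
      refine ⟨?_, ?_, ?_⟩
      · have h := hxm.2
        rw [show 2*(I l)+1 = 2*(I l)+1 from rfl, hodd] at h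
        exact_mod_cast h
      · rw [hIl, pts_even]
      · rw [hIl, hodd]
    · right
      have hIl : I (l+1) = 2*(I l) + 1 := by rw [hIsucc l, if_neg hxm]
      have hx2 : x ∈ seg ν (l+1) (2*(I l)+1) := by
        have h2 := (seg_split ν hmom l (I l)) ▸ hmem l
        rcases h2 with h' | h'
        · exact absurd h' hxm
        · exact h'
      refine ⟨?_, ?_, ?_⟩
      · have h := hx2.1
        rw [show seg ν (l+1) (2*(I l)+1) = Iseg (pts ν (l+1) (2*(I l)+1))
          (pts ν (l+1) (2*(I l)+1+1)) from rfl] at hx2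
        have h' := hx2.1
        rw [hodd] at h'
        exact_mod_cast h'
      · rw [hIl, hodd]
      · rw [hIl, show 2*(I l)+1+1 = 2*(I l + 1) by ring, pts_even]
  -- monotonicity of α and its limit
  have hαmono : Monotone α := by
    apply monotone_nat_of_le_succ
    intro l
    rcases hstep l with ⟨_, h2, _⟩ | ⟨_, h2, _⟩
    · show (pts ν l (I l)).toReal ≤ (pts ν (l+1) (I (l+1))).toReal
      rw [h2]
    · show (pts ν l (I l)).toReal ≤ (pts ν (l+1) (I (l+1))).toReal
      rw [h2, EReal.toReal_coe]; exact hαm l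
  have hbdd : BddAbove (Set.range α) := by
    refine ⟨x, ?_⟩
    rintro y ⟨l, rfl⟩
    exact hαx l
  set αinf : ℝ := ⨆ l, α l with hαinf
  have hαlim : Tendsto α atTop (𝓝 αinf) := tendsto_atTop_ciSup hαmono hbdd
  have hαle : ∀ l, α l ≤ αinf := fun l => le_ciSup hbdd l
  have hαinfx : αinf ≤ x := ciSup_le hαx
  have hdα : Tendsto (fun l => α (l+1) - α l) atTop (𝓝 0) := by
    have h1 : Tendsto (fun l => α (l+1)) atTop (𝓝 αinf) :=
      hαlim.comp (tendsto_add_atTop_nat 1)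
    have h2 := h1.sub hαlim
    rwa [sub_self] at h2
  have hmright : ∀ l, m l ≤ x → m l = α (l+1) := by
    intro l hr
    rcases hstep l with ⟨hl, _, _⟩ | ⟨_, h2, _⟩
    · linarith
    · show m l = (pts ν (l+1) (I (l+1))).toReal
      rw [h2, EReal.toReal_coe]
  -- integrability
  have hint1 : ∀ (c : ℝ) (s : Set ℝ), IntegrableOn (fun r : ℝ => r - c) s ν :=
    fun c s => (hmom.sub (integrable_const c)).integrableOn
  have hint2 : ∀ (c : ℝ) (s : Set ℝ), IntegrableOn (fun r : ℝ => c - r) s ν :=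
    fun c s => ((integrable_const c).sub hmom).integrableOn
  -- core identity
  have hCI : ∀ l, ∫ r in Iseg (pts ν l (I l)) ((m l : ℝ) : EReal), (m l - r) ∂ν
      = ∫ r in Iseg ((m l : ℝ) : EReal) (pts ν l (I l + 1)), (r - m l) ∂ν := by
    intro l
    have hsplit : Iseg (pts ν l (I l)) (pts ν l (I l + 1))
        = Iseg (pts ν l (I l)) ((m l : ℝ) : EReal)
          ∪ Iseg ((m l : ℝ) : EReal) (pts ν l (I l + 1)) :=
      Iseg_split (hm2 l) (le_of_lt (hm3 l))
    have hzero : ∫ r in Iseg (pts ν l (I l)) (pts ν l (I l + 1)), (r - m l) ∂ν = 0 := by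
      rw [integral_sub (hmom.integrableOn)
        (integrableOn_const (measure_ne_top ν _)),
        hm4 l, setIntegral_const, measureReal_def, smul_eq_mul, mul_comm, sub_self]
    rw [hsplit, setIntegral_union Iseg_disjoint (measurableSet_Iseg _ _)
      (hint1 (m l) _) (hint1 (m l) _)] at hzero
    have hneg : ∫ r in Iseg (pts ν l (I l)) ((m l : ℝ) : EReal), (m l - r) ∂ν
        = - ∫ r in Iseg (pts ν l (I l)) ((m l : ℝ) : EReal), (r - m l) ∂ν := by
      rw [← integral_neg]
      apply setIntegral_congr_fun (measurableSet_Iseg _ _)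
      intro r _
      ring
    rw [hneg]
    linarith
  have hμle1 : ∀ s : Set ℝ, (ν s).toReal ≤ 1 := by
    intro s
    rw [show (1:ℝ) = (1:ℝ≥0∞).toReal by simp]
    exact ENNReal.toReal_mono (by simp) prob_le_one
  have hRbound : ∀ l, ∫ r in Iseg ((m l : ℝ) : EReal) (pts ν l (I l + 1)), (r - m l) ∂ν
      ≤ m l - α l := by
    intro l
    rw [← hCI l]
    have h1 : ∫ r in Iseg (pts ν l (I l)) ((m l : ℝ) : EReal), (m l - r) ∂ν
        ≤ ∫ _ in Iseg (pts ν l (I l)) ((m l : ℝ) : EReal), (m l - α l) ∂ν := by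
      apply setIntegral_mono_on (hint2 (m l) _)
        (integrableOn_const (measure_ne_top ν _)) (measurableSet_Iseg _ _)
      rintro r ⟨hr1, _⟩
      rw [hAfin l] at hr1
      have h : α l ≤ r := by exact_mod_cast hr1
      linarith
    rw [setIntegral_const, smul_eq_mul] at h1
    calc ∫ r in Iseg (pts ν l (I l)) ((m l : ℝ) : EReal), (m l - r) ∂ν
        ≤ (ν (Iseg (pts ν l (I l)) ((m l : ℝ) : EReal))).toReal * (m l - α l) := h1
      _ ≤ 1 * (m l - α l) := by
          apply mul_le_mul_of_nonneg_right (hμle1 _)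
          linarith [hαm l]
      _ = m l - α l := one_mul _
  -- the D sequence
  set D : ℕ → ℝ := fun l => ∫ r in seg ν l (I l) \ seg ν (l+1) (I (l+1)), r ∂ν with hDdef
  have hSgsub : ∀ l, seg ν (l+1) (I (l+1)) ⊆ seg ν l (I l) := by
    intro l
    rcases hstep l with ⟨_, h2, h3⟩ | ⟨_, h2, h3⟩
    · show Iseg (pts ν (l+1) (I (l+1))) (pts ν (l+1) (I (l+1) + 1))
        ⊆ Iseg (pts ν l (I l)) (pts ν l (I l + 1))
      rw [h2, h3]; exact Iseg_mono (le_refl _) (le_of_lt (hm3 l))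
    · show Iseg (pts ν (l+1) (I (l+1))) (pts ν (l+1) (I (l+1) + 1))
        ⊆ Iseg (pts ν l (I l)) (pts ν l (I l + 1))
      rw [h2, h3]; exact Iseg_mono (hm2 l) (le_refl _)
  have hSgsub' : ∀ k l, k ≤ l → seg ν l (I l) ⊆ seg ν k (I k) := by
    intro k l hkl
    induction l with
    | zero => rw [Nat.le_zero.1 hkl]
    | succ l ih =>
      rcases Nat.lt_or_ge k (l+1) with h | h
      · exact subset_trans (hSgsub l) (ih (by omega))
      · rw [show k = l+1 by omega]
  have hSgnonneg : ∀ l, seg ν l (I l) ⊆ Ici (0:ℝ) := fun l => Iseg_subset_Ici (hA0 l)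
  have haeNN : 0 ≤ᵐ[ν] (fun r : ℝ => r) := by
    rw [Filter.EventuallyLE, ae_iff]
    apply measure_mono_null _ hsupp
    intro y hy
    simp only [Pi.zero_apply, mem_setOf_eq, not_le] at hy
    exact hy
  have hD : Tendsto D atTop (𝓝 0) := by
    apply Summable.tendsto_atTop_zero
    apply summable_of_sum_range_le (c := ∫ r, r ∂ν)
    · intro l
      apply setIntegral_nonneg ((measurableSet_Iseg _ _).diff (measurableSet_Iseg _ _))
      intro r hr
      exact hSgnonneg l hr.1
    · intro n
      have hd : ∀ i j : ℕ, i < j →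
          (Function.onFun Disjoint fun l => seg ν l (I l) \ seg ν (l+1) (I (l+1))) i j :=
        fun i j h => Disjoint.mono_right
          (subset_trans Set.diff_subset (hSgsub' (i+1) j (by omega)))
          Set.disjoint_sdiff_left
      have hdisj : (↑(Finset.range n) : Set ℕ).Pairwise
          (Function.onFun Disjoint fun l => seg ν l (I l) \ seg ν (l+1) (I (l+1))) := by
        intro i _ j _ hij
        rcases Nat.lt_or_ge i j with h | h
        · exact hd i j h
        · exact (hd j i (by omega)).symm
      rw [← integral_biUnion_finset (Finset.range n)
        (s := fun l => seg ν l (I l) \ seg ν (l+1) (I (l+1)))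
        (fun i _ => (measurableSet_Iseg _ _).diff (measurableSet_Iseg _ _)) hdisj
        (fun i _ => hmom.integrableOn)]
      exact setIntegral_le_integral hmom haeNN
  -- left-step bound by D
  have hLas : ∀ l, x < m l →
      ∫ r in Iseg ((m l:ℝ):EReal) (pts ν l (I l + 1)), (r - m l) ∂ν ≤ D l := by
    intro l hlt
    have hIseq : seg ν l (I l) \ seg ν (l+1) (I (l+1))
        = Iseg ((m l:ℝ):EReal) (pts ν l (I l + 1)) := by
      rcases hstep l with ⟨_, h2, h3⟩ | ⟨hr, _, _⟩
      · ext r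
        constructor
        · rintro ⟨⟨hr1, hr2⟩, hr3⟩
          refine ⟨?_, hr2⟩
          by_contra hc
          exact hr3 ⟨by rw [h2]; exact hr1, by rw [h3]; exact not_le.1 hc⟩
        · rintro ⟨hr1, hr2⟩
          refine ⟨⟨le_trans (hm2 l) hr1, hr2⟩, ?_⟩
          rintro ⟨hc1, hc2⟩
          rw [h3] at hc2
          exact absurd hc2 (not_lt.2 hr1)
      · linarith
    show ∫ r in Iseg ((m l:ℝ):EReal) (pts ν l (I l + 1)), (r - m l) ∂ν
      ≤ ∫ r in seg ν l (I l) \ seg ν (l+1) (I (l+1)), r ∂ν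
    rw [hIseq]
    apply setIntegral_mono_on (hint1 _ _) hmom.integrableOn (measurableSet_Iseg _ _)
    intro r _
    linarith [hm0 l]
  -- generic lower bound
  have hLB : ∀ (a b : EReal) (c : ℝ) (g : ℝ → ℝ) (T : Set ℝ),
      MeasurableSet T → T ⊆ Iseg a b → IntegrableOn g (Iseg a b) ν →
      (∀ r ∈ Iseg a b, 0 ≤ g r) → (∀ r ∈ T, c ≤ g r) →
      c * (ν T).toReal ≤ ∫ r in Iseg a b, g r ∂ν := by
    intro a b c g T hTm hTs hgi hg0 hgc
    calc c * (ν T).toReal ≤ ∫ r in T, g r ∂ν :=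
        setIntegral_ge_of_const_le_real hTm (measure_ne_top ν T) hgc (hgi.mono_set hTs)
      _ ≤ ∫ r in Iseg a b, g r ∂ν := by
          apply setIntegral_mono_set hgi
          · rw [Filter.EventuallyLE, ae_restrict_iff' (measurableSet_Iseg a b)]
            exact ae_of_all _ (fun r hr => hg0 r hr)
          · exact HasSubset.Subset.eventuallyLE hTs
  have hcontra : ∀ (c : ℝ), 0 < c → ∀ (u : ℕ → ℝ), Tendsto u atTop (𝓝 0) →
      (∃ᶠ l in atTop, c ≤ u l) → False := by
    intro c hc u hu hf
    have hev : ∀ᶠ l in atTop, u l < c := hu.eventually_lt_const hc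
    obtain ⟨l, h1, h2⟩ := (hf.and_eventually hev).exists
    linarith
  have hposR : ∀ s : Set ℝ, ν s ≠ 0 → 0 < (ν s).toReal :=
    fun s h => ENNReal.toReal_pos h (measure_ne_top ν s)
  -- reduce to convergence of m
  have hMf : (fun l => Mfun ν l x) = m := by
    funext l
    rw [Mfun_eq_on ν hmom (hIlt l) (hmem l), hm1 l, EReal.toReal_coe]
  rw [hMf]
  by_cases hLf : ∃ᶠ l in atTop, x < m l
  · -- there are infinitely many left steps; B is eventually finite
    obtain ⟨L0, -, hxL0⟩ := Filter.frequently_atTop.1 hLf 0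
    set N := L0 + 1 with hN
    have hBanti : ∀ k l, k ≤ l → pts ν l (I l + 1) ≤ pts ν k (I k + 1) := by
      intro k l hkl
      induction l with
      | zero => rw [Nat.le_zero.1 hkl]
      | succ l ih =>
        rcases Nat.lt_or_ge k (l+1) with h | h
        · refine le_trans ?_ (ih (by omega))
          rcases hstep l with ⟨_, _, h3⟩ | ⟨_, _, h3⟩
          · rw [h3]; exact le_of_lt (hm3 l)
          · rw [h3]
        · rw [show k = l+1 by omega]
    have hBN : pts ν N (I N + 1) = ((m L0 : ℝ) : EReal) := by
      rcases hstep L0 with ⟨_, _, h3⟩ | ⟨hml, _, _⟩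
      · exact h3
      · linarith
    have hBfin : ∀ l, N ≤ l → pts ν l (I l + 1) ≠ ⊤ ∧ pts ν l (I l + 1) ≠ ⊥ := by
      intro l hl
      constructor
      · apply ne_top_of_le_ne_top (EReal.coe_lt_top (m L0)).ne
        rw [← hBN]
        exact hBanti N l hl
      · exact ((EReal.bot_lt_coe x).trans (hxB l)).ne'
    set β : ℕ → ℝ := fun l => (pts ν l (I l + 1)).toReal with hβdef
    have hBβ : ∀ l, N ≤ l → pts ν l (I l + 1) = ((β l : ℝ):EReal) :=
      fun l hl => (EReal.coe_toReal (hBfin l hl).1 (hBfin l hl).2).symm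
    have hxβ : ∀ l, N ≤ l → x < β l := by
      intro l hl
      have h := hxB l
      rw [hBβ l hl] at h
      exact_mod_cast h
    have hβanti : ∀ k l, N ≤ k → k ≤ l → β l ≤ β k := by
      intro k l hk hkl
      have h := hBanti k l hkl
      rw [hBβ k hk, hBβ l (le_trans hk hkl)] at h
      exact_mod_cast h
    have hmleft : ∀ l, x < m l → m l = β (l+1) := by
      intro l hxl
      rcases hstep l with ⟨_, _, h3⟩ | ⟨hml, _, _⟩
      · show m l = (pts ν (l+1) (I (l+1) + 1)).toReal
        rw [h3, EReal.toReal_coe]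
      · linarith
    obtain ⟨βinf, hxβinf, hβlim, hβinfle⟩ :
        ∃ βinf : ℝ, x ≤ βinf ∧ Tendsto β atTop (𝓝 βinf) ∧ ∀ l, N ≤ l → βinf ≤ β l := by
      set γ : ℕ → ℝ := fun k => β (N + k) with hγdef
      have hγanti : Antitone γ := fun i j hij =>
        hβanti (N+i) (N+j) (by omega) (by omega)
      have hγbdd : BddBelow (Set.range γ) := by
        refine ⟨x, ?_⟩
        rintro y ⟨k, rfl⟩
        exact le_of_lt (hxβ _ (by omega))
      have hγlim : Tendsto γ atTop (𝓝 (⨅ k, γ k)) := tendsto_atTop_ciInf hγanti hγbdd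
      refine ⟨⨅ k, γ k, ?_, ?_, ?_⟩
      · exact le_ciInf (fun k => le_of_lt (hxβ _ (by omega)))
      · rw [← tendsto_add_atTop_iff_nat N]
        have he : (fun n => β (n + N)) = γ := funext fun k => by
          show β (k + N) = β (N + k)
          rw [Nat.add_comm]
        rw [he]
        exact hγlim
      · intro l hl
        have he : γ (l - N) = β l := by
          show β (N + (l - N)) = β l
          congr 1
          omega
        rw [← he]
        exact ciInf_le hγbdd _
    by_cases hRf : ∃ᶠ l in atTop, m l ≤ x
    · -- case (iii): both step types occur infinitely often
      have hβeq : βinf = x := by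
        by_contra hne
        have hlt : x < βinf := lt_of_le_of_ne hxβinf (Ne.symm hne)
        have st1 : ∀ s : ℝ, x < s → ν (Ico s βinf) = 0 := by
          intro s hs
          by_contra h0
          have hcpos : 0 < (s - x) * (ν (Ico s βinf)).toReal :=
            mul_pos (by linarith) (hposR _ h0)
          apply hcontra _ hcpos _ hdα
          apply Filter.Frequently.mono (hRf.and_eventually (eventually_ge_atTop N))
          rintro l ⟨hml, hNl⟩
          have h1 : (s - x) * (ν (Ico s βinf)).toReal
              ≤ ∫ r in Iseg ((m l:ℝ):EReal) (pts ν l (I l + 1)), (r - m l) ∂ν := by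
            apply hLB _ _ _ _ _ measurableSet_Ico ?_ (hint1 _ _) ?_ ?_
            · rintro r ⟨hr1, hr2⟩
              refine ⟨?_, ?_⟩
              · exact_mod_cast le_trans hml (le_trans (le_of_lt hs) hr1)
              · rw [hBβ l hNl]
                exact_mod_cast lt_of_lt_of_le hr2 (hβinfle l hNl)
            · rintro r ⟨hr1, _⟩
              have h : m l ≤ r := by exact_mod_cast hr1
              linarith
            · rintro r ⟨hr1, _⟩
              linarith
          linarith [hRbound l, hmright l hml]
        have hIoo : ν (Ioo x βinf) = 0 := by
          have hsub : Ioo x βinf ⊆ ⋃ q : ℚ, ⋃ (_ : x < (q:ℝ)), Ico ((q:ℝ)) βinf := by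
            rintro y ⟨hy1, hy2⟩
            obtain ⟨q, hq1, hq2⟩ := exists_rat_btwn hy1
            exact mem_iUnion.2 ⟨q, mem_iUnion.2 ⟨hq1, ⟨le_of_lt hq2, hy2⟩⟩⟩
          apply measure_mono_null hsub
          exact measure_iUnion_null fun q => measure_iUnion_null fun hq => st1 _ hq
        have hatom : ν {x} ≠ 0 := by
          intro h0
          apply hV ((x + βinf)/2) (by linarith)
          have hsub : Ico x ((x+βinf)/2) ⊆ {x} ∪ Ioo x βinf := by
            rintro r ⟨hr1, hr2⟩
            rcases eq_or_lt_of_le hr1 with h | h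
            · exact Or.inl (by simp [← h])
            · exact Or.inr ⟨h, by linarith⟩
          apply measure_mono_null hsub
          refine le_antisymm (le_trans (measure_union_le _ _) ?_) zero_le
          rw [h0, hIoo]
          simp
        have hcpos : 0 < (βinf - x) * (ν {x}).toReal :=
          mul_pos (by linarith) (hposR _ hatom)
        apply hcontra _ hcpos D hD
        apply Filter.Frequently.mono (hLf.and_eventually (eventually_ge_atTop N))
        rintro l ⟨hxml, hNl⟩
        refine le_trans ?_ (hLas l hxml)
        rw [← hCI l]
        have hml : βinf ≤ m l := by
          rw [hmleft l hxml]
          exact hβinfle (l+1) (by omega)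
        apply hLB _ _ _ _ {x} (measurableSet_singleton x) ?_ (hint2 _ _) ?_ ?_
        · intro r hr
          rw [mem_singleton_iff] at hr
          subst hr
          exact ⟨hAx l, by exact_mod_cast hxml⟩
        · rintro r ⟨_, hr2⟩
          have h : r < m l := by exact_mod_cast hr2
          linarith
        · intro r hr
          rw [mem_singleton_iff] at hr
          subst hr
          linarith
      have hαeq : αinf = x := by
        by_contra hne
        have hlt : αinf < x := lt_of_le_of_ne hαinfx hne
        set t := (αinf + x)/2 with htdef
        have hcpos : 0 < (t - αinf) * (ν (Ioc t x)).toReal :=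
          mul_pos (by rw [htdef]; linarith) (hposR _ (hW t (by rw [htdef]; linarith)))
        apply hcontra _ hcpos _ hdα
        apply Filter.Frequently.mono hRf
        intro l hml
        have hmlαinf : m l ≤ αinf := by
          rw [hmright l hml]
          exact hαle (l+1)
        have h1 : (t - αinf) * (ν (Ioc t x)).toReal
            ≤ ∫ r in Iseg ((m l:ℝ):EReal) (pts ν l (I l + 1)), (r - m l) ∂ν := by
          apply hLB _ _ _ _ _ measurableSet_Ioc ?_ (hint1 _ _) ?_ ?_
          · rintro r ⟨hr1, hr2⟩
            refine ⟨?_, ?_⟩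
            · have : m l ≤ r := by rw [htdef] at hr1; linarith
              exact_mod_cast this
            · exact lt_of_le_of_lt (by exact_mod_cast hr2 : (r:EReal) ≤ (x:EReal)) (hxB l)
          · rintro r ⟨hr1, _⟩
            have h : m l ≤ r := by exact_mod_cast hr1
            linarith
          · rintro r ⟨hr1, _⟩
            linarith
        linarith [hRbound l, hmright l hml]
      -- squeeze
      have h1 : Tendsto β atTop (𝓝 x) := hβeq ▸ hβlim
      have h2 : Tendsto α atTop (𝓝 x) := hαeq ▸ hαlim
      apply tendsto_of_tendsto_of_tendsto_of_le_of_le' h2 h1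
      · exact Filter.Eventually.of_forall hαm
      · rw [Filter.eventually_atTop]
        refine ⟨N, fun l hl => ?_⟩
        have h := hm3 l
        rw [hBβ l hl] at h
        exact le_of_lt (by exact_mod_cast h)
    · -- case (ii): eventually left steps only
      rw [Filter.not_frequently] at hRf
      obtain ⟨L1, hL1⟩ := Filter.eventually_atTop.1 hRf
      have hβeq : βinf = x := by
        by_contra hne
        have hlt : x < βinf := lt_of_le_of_ne hxβinf (Ne.symm hne)
        set s := (x + βinf)/2 with hsdef
        have hs1 : x < s := by rw [hsdef]; linarith
        have hs2 : s < βinf := by rw [hsdef]; linarith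
        have hcpos : 0 < (βinf - s) * (ν (Ico x s)).toReal :=
          mul_pos (by linarith) (hposR _ (hV s hs1))
        apply hcontra _ hcpos D hD
        apply Filter.Eventually.frequently
        rw [Filter.eventually_atTop]
        refine ⟨max L1 N, fun l hl => ?_⟩
        have hxml : x < m l := not_le.1 (hL1 l (le_trans (le_max_left _ _) hl))
        have hml : βinf ≤ m l := by
          rw [hmleft l hxml]
          exact hβinfle (l+1) (by have := le_trans (le_max_right L1 N) hl; omega)
        refine le_trans ?_ (hLas l hxml)
        rw [← hCI l]
        apply hLB _ _ _ _ _ measurableSet_Ico ?_ (hint2 _ _) ?_ ?_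
        · rintro r ⟨hr1, hr2⟩
          refine ⟨le_trans (hAx l) (by exact_mod_cast hr1), ?_⟩
          have h : r < m l := by linarith
          exact_mod_cast h
        · rintro r ⟨_, hr2⟩
          have h : r < m l := by exact_mod_cast hr2
          linarith
        · rintro r ⟨_, hr2⟩
          linarith
      have h1 : Tendsto (fun l => β (l+1)) atTop (𝓝 x) := by
        rw [← hβeq]
        exact hβlim.comp (tendsto_add_atTop_nat 1)
      apply Tendsto.congr' _ h1
      rw [Filter.EventuallyEq, Filter.eventually_atTop]
      refine ⟨L1, fun l hl => ?_⟩
      exact (hmleft l (not_le.1 (hL1 l hl))).symm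
  · -- case (i): eventually right steps only
    rw [Filter.not_frequently] at hLf
    obtain ⟨L, hL⟩ := Filter.eventually_atTop.1 hLf
    have hBc : ∀ l, L ≤ l → pts ν l (I l + 1) = pts ν L (I L + 1) := by
      intro l hl
      induction l with
      | zero => rw [Nat.le_zero.1 hl]
      | succ l ih =>
        rcases Nat.lt_or_ge L (l+1) with h | h
        · have hll : L ≤ l := by omega
          rcases hstep l with ⟨hlt, _, _⟩ | ⟨_, _, h3⟩
          · exact absurd hlt (hL l hll)
          · rw [h3]; exact ih hll
        · rw [show L = l+1 by omega]
    have hαeq : αinf = x := by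
      by_contra hne
      have hlt : αinf < x := lt_of_le_of_ne hαinfx hne
      have hBbot : pts ν L (I L + 1) ≠ ⊥ := ((EReal.bot_lt_coe x).trans (hxB L)).ne'
      set t : ℝ := if pts ν L (I L + 1) = ⊤ then x + 1 else (pts ν L (I L + 1)).toReal
        with htdef
      have hxt : x < t := by
        rw [htdef]
        split_ifs with h
        · linarith
        · have hB := hxB L
          rw [← EReal.coe_toReal h hBbot] at hB
          exact_mod_cast hB
      have hrt : ∀ r : ℝ, r < t → (r : EReal) < pts ν L (I L + 1) := by
        intro r hr
        rw [htdef] at hr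
        split_ifs at hr with h
        · rw [h]; exact EReal.coe_lt_top r
        · rw [← EReal.coe_toReal h hBbot]
          exact_mod_cast hr
      have hcpos : 0 < (x - αinf) * (ν (Ico x t)).toReal :=
        mul_pos (by linarith) (hposR _ (hV t hxt))
      apply hcontra _ hcpos _ hdα
      apply Filter.Eventually.frequently
      rw [Filter.eventually_atTop]
      refine ⟨L, fun l hl => ?_⟩
      have hml : m l ≤ x := not_lt.1 (hL l hl)
      have h1 : (x - αinf) * (ν (Ico x t)).toReal
          ≤ ∫ r in Iseg ((m l:ℝ):EReal) (pts ν l (I l + 1)), (r - m l) ∂ν := by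
        apply hLB _ _ _ _ _ measurableSet_Ico ?_ (hint1 _ _) ?_ ?_
        · rintro r ⟨hr1, hr2⟩
          refine ⟨?_, ?_⟩
          · exact_mod_cast le_trans hml hr1
          · rw [hBc l hl]
            exact hrt r hr2
        · rintro r ⟨hr1, _⟩
          have h : m l ≤ r := by exact_mod_cast hr1
          linarith
        · rintro r ⟨hr1, _⟩
          have h2 : m l ≤ αinf := by
            rw [hmright l hml]
            exact hαle (l+1)
          linarith
      linarith [hRbound l, hmright l hml]
    have h1 : Tendsto (fun l => α (l+1)) atTop (𝓝 x) := by
      rw [← hαeq]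
      exact hαlim.comp (tendsto_add_atTop_nat 1)
    apply Tendsto.congr' _ h1
    rw [Filter.EventuallyEq, Filter.eventually_atTop]
    refine ⟨L, fun l hl => ?_⟩
    exact (hmright l (not_lt.1 (hL l hl))).symm


/-- Lemma 4.3: if `ν` is a Borel probability measure on `[0,∞)` with finite first
moment, then the discrete barycentric approximations `ν_{l+1}` converge weakly to `ν`. -/
theorem discreteApprox_tendsto_weakly (ν : Measure ℝ) [IsProbabilityMeasure ν]
    (hsupp : ν (Set.Iio 0) = 0)
    (hmom : Integrable (fun r : ℝ => r) ν) :
    ∀ f : BoundedContinuousFunction ℝ ℝ,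
      Tendsto (fun l : ℕ => ∫ x, f x ∂(discreteApprox ν l)) atTop
        (nhds (∫ x, f x ∂ν)) := by
  intro f
  have key : (fun l : ℕ => ∫ x, f x ∂(discreteApprox ν l))
      = fun l : ℕ => ∫ x, f (Mfun ν l x) ∂ν :=
    funext fun l => integral_discreteApprox ν hmom hsupp l f
  rw [key]
  apply tendsto_integral_of_dominated_convergence (bound := fun _ => ‖f‖)
  · intro l
    exact (f.continuous.measurable.comp (measurable_Mfun ν l)).aestronglyMeasurable
  · exact integrable_const _
  · intro l
    exact ae_of_all _ fun x => f.norm_coe_le_norm _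
  · have hnull : ν (Iio 0 ∪ (Vset ν ∪ (Wset ν ∪ badSeg ν))) = 0 := by
      apply measure_union_null hsupp
      apply measure_union_null (Vset_null ν)
      exact measure_union_null (Wset_null ν) (badSeg_null ν)
    have hae : ∀ᵐ x ∂ν, x ∉ (Iio 0 ∪ (Vset ν ∪ (Wset ν ∪ badSeg ν))) := by
      rw [ae_iff]
      have hcc : {a : ℝ | ¬ a ∉ (Iio 0 ∪ (Vset ν ∪ (Wset ν ∪ badSeg ν)))}
          = (Iio 0 ∪ (Vset ν ∪ (Wset ν ∪ badSeg ν))) := by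
        ext y; simp only [mem_setOf_eq, not_not]
      rw [hcc]; exact hnull
    filter_upwards [hae] with x hxgood
    simp only [Set.mem_union, not_or] at hxgood
    obtain ⟨hx0, hxV, hxW, hxbad⟩ := hxgood
    rw [mem_Iio, not_lt] at hx0
    have hVx : ∀ t : ℝ, x < t → ν (Ico x t) ≠ 0 := by
      intro t ht h0
      obtain ⟨q, hq1, hq2⟩ := exists_rat_btwn ht
      exact hxV (mem_iUnion.2 ⟨q, hq1,
        measure_mono_null (Ico_subset_Ico_right (le_of_lt hq2)) h0⟩)
    have hWx : ∀ t : ℝ, t < x → ν (Ioc t x) ≠ 0 := by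
      intro t ht h0
      obtain ⟨q, hq1, hq2⟩ := exists_rat_btwn ht
      exact hxW (mem_iUnion.2 ⟨q, hq2,
        measure_mono_null (Ioc_subset_Ioc_left (le_of_lt hq1)) h0⟩)
    exact (f.continuous.tendsto x).comp
      (main_ptwise ν hsupp hmom hx0 hVx hWx hxbad)
end

section
/- Let α > 0 and let g : ℝ → [0,∞) be a Borel measurable α-excessive function for Brownian motion, i.e. (i) for every t > 0 and every x ∈ ℝ, ∫ g(y) d(N(x,t))(y) ≤ e^{αt} g(x), and (ii) for every x ∈ ℝ, e^{−αt} ∫ g(y) d(N(x,t))(y) → g(x) as t → 0⁺, where N(x,t) is the Gaussian measure on ℝ with mean x and variance t. Then there exists a non-negative concave function W : (0,∞) → [0,∞) such that g(x) = e^{−√(2α)·x} · W(e^{2√(2α)·x}) for every x ∈ ℝ. -/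
set_option maxHeartbeats 1000000

open MeasureTheory Set Filter ProbabilityTheory Real
open scoped NNReal ENNReal

section ExcessiveBrownianAux

lemma ebr_quad_eq {b : ℝ} (hb : 0 < b) (c d : ℝ) (y : ℝ) :
    rexp (-b * y ^ 2 + c * y + d)
      = rexp (d + c ^ 2 / (4 * b)) * rexp (-b * (y - c / (2 * b)) ^ 2) := by
  rw [← Real.exp_add]
  congr 1
  field_simp
  ring

lemma ebr_integrable_exp_quad {b : ℝ} (hb : 0 < b) (c d : ℝ) :
    Integrable (fun y : ℝ => rexp (-b * y ^ 2 + c * y + d)) := by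
  simp_rw [ebr_quad_eq hb c d]
  exact ((integrable_exp_neg_mul_sq hb).comp_sub_right (c / (2 * b))).const_mul _

lemma ebr_integral_exp_quad {b : ℝ} (hb : 0 < b) (c d : ℝ) :
    (∫ y : ℝ, rexp (-b * y ^ 2 + c * y + d))
      = Real.sqrt (π / b) * rexp (d + c ^ 2 / (4 * b)) := by
  simp_rw [ebr_quad_eq hb c d]
  rw [integral_const_mul, integral_sub_right_eq_self (fun y => rexp (-b * y ^ 2)) (c / (2 * b)),
    integral_gaussian, mul_comm]

lemma ebr_exp_mul_pdf_eq (c x : ℝ) {v : ℝ≥0} (hv : 0 < v) (y : ℝ) :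
    rexp (c * y) * gaussianPDFReal x v y
      = (Real.sqrt (2 * π * v))⁻¹
        * rexp (-(1/(2*(v:ℝ))) * y ^ 2 + (c + x/(v:ℝ)) * y + (-(x^2)/(2*(v:ℝ)))) := by
  have hv' : (0:ℝ) < (v:ℝ) := by exact_mod_cast hv
  rw [gaussianPDFReal, mul_left_comm, ← Real.exp_add]
  congr 1
  field_simp
  ring

lemma ebr_integrable_exp_mul_pdf (c x : ℝ) {v : ℝ≥0} (hv : 0 < v) :
    Integrable (fun y => rexp (c * y) * gaussianPDFReal x v y) := by
  have hv' : (0:ℝ) < (v:ℝ) := by exact_mod_cast hv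
  simp_rw [ebr_exp_mul_pdf_eq c x hv]
  exact (ebr_integrable_exp_quad (by positivity) _ _).const_mul _

lemma ebr_integral_exp_mul_pdf (c x : ℝ) {v : ℝ≥0} (hv : 0 < v) :
    (∫ y, rexp (c * y) * gaussianPDFReal x v y) = rexp (c * x + c ^ 2 * v / 2) := by
  have hv' : (0:ℝ) < (v:ℝ) := by exact_mod_cast hv
  simp_rw [ebr_exp_mul_pdf_eq c x hv]
  rw [integral_const_mul, ebr_integral_exp_quad (by positivity)]
  have h1 : π / (1/(2*(v:ℝ))) = 2 * π * v := by field_simp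
  rw [h1, ← mul_assoc, inv_mul_cancel₀ (by positivity), one_mul]
  congr 1
  field_simp
  ring

lemma ebr_pdf_mul_pdf_eq (x z : ℝ) {s t : ℝ≥0} (hs : 0 < s) (ht : 0 < t) (y : ℝ) :
    gaussianPDFReal x s y * gaussianPDFReal y t z
      = ((Real.sqrt (2 * π * s))⁻¹ * (Real.sqrt (2 * π * t))⁻¹)
        * rexp (-(1/(2*(s:ℝ)) + 1/(2*(t:ℝ))) * y ^ 2 + (x/(s:ℝ) + z/(t:ℝ)) * y
            + (-(x^2)/(2*(s:ℝ)) - z^2/(2*(t:ℝ)))) := by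
  have hs' : (0:ℝ) < (s:ℝ) := by exact_mod_cast hs
  have ht' : (0:ℝ) < (t:ℝ) := by exact_mod_cast ht
  simp only [gaussianPDFReal]
  rw [mul_mul_mul_comm, ← Real.exp_add]
  congr 1
  field_simp
  ring

lemma ebr_integrable_pdf_mul_pdf (x z : ℝ) {s t : ℝ≥0} (hs : 0 < s) (ht : 0 < t) :
    Integrable (fun y => gaussianPDFReal x s y * gaussianPDFReal y t z) := by
  have hs' : (0:ℝ) < (s:ℝ) := by exact_mod_cast hs
  have ht' : (0:ℝ) < (t:ℝ) := by exact_mod_cast ht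
  simp_rw [ebr_pdf_mul_pdf_eq x z hs ht]
  exact (ebr_integrable_exp_quad (by positivity) _ _).const_mul _

lemma ebr_pdf_conv (x z : ℝ) {s t : ℝ≥0} (hs : 0 < s) (ht : 0 < t) :
    (∫ y, gaussianPDFReal x s y * gaussianPDFReal y t z) = gaussianPDFReal x (s + t) z := by
  have hs' : (0:ℝ) < (s:ℝ) := by exact_mod_cast hs
  have ht' : (0:ℝ) < (t:ℝ) := by exact_mod_cast ht
  simp_rw [ebr_pdf_mul_pdf_eq x z hs ht]
  rw [integral_const_mul, ebr_integral_exp_quad (by positivity), gaussianPDFReal]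
  have hst : ((s + t : ℝ≥0) : ℝ) = (s:ℝ) + (t:ℝ) := by push_cast; ring
  rw [hst]
  have hpre : (Real.sqrt (2 * π * s))⁻¹ * (Real.sqrt (2 * π * t))⁻¹
      * Real.sqrt (π / (1/(2*(s:ℝ)) + 1/(2*(t:ℝ))))
      = (Real.sqrt (2 * π * ((s:ℝ) + (t:ℝ))))⁻¹ := by
    have h1 : π / (1/(2*(s:ℝ)) + 1/(2*(t:ℝ)))
        = (2 * π * (s:ℝ)) * (2 * π * (t:ℝ)) / (2 * π * ((s:ℝ) + (t:ℝ))) := by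
      field_simp
      ring
    rw [h1, Real.sqrt_div (by positivity), Real.sqrt_mul (by positivity)]
    have h2 : Real.sqrt (2 * π * (s:ℝ)) ≠ 0 := by positivity
    have h3 : Real.sqrt (2 * π * (t:ℝ)) ≠ 0 := by positivity
    have h4 : Real.sqrt (2 * π * ((s:ℝ) + (t:ℝ))) ≠ 0 := by positivity
    field_simp
    rw [← Real.sqrt_mul (by positivity : (0:ℝ) ≤ 2 * π),
      ← Real.sqrt_mul (by positivity : (0:ℝ) ≤ 2 * π * (s:ℝ))]
    congr 1
    ring
  have hexpo : (-(x^2)/(2*(s:ℝ)) - z^2/(2*(t:ℝ)))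
      + (x/(s:ℝ) + z/(t:ℝ)) ^ 2 / (4 * (1/(2*(s:ℝ)) + 1/(2*(t:ℝ))))
      = -(z - x)^2 / (2 * ((s:ℝ) + (t:ℝ))) := by
    field_simp
    ring
  rw [← mul_assoc, hpre, hexpo]

lemma ebr_pdf_le {v w : ℝ≥0} (hv : 0 < v) (hvw : v < w) (x' r : ℝ) (hr : 0 ≤ r) :
    ∃ C : ℝ, 0 < C ∧ ∀ x y : ℝ, |x - x'| ≤ r →
      gaussianPDFReal x v y ≤ C * gaussianPDFReal x' w y := by
  have hv' : (0:ℝ) < (v:ℝ) := by exact_mod_cast hv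
  have hw' : (0:ℝ) < (w:ℝ) := lt_trans hv' (by exact_mod_cast hvw)
  have hwv : (0:ℝ) < (w:ℝ) - (v:ℝ) := by
    have : (v:ℝ) < (w:ℝ) := by exact_mod_cast hvw
    linarith
  refine ⟨Real.sqrt ((w:ℝ)/(v:ℝ)) * rexp (r^2/(2*((w:ℝ)-(v:ℝ)))), by positivity, ?_⟩
  intro x y hx
  have hδ : (x - x')^2 ≤ r^2 := by
    have h := abs_le.1 hx
    exact sq_le_sq' h.1 h.2
  -- exponent inequality
  have key : (v:ℝ) * ((w:ℝ)-(v:ℝ)) * (y - x')^2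
      ≤ (w:ℝ) * (((w:ℝ)-(v:ℝ)) * (y - x)^2) + (w:ℝ) * ((v:ℝ) * r^2) := by
    have hyx : y - x' = (y - x) + (x - x') := by ring
    rw [hyx]
    linarith [sq_nonneg (((w:ℝ)-(v:ℝ)) * (y - x) - (v:ℝ) * (x - x')),
      mul_nonneg (mul_nonneg hw'.le hv'.le) (sub_nonneg.2 hδ)]
  have hexp : rexp (-(y - x)^2 / (2*(v:ℝ)))
      ≤ rexp (r^2/(2*((w:ℝ)-(v:ℝ)))) * rexp (-(y - x')^2 / (2*(w:ℝ))) := by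
    rw [← Real.exp_add, Real.exp_le_exp]
    rw [div_add_div _ _ (by positivity) (by positivity), div_le_div_iff₀ (by positivity)
      (by positivity)]
    linarith [key]
  have hpre : (Real.sqrt (2 * π * (v:ℝ)))⁻¹
      = Real.sqrt ((w:ℝ)/(v:ℝ)) * (Real.sqrt (2 * π * (w:ℝ)))⁻¹ := by
    rw [Real.sqrt_div hw'.le, Real.sqrt_mul (by positivity : (0:ℝ) ≤ 2 * π) (v:ℝ),
      Real.sqrt_mul (by positivity : (0:ℝ) ≤ 2 * π) (w:ℝ)]
    have h2 : Real.sqrt (2*π) ≠ 0 := by positivity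
    have h3 : Real.sqrt (v:ℝ) ≠ 0 := by positivity
    have h4 : Real.sqrt (w:ℝ) ≠ 0 := by positivity
    field_simp
  calc gaussianPDFReal x v y
      = (Real.sqrt (2 * π * (v:ℝ)))⁻¹ * rexp (-(y - x)^2 / (2*(v:ℝ))) := rfl
    _ ≤ (Real.sqrt (2 * π * (v:ℝ)))⁻¹
        * (rexp (r^2/(2*((w:ℝ)-(v:ℝ)))) * rexp (-(y - x')^2 / (2*(w:ℝ)))) := by
        apply mul_le_mul_of_nonneg_left hexp (by positivity)
    _ = Real.sqrt ((w:ℝ)/(v:ℝ)) * rexp (r^2/(2*((w:ℝ)-(v:ℝ))))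
        * ((Real.sqrt (2 * π * (w:ℝ)))⁻¹ * rexp (-(y - x')^2 / (2*(w:ℝ)))) := by
        rw [hpre]; ring
    _ = Real.sqrt ((w:ℝ)/(v:ℝ)) * rexp (r^2/(2*((w:ℝ)-(v:ℝ)))) * gaussianPDFReal x' w y := rfl

lemma ebr_integral_gaussianReal (f : ℝ → ℝ) (x : ℝ) {v : ℝ≥0} (hv : v ≠ 0) :
    ∫ y, f y ∂(gaussianReal x v) = ∫ y, f y * gaussianPDFReal x v y := by
  rw [gaussianReal_of_var_ne_zero x hv]
  have hd : gaussianPDF x v = fun y => ((gaussianPDFReal x v y).toNNReal : ℝ≥0∞) := by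
    funext y
    rw [gaussianPDF, ENNReal.ofReal_eq_coe_nnreal (gaussianPDFReal_nonneg x v y)]
    congr 1
    simp [Real.toNNReal_of_nonneg (gaussianPDFReal_nonneg x v y)]
  rw [hd, integral_withDensity_eq_integral_smul
    ((measurable_gaussianPDFReal x v).real_toNNReal) f]
  congr 1
  funext y
  rw [NNReal.smul_def, smul_eq_mul, Real.coe_toNNReal _ (gaussianPDFReal_nonneg x v y), mul_comm]

lemma ebr_integrable_gaussianReal_iff (f : ℝ → ℝ) (x : ℝ) {v : ℝ≥0} (hv : v ≠ 0) :
    Integrable f (gaussianReal x v) ↔ Integrable (fun y => f y * gaussianPDFReal x v y) := by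
  rw [gaussianReal_of_var_ne_zero x hv]
  have hd : gaussianPDF x v = fun y => ((gaussianPDFReal x v y).toNNReal : ℝ≥0∞) := by
    funext y
    rw [gaussianPDF, ENNReal.ofReal_eq_coe_nnreal (gaussianPDFReal_nonneg x v y)]
    congr 1
    simp [Real.toNNReal_of_nonneg (gaussianPDFReal_nonneg x v y)]
  rw [hd, integrable_withDensity_iff_integrable_smul
    ((measurable_gaussianPDFReal x v).real_toNNReal)]
  have hco : ∀ y, (gaussianPDFReal x v y).toNNReal • f y = f y * gaussianPDFReal x v y := by
    intro y
    rw [NNReal.smul_def, smul_eq_mul, Real.coe_toNNReal _ (gaussianPDFReal_nonneg x v y),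
      mul_comm]
  constructor <;> intro h
  · exact h.congr (Eventually.of_forall fun y => hco y)
  · exact h.congr (Eventually.of_forall fun y => (hco y).symm)

lemma ebr_exp_neg_le {x : ℝ} (hx : 0 < x) : rexp (-x) ≤ 27 / x ^ 3 := by
  have h1 : x ≤ 3 * rexp (x/3) := by
    have h := Real.add_one_le_exp (x/3)
    linarith [Real.exp_pos (x/3)]
  have h2 : x ^ 3 ≤ 27 * rexp x := by
    have h3 : (3 * rexp (x/3)) ^ 3 = 27 * rexp x := by
      have : rexp (x/3) ^ 3 = rexp x := by
        rw [← Real.exp_nat_mul]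
        norm_num
        rw [mul_div_cancel₀]
        norm_num
      rw [mul_pow, this]
      norm_num
    calc x ^ 3 ≤ (3 * rexp (x/3)) ^ 3 := by
          apply pow_le_pow_left₀ hx.le h1
      _ = 27 * rexp x := h3
  rw [Real.exp_neg, le_div_iff₀ (by positivity), inv_mul_eq_div, div_le_iff₀ (Real.exp_pos _)]
  linarith

lemma ebr_one_sub_exp_neg_ge {x : ℝ} (hx : 0 ≤ x) (hx1 : x ≤ 1) :
    x / rexp 1 ≤ 1 - rexp (-x) := by
  have h1 : x + 1 ≤ rexp x := Real.add_one_le_exp x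
  have h2 : rexp (-(1:ℝ)) ≤ rexp (-x) := Real.exp_le_exp.2 (by linarith)
  have h3 : 1 - rexp (-x) = rexp (-x) * (rexp x - 1) := by
    rw [mul_sub, Real.exp_neg, inv_mul_cancel₀ (Real.exp_ne_zero x)]
    ring
  have h4 : rexp (-(1:ℝ)) * x ≤ rexp (-x) * (rexp x - 1) :=
    mul_le_mul h2 (by linarith) hx (Real.exp_pos _).le
  rw [h3]
  calc x / rexp 1 = rexp (-(1:ℝ)) * x := by rw [Real.exp_neg, div_eq_mul_inv]; ring
    _ ≤ rexp (-x) * (rexp x - 1) := h4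

lemma ebr_max_principle (α : ℝ) (hα : 0 < α)
    (h : ℝ → ℝ) (hc : Continuous h) (hnn : ∀ y, 0 ≤ h y)
    (σ : ℝ≥0) (hσ : 0 < σ)
    (hint : ∀ (x : ℝ) (s : ℝ≥0), 0 < s → s < σ →
      Integrable (fun y => h y * gaussianPDFReal x s y))
    (hsuper : ∀ (x : ℝ) (s : ℝ≥0), 0 < s → s < σ →
      rexp (-(α*s)) * (∫ y, h y * gaussianPDFReal x s y) ≤ h x)
    (A B a b : ℝ) (hab : a < b)
    (hva : A * rexp (Real.sqrt (2*α) * a) + B * rexp (-(Real.sqrt (2*α) * a)) ≤ h a)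
    (hvb : A * rexp (Real.sqrt (2*α) * b) + B * rexp (-(Real.sqrt (2*α) * b)) ≤ h b) :
    ∀ x ∈ Icc a b, A * rexp (Real.sqrt (2*α) * x) + B * rexp (-(Real.sqrt (2*α) * x)) ≤ h x := by
  set γ : ℝ := Real.sqrt (2*α) with hγdef
  have hγ : 0 < γ := Real.sqrt_pos.2 (by linarith)
  have hγ2 : γ ^ 2 = 2 * α := Real.sq_sqrt (by linarith)
  set v : ℝ → ℝ := fun y => A * rexp (γ * y) + B * rexp (-(γ * y)) with hvdef
  have hvcont : Continuous v := by fun_prop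
  by_contra hcon
  push_neg at hcon
  obtain ⟨x₂, hx₂K, hx₂⟩ := hcon
  obtain ⟨x₁, hx₁K, hmin⟩ := isCompact_Icc.exists_isMinOn (nonempty_Icc.2 hab.le)
    (hc.sub hvcont).continuousOn
  have hminle : ∀ y ∈ Icc a b, h x₁ - v x₁ ≤ h y - v y := fun y hy => isMinOn_iff.1 hmin y hy
  set m : ℝ := v x₁ - h x₁ with hmdef
  have hm : 0 < m := by
    have h2 := hminle x₂ hx₂K
    have hvx2 : v x₂ = A * rexp (γ * x₂) + B * rexp (-(γ * x₂)) := rfl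
    simp only [hmdef]
    linarith
  have hx₁a : a < x₁ := by
    rcases eq_or_lt_of_le hx₁K.1 with he | hl
    · exfalso
      have : h x₁ - v x₁ = h a - v a := by rw [← he]
      have hva' : 0 ≤ h a - v a := by simp only [hvdef]; linarith [hva]
      linarith
    · exact hl
  have hx₁b : x₁ < b := by
    rcases eq_or_lt_of_le hx₁K.2 with he | hl
    · exfalso
      have : h x₁ - v x₁ = h b - v b := by rw [he]
      have hvb' : 0 ≤ h b - v b := by simp only [hvdef]; linarith [hvb]
      linarith
    · exact hl
  set δ : ℝ := min (x₁ - a) (b - x₁) with hδdef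
  have hδ : 0 < δ := lt_min (by linarith) (by linarith)
  set C : ℝ := |A| + |B| with hCdef
  have hC : 0 ≤ C := by positivity
  set K : ℝ := 4 * rexp (γ * |x₁| + (1+γ)^2/2) with hKdef
  have hK : 0 < K := by positivity
  set ρ : ℝ := m * α * δ^3 / (27 * rexp 1 * (C+1) * K) with hρdef
  have hρ : 0 < ρ := by positivity
  set sR : ℝ := min (min 1 (1/α)) (min ((σ:ℝ)/2) (ρ^2/2)) with hsRdef
  have hsR : 0 < sR := by
    refine lt_min (lt_min one_pos (by positivity)) (lt_min ?_ (by positivity))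
    have : (0:ℝ) < (σ:ℝ) := by exact_mod_cast hσ
    positivity
  set s : ℝ≥0 := sR.toNNReal with hsdef
  have hscoe : (s:ℝ) = sR := Real.coe_toNNReal _ hsR.le
  have hs0 : 0 < s := by
    rw [← NNReal.coe_lt_coe, hscoe]; exact hsR
  have hsσ : s < σ := by
    rw [← NNReal.coe_lt_coe, hscoe]
    have h1 : sR ≤ (σ:ℝ)/2 := le_trans (min_le_right _ _) (min_le_left _ _)
    have : (0:ℝ) < (σ:ℝ) := by exact_mod_cast hσ
    linarith
  have hs1 : (s:ℝ) ≤ 1 := by rw [hscoe]; exact le_trans (min_le_left _ _) (min_le_left _ _)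
  have hsα : α * (s:ℝ) ≤ 1 := by
    rw [hscoe]
    have h1 : sR ≤ 1/α := le_trans (min_le_left _ _) (min_le_right _ _)
    rw [le_div_iff₀ hα] at h1
    linarith
  set S : ℝ := Real.sqrt (s:ℝ) with hSdef
  have hS : 0 < S := Real.sqrt_pos.2 (by rw [hscoe]; exact hsR)
  have hS2 : S ^ 2 = (s:ℝ) := Real.sq_sqrt (by rw [hscoe]; exact hsR.le)
  have hS1 : S ≤ 1 := by
    rw [hSdef]
    rw [show (1:ℝ) = Real.sqrt 1 by rw [Real.sqrt_one]]
    exact Real.sqrt_le_sqrt hs1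
  have hSρ : S < ρ := by
    have h1 : (s:ℝ) ≤ ρ^2/2 := by
      rw [hscoe]; exact le_trans (min_le_right _ _) (min_le_right _ _)
    have h2 : (s:ℝ) < ρ^2 := by
      have hρ2 : (0:ℝ) < ρ^2 := by positivity
      linarith
    calc S = Real.sqrt (s:ℝ) := rfl
      _ < Real.sqrt (ρ^2) := Real.sqrt_lt_sqrt (by rw [hscoe]; exact hsR.le) h2
      _ = ρ := Real.sqrt_sq hρ.le
  set β : ℝ := 1 / S with hβdef
  have hβ : 0 < β := by positivity
  have hβS : β * S = 1 := by rw [hβdef]; field_simp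
  -- quadratic exponent bound
  have hq1 : (β + γ)^2 * (s:ℝ) / 2 ≤ (1 + γ)^2 / 2 := by
    have e1 : (β + γ)^2 * (s:ℝ) = (1 + γ * S)^2 := by
      rw [← hS2]
      linear_combination (β*S + 1 + 2*γ*S) * hβS
    rw [e1]
    have hgs : γ * S ≤ γ := by
      have := mul_le_mul_of_nonneg_left hS1 hγ.le
      linarith
    have : (1 + γ * S)^2 ≤ (1 + γ)^2 := by
      apply pow_le_pow_left₀ (by positivity) (by linarith)
    linarith
  -- harmonicity of v
  have hvwrite : (fun y => v y * gaussianPDFReal x₁ s y)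
      = fun y => A * (rexp (γ * y) * gaussianPDFReal x₁ s y)
        + B * (rexp ((-γ) * y) * gaussianPDFReal x₁ s y) := by
    funext y
    simp only [hvdef, neg_mul]
    ring
  have hvint : Integrable (fun y => v y * gaussianPDFReal x₁ s y) := by
    rw [hvwrite]
    exact ((ebr_integrable_exp_mul_pdf γ x₁ hs0).const_mul A).add
      ((ebr_integrable_exp_mul_pdf (-γ) x₁ hs0).const_mul B)
  have hvval : (∫ y, v y * gaussianPDFReal x₁ s y) = rexp (α * (s:ℝ)) * v x₁ := by
    rw [hvwrite, integral_add (((ebr_integrable_exp_mul_pdf γ x₁ hs0)).const_mul A)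
      (((ebr_integrable_exp_mul_pdf (-γ) x₁ hs0)).const_mul B),
      integral_const_mul, integral_const_mul, ebr_integral_exp_mul_pdf γ x₁ hs0,
      ebr_integral_exp_mul_pdf (-γ) x₁ hs0]
    have e1 : γ * x₁ + γ^2 * (s:ℝ) / 2 = α * (s:ℝ) + γ * x₁ := by
      linear_combination ((s:ℝ)/2) * hγ2
    have e2 : (-γ) * x₁ + (-γ)^2 * (s:ℝ) / 2 = α * (s:ℝ) + -(γ * x₁) := by
      linear_combination ((s:ℝ)/2) * hγ2
    rw [e1, e2, Real.exp_add, Real.exp_add]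
    simp only [hvdef]
    ring
  -- the comparison function χ
  set χ : ℝ → ℝ := fun y => rexp (-(β*δ))
    * ((rexp (β*(y - x₁)) + rexp (-(β*(y - x₁)))) * (rexp (γ*y) + rexp (-(γ*y)))) with hχdef
  have hχnn : ∀ y, 0 ≤ χ y := fun y => by simp only [hχdef]; positivity
  -- pointwise lower bound for h - v
  have hpoint : ∀ y, -m - C * χ y ≤ h y - v y := by
    intro y
    by_cases hy : y ∈ Icc a b
    · have h1 := hminle y hy
      have h2 : 0 ≤ C * χ y := mul_nonneg hC (hχnn y)
      simp only [hmdef] at *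
      linarith
    · -- outside the interval
      have hyd : δ ≤ |y - x₁| := by
        rw [mem_Icc, not_and_or, not_le, not_le] at hy
        rcases hy with hy | hy
        · refine le_abs.2 (Or.inr ?_)
          have : δ ≤ x₁ - a := min_le_left _ _
          linarith
        · refine le_abs.2 (Or.inl ?_)
          have : δ ≤ b - x₁ := min_le_right _ _
          linarith
      have hG : 0 ≤ rexp (γ*y) + rexp (-(γ*y)) := by positivity
      have hme : rexp (β * |y - x₁|) ≤ rexp (β*(y - x₁)) + rexp (-(β*(y - x₁))) := by
        rcases abs_cases (y - x₁) with ⟨he, _⟩ | ⟨he, _⟩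
        · rw [he]; linarith [Real.exp_pos (-(β*(y - x₁)))]
        · rw [he, mul_neg]
          linarith [Real.exp_pos (β*(y - x₁))]
      have h1le : (1:ℝ) ≤ rexp (-(β*δ)) * (rexp (β*(y - x₁)) + rexp (-(β*(y - x₁)))) := by
        calc (1:ℝ) = rexp 0 := (Real.exp_zero).symm
          _ ≤ rexp (-(β*δ) + β * |y - x₁|) := by
              rw [Real.exp_le_exp]
              linarith [mul_le_mul_of_nonneg_left hyd hβ.le]
          _ = rexp (-(β*δ)) * rexp (β * |y - x₁|) := Real.exp_add _ _
          _ ≤ rexp (-(β*δ)) * (rexp (β*(y - x₁)) + rexp (-(β*(y - x₁)))) := by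
              exact mul_le_mul_of_nonneg_left hme (Real.exp_pos _).le
      have hGχ : rexp (γ*y) + rexp (-(γ*y)) ≤ χ y := by
        simp only [hχdef]
        rw [← mul_assoc]
        exact le_mul_of_one_le_left hG h1le
      have hvy : v y ≤ C * (rexp (γ*y) + rexp (-(γ*y))) := by
        simp only [hvdef, hCdef]
        have h1 : A * rexp (γ*y) ≤ |A| * rexp (γ*y) :=
          mul_le_mul_of_nonneg_right (le_abs_self A) (Real.exp_pos _).le
        have h2 : B * rexp (-(γ*y)) ≤ |B| * rexp (-(γ*y)) :=
          mul_le_mul_of_nonneg_right (le_abs_self B) (Real.exp_pos _).le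
        linarith [h1, h2, mul_nonneg (abs_nonneg A) (Real.exp_pos (-(γ*y))).le,
          mul_nonneg (abs_nonneg B) (Real.exp_pos (γ*y)).le]
      have hvχ : v y ≤ C * χ y := le_trans hvy (mul_le_mul_of_nonneg_left hGχ hC)
      have := hnn y
      linarith
  -- integral of χ
  have hχwrite : (fun y => χ y * gaussianPDFReal x₁ s y) = fun y =>
      (rexp (-(β*δ)) * rexp (-(β*x₁))) * (rexp ((β+γ)*y) * gaussianPDFReal x₁ s y)
      + (rexp (-(β*δ)) * rexp (-(β*x₁))) * (rexp ((β-γ)*y) * gaussianPDFReal x₁ s y)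
      + ((rexp (-(β*δ)) * rexp (β*x₁)) * (rexp ((γ-β)*y) * gaussianPDFReal x₁ s y)
      + (rexp (-(β*δ)) * rexp (β*x₁)) * (rexp ((-β-γ)*y) * gaussianPDFReal x₁ s y)) := by
    funext y
    simp only [hχdef]
    rw [show β*(y - x₁) = β*y + -(β*x₁) by ring, show -(β*y + -(β*x₁)) = -(β*y) + β*x₁ by ring,
      show (β+γ)*y = β*y + γ*y by ring, show (β-γ)*y = β*y + -(γ*y) by ring,
      show (γ-β)*y = γ*y + -(β*y) by ring, show (-β-γ)*y = -(β*y) + -(γ*y) by ring]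
    simp only [Real.exp_add]
    ring
  have hi1 := (ebr_integrable_exp_mul_pdf (β+γ) x₁ hs0).const_mul
    (rexp (-(β*δ)) * rexp (-(β*x₁)))
  have hi2 := (ebr_integrable_exp_mul_pdf (β-γ) x₁ hs0).const_mul
    (rexp (-(β*δ)) * rexp (-(β*x₁)))
  have hi3 := (ebr_integrable_exp_mul_pdf (γ-β) x₁ hs0).const_mul
    (rexp (-(β*δ)) * rexp (β*x₁))
  have hi4 := (ebr_integrable_exp_mul_pdf (-β-γ) x₁ hs0).const_mul
    (rexp (-(β*δ)) * rexp (β*x₁))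
  have hi12 : Integrable (fun y =>
      (rexp (-(β*δ)) * rexp (-(β*x₁))) * (rexp ((β+γ)*y) * gaussianPDFReal x₁ s y)
      + (rexp (-(β*δ)) * rexp (-(β*x₁))) * (rexp ((β-γ)*y) * gaussianPDFReal x₁ s y)) :=
    hi1.add hi2
  have hi34 : Integrable (fun y =>
      (rexp (-(β*δ)) * rexp (β*x₁)) * (rexp ((γ-β)*y) * gaussianPDFReal x₁ s y)
      + (rexp (-(β*δ)) * rexp (β*x₁)) * (rexp ((-β-γ)*y) * gaussianPDFReal x₁ s y)) :=
    hi3.add hi4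
  have hχint : Integrable (fun y => χ y * gaussianPDFReal x₁ s y) := by
    rw [hχwrite]
    exact hi12.add hi34
  have hχbound : (∫ y, χ y * gaussianPDFReal x₁ s y) ≤ K * rexp (-(β*δ)) := by
    rw [hχwrite, integral_add hi12 hi34, integral_add hi1 hi2,
      integral_add hi3 hi4, integral_const_mul, integral_const_mul, integral_const_mul,
      integral_const_mul, ebr_integral_exp_mul_pdf _ x₁ hs0, ebr_integral_exp_mul_pdf _ x₁ hs0,
      ebr_integral_exp_mul_pdf _ x₁ hs0, ebr_integral_exp_mul_pdf _ x₁ hs0]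
    have hbb : (β-γ)^2 ≤ (β+γ)^2 := by linarith [mul_pos hβ hγ]
    have hgx1 : γ * x₁ ≤ γ * |x₁| := mul_le_mul_of_nonneg_left (le_abs_self x₁) hγ.le
    have hgx2 : -(γ * x₁) ≤ γ * |x₁| := by
      rw [← mul_neg]
      exact mul_le_mul_of_nonneg_left (neg_le_abs x₁) hγ.le
    have hterm : ∀ c : ℝ, c^2 ≤ (β+γ)^2 → ∀ e : ℝ, e + (c * x₁ + c^2 * (s:ℝ)/2) ≤ γ * |x₁| →
        True := fun _ _ _ _ => trivial
    -- bound each of the four terms by exp(-(β*δ) + γ*|x₁| + (1+γ)^2/2)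
    have key : ∀ c w : ℝ, c^2 ≤ (β+γ)^2 → w + c * x₁ ≤ γ * |x₁| →
        rexp (-(β*δ)) * rexp w * rexp (c * x₁ + c^2 * (s:ℝ)/2)
          ≤ rexp (-(β*δ) + (γ * |x₁| + (1+γ)^2/2)) := by
      intro c w hc hw
      rw [← Real.exp_add, ← Real.exp_add, Real.exp_le_exp]
      have h1 : c^2 * (s:ℝ)/2 ≤ (β+γ)^2 * (s:ℝ)/2 := by
        have hs' : (0:ℝ) ≤ (s:ℝ)/2 := by positivity
        have := mul_le_mul_of_nonneg_right hc hs'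
        linarith
      linarith [hq1]
    have k1 := key (β+γ) (-(β*x₁)) le_rfl (by linarith)
    have k2 := key (β-γ) (-(β*x₁)) hbb (by linarith [hgx2])
    have k3 := key (γ-β) (β*x₁) (by linarith [hbb]) (by linarith [hgx1])
    have k4 := key (-β-γ) (β*x₁) (by linarith [hbb]) (by linarith [hgx2])
    have hKe : K * rexp (-(β*δ)) = 4 * rexp (-(β*δ) + (γ * |x₁| + (1+γ)^2/2)) := by
      rw [hKdef, mul_assoc, ← Real.exp_add]
      congr 1
      ring
    rw [hKe]
    linarith
  -- monotone integral comparison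
  have hIlow : Integrable (fun y => (-m - C * χ y) * gaussianPDFReal x₁ s y) := by
    have : (fun y => (-m - C * χ y) * gaussianPDFReal x₁ s y)
        = fun y => (-m) * gaussianPDFReal x₁ s y + (-C) * (χ y * gaussianPDFReal x₁ s y) := by
      funext y; ring
    rw [this]
    exact ((integrable_gaussianPDFReal x₁ s).const_mul (-m)).add (hχint.const_mul (-C))
  have hIhigh : Integrable (fun y => (h y - v y) * gaussianPDFReal x₁ s y) := by
    have : (fun y => (h y - v y) * gaussianPDFReal x₁ s y)
        = fun y => h y * gaussianPDFReal x₁ s y - v y * gaussianPDFReal x₁ s y := by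
      funext y; ring
    rw [this]
    exact (hint x₁ s hs0 hsσ).sub hvint
  have hmono : (∫ y, (-m - C * χ y) * gaussianPDFReal x₁ s y)
      ≤ ∫ y, (h y - v y) * gaussianPDFReal x₁ s y := by
    apply integral_mono hIlow hIhigh
    intro y
    exact mul_le_mul_of_nonneg_right (hpoint y) (gaussianPDFReal_nonneg x₁ s y)
  have hlowval : (∫ y, (-m - C * χ y) * gaussianPDFReal x₁ s y)
      = -m - C * (∫ y, χ y * gaussianPDFReal x₁ s y) := by
    have : (fun y => (-m - C * χ y) * gaussianPDFReal x₁ s y)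
        = fun y => (-m) * gaussianPDFReal x₁ s y + (-C) * (χ y * gaussianPDFReal x₁ s y) := by
      funext y; ring
    rw [this, integral_add ((integrable_gaussianPDFReal x₁ s).const_mul (-m))
      (hχint.const_mul (-C)), integral_const_mul, integral_const_mul,
      integral_gaussianPDFReal_eq_one x₁ (by exact_mod_cast hs0.ne')]
    ring
  have hhighval : (∫ y, (h y - v y) * gaussianPDFReal x₁ s y)
      = (∫ y, h y * gaussianPDFReal x₁ s y) - ∫ y, v y * gaussianPDFReal x₁ s y := by
    have : (fun y => (h y - v y) * gaussianPDFReal x₁ s y)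
        = fun y => h y * gaussianPDFReal x₁ s y - v y * gaussianPDFReal x₁ s y := by
      funext y; ring
    rw [this, integral_sub (hint x₁ s hs0 hsσ) hvint]
  -- supermedian chain
  have hsup := hsuper x₁ s hs0 hsσ
  have hvx₁ : rexp (-(α*(s:ℝ))) * (∫ y, v y * gaussianPDFReal x₁ s y) = v x₁ := by
    rw [hvval, ← mul_assoc, ← Real.exp_add]
    simp
  have hchain : rexp (-(α*(s:ℝ)))
      * (-m - C * (∫ y, χ y * gaussianPDFReal x₁ s y)) ≤ -m := by
    have h1 : rexp (-(α*(s:ℝ))) * (∫ y, (-m - C * χ y) * gaussianPDFReal x₁ s y) ≤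
        rexp (-(α*(s:ℝ))) * (∫ y, (h y - v y) * gaussianPDFReal x₁ s y) :=
      mul_le_mul_of_nonneg_left hmono (Real.exp_pos _).le
    rw [hhighval, hlowval] at h1
    have h2 : rexp (-(α*(s:ℝ))) * (∫ y, h y * gaussianPDFReal x₁ s y) ≤ h x₁ := hsup
    calc rexp (-(α*(s:ℝ))) * (-m - C * (∫ y, χ y * gaussianPDFReal x₁ s y))
        ≤ rexp (-(α*(s:ℝ))) * ((∫ y, h y * gaussianPDFReal x₁ s y)
            - ∫ y, v y * gaussianPDFReal x₁ s y) := h1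
      _ = rexp (-(α*(s:ℝ))) * (∫ y, h y * gaussianPDFReal x₁ s y) - v x₁ := by
          rw [mul_sub, hvx₁]
      _ ≤ h x₁ - v x₁ := by linarith [h2]
      _ = -m := by simp only [hmdef]; ring
  -- numeric contradiction
  set E : ℝ := rexp (-(β*δ)) with hEdef
  have hE : 0 < E := Real.exp_pos _
  have hexp1 : rexp (-(α*(s:ℝ))) ≤ 1 := by
    rw [show (1:ℝ) = rexp 0 by rw [Real.exp_zero]]
    apply Real.exp_le_exp.2
    have : (0:ℝ) ≤ α * (s:ℝ) := by positivity
    linarith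
  have hχI : (∫ y, χ y * gaussianPDFReal x₁ s y) ≤ K * E := hχbound
  have hχInn : 0 ≤ (∫ y, χ y * gaussianPDFReal x₁ s y) :=
    integral_nonneg fun y => mul_nonneg (hχnn y) (gaussianPDFReal_nonneg x₁ s y)
  have hfin : m * (1 - rexp (-(α*(s:ℝ)))) ≤ C * (K * E) := by
    have h5 : rexp (-(α*(s:ℝ))) * (C * (K * E)) ≤ C * (K * E) := by
      apply mul_le_of_le_one_left (by positivity) hexp1
    have h6 : rexp (-(α*(s:ℝ))) * (C * (∫ y, χ y * gaussianPDFReal x₁ s y))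
        ≤ rexp (-(α*(s:ℝ))) * (C * (K * E)) := by
      apply mul_le_mul_of_nonneg_left _ (Real.exp_pos _).le
      exact mul_le_mul_of_nonneg_left hχI hC
    linarith [hchain, h5, h6]
  -- lower bound for 1 - exp(-αs)
  have hone : α * (s:ℝ) / rexp 1 ≤ 1 - rexp (-(α*(s:ℝ))) :=
    ebr_one_sub_exp_neg_ge (by positivity) hsα
  -- upper bound for E
  have hβδ : 0 < β * δ := by positivity
  have hEup : E ≤ 27 / (β*δ)^3 := ebr_exp_neg_le hβδ
  have hβδS : (β*δ)^3 = δ^3 / S^3 := by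
    rw [hβdef]
    field_simp
  have hEup2 : E ≤ 27 * S^3 / δ^3 := by
    rw [hβδS] at hEup
    calc E ≤ 27 / (δ^3 / S^3) := hEup
      _ = 27 * S^3 / δ^3 := by field_simp
  -- combine
  have hcomb : m * (α * (s:ℝ) / rexp 1) ≤ (C+1) * K * (27 * S^3 / δ^3) := by
    calc m * (α * (s:ℝ) / rexp 1) ≤ m * (1 - rexp (-(α*(s:ℝ)))) :=
          mul_le_mul_of_nonneg_left hone hm.le
      _ ≤ C * (K * E) := hfin
      _ ≤ (C+1) * K * E := by linarith [mul_nonneg hK.le hE.le]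
      _ ≤ (C+1) * K * (27 * S^3 / δ^3) := by
          apply mul_le_mul_of_nonneg_left hEup2 (by positivity)
  have hcomb2 : m * α * δ^3 ≤ 27 * rexp 1 * (C+1) * K * S := by
    have hs2 : (s:ℝ) = S^2 := hS2.symm
    rw [hs2] at hcomb
    have hepos : (0:ℝ) < rexp 1 := Real.exp_pos 1
    have hX : (0:ℝ) < rexp 1 * δ^3 / S^2 := by positivity
    have hmul := mul_le_mul_of_nonneg_right hcomb hX.le
    calc m * α * δ^3 = m * (α * S^2 / rexp 1) * (rexp 1 * δ^3 / S^2) := by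
          field_simp
      _ ≤ (C+1) * K * (27 * S^3 / δ^3) * (rexp 1 * δ^3 / S^2) := hmul
      _ = 27 * rexp 1 * (C+1) * K * S := by
          field_simp
  have : ρ ≤ S := by
    rw [hρdef, div_le_iff₀ (by positivity)]
    calc m * α * δ^3 ≤ 27 * rexp 1 * (C+1) * K * S := hcomb2
      _ = S * (27 * rexp 1 * (C+1) * K) := by ring
  linarith [hSρ]

end ExcessiveBrownianAux

/-- Lemma 2.7: characterization of `α`-excessive functions of Brownian motion.
If `g : ℝ → [0,∞)` is Borel measurable and `α`-excessive for the Brownian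
transition semigroup `P_t g (x) = ∫ g dN(x,t)` (with `N(x,t)` the Gaussian measure
with mean `x` and variance `t`), i.e. `P_t g ≤ e^{αt} g` for all `t > 0` and
`e^{-αt} P_t g → g` pointwise as `t → 0⁺`, then there is a non-negative concave
function `W` on `(0,∞)` with `g(x) = e^{-√(2α) x} W(e^{2√(2α) x})`. -/
theorem excessive_brownian_repr (α : ℝ) (hα : 0 < α)
    (g : ℝ → ℝ) (hmeas : Measurable g) (hnonneg : ∀ x, 0 ≤ g x)
    (hexcessive : ∀ t : NNReal, 0 < t → ∀ x : ℝ,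
      (∫ y, g y ∂(gaussianReal x t)) ≤ Real.exp (α * t) * g x)
    (hlimit : ∀ x : ℝ,
      Tendsto (fun t : NNReal => Real.exp (-(α * t)) * ∫ y, g y ∂(gaussianReal x t))
        (nhdsWithin 0 (Set.Ioi 0)) (nhds (g x))) :
    ∃ W : ℝ → ℝ, (∀ x ∈ Set.Ioi (0 : ℝ), 0 ≤ W x) ∧ ConcaveOn ℝ (Set.Ioi 0) W ∧
      ∀ x : ℝ, g x = Real.exp (-(Real.sqrt (2 * α)) * x)
        * W (Real.exp (2 * Real.sqrt (2 * α) * x)) := by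
  classical
  have hγ : 0 < Real.sqrt (2*α) := Real.sqrt_pos.2 (by linarith)
  have hγ2 : Real.sqrt (2*α) ^ 2 = 2 * α := Real.sq_sqrt (by linarith)
  set γ : ℝ := Real.sqrt (2*α) with hγdef
  -- convert hypotheses to pdf form
  have hexc : ∀ t : ℝ≥0, 0 < t → ∀ x : ℝ,
      (∫ y, g y * gaussianPDFReal x t y) ≤ rexp (α*t) * g x := by
    intro t ht x
    rw [← ebr_integral_gaussianReal g x ht.ne']
    exact hexcessive t ht x
  have hlim : ∀ x : ℝ, Tendsto (fun t : ℝ≥0 => rexp (-(α*t)) * ∫ y, g y * gaussianPDFReal x t y)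
      (nhdsWithin 0 (Ioi 0)) (nhds (g x)) := by
    intro x
    apply (hlimit x).congr'
    filter_upwards [self_mem_nhdsWithin] with t ht
    rw [ebr_integral_gaussianReal g x (ne_of_gt ht)]
  by_cases hgood : ∃ x₀ : ℝ, ∃ t₀ : ℝ≥0, 0 < t₀ ∧
      Integrable (fun y => g y * gaussianPDFReal x₀ t₀ y)
  swap
  · -- degenerate case : g ≡ 0
    push_neg at hgood
    have hg0 : ∀ x, g x = 0 := by
      intro x
      have hz : (fun t : ℝ≥0 => rexp (-(α*t)) * ∫ y, g y * gaussianPDFReal x t y)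
          =ᶠ[nhdsWithin 0 (Ioi 0)] (fun _ => (0:ℝ)) := by
        filter_upwards [self_mem_nhdsWithin] with t ht
        rw [integral_undef (hgood x t ht), mul_zero]
      exact tendsto_nhds_unique ((hlim x).congr' hz) tendsto_const_nhds
    refine ⟨fun _ => 0, fun x _ => le_rfl, concaveOn_const 0 (convex_Ioi 0), fun x => by
      rw [hg0 x, mul_zero]⟩
  obtain ⟨x₀, t₀, ht₀, hint₀⟩ := hgood
  -- integrability below variance t₀
  have hIv : ∀ (x : ℝ) (v : ℝ≥0), 0 < v → v < t₀ →
      Integrable (fun y => g y * gaussianPDFReal x v y) := by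
    intro x v hv hvt
    obtain ⟨C, hC, hle⟩ := ebr_pdf_le hv hvt x₀ |x - x₀| (abs_nonneg _)
    apply Integrable.mono' (hint₀.const_mul C)
      (hmeas.mul (measurable_gaussianPDFReal x v)).aestronglyMeasurable
    filter_upwards with y
    rw [Real.norm_eq_abs, Pi.mul_apply,
      abs_of_nonneg (mul_nonneg (hnonneg y) (gaussianPDFReal_nonneg _ _ _))]
    calc g y * gaussianPDFReal x v y ≤ g y * (C * gaussianPDFReal x₀ t₀ y) :=
          mul_le_mul_of_nonneg_left (hle x y le_rfl) (hnonneg y)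
      _ = C * (g y * gaussianPDFReal x₀ t₀ y) := by ring
  -- lintegral machinery
  set J : ℝ≥0 → ℝ → ℝ≥0∞ :=
    fun v x => ∫⁻ y, ENNReal.ofReal (g y * gaussianPDFReal x v y) with hJdef
  have hnnpdf : ∀ (x : ℝ) (v : ℝ≥0), (0:ℝ → ℝ) ≤ᵐ[volume] fun y => g y * gaussianPDFReal x v y :=
    fun x v => Eventually.of_forall fun y =>
      mul_nonneg (hnonneg y) (gaussianPDFReal_nonneg _ _ _)
  have hJfin : ∀ (x : ℝ) (v : ℝ≥0), 0 < v → v < t₀ → J v x ≠ ⊤ := by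
    intro x v hv hvt
    exact ((hasFiniteIntegral_iff_ofReal (hnnpdf x v)).1
      (hIv x v hv hvt).hasFiniteIntegral).ne
  have hJval : ∀ (x : ℝ) (v : ℝ≥0),
      (∫ y, g y * gaussianPDFReal x v y) = (J v x).toReal := by
    intro x v
    exact integral_eq_lintegral_of_nonneg_ae (hnnpdf x v)
      (hmeas.mul (measurable_gaussianPDFReal x v)).aestronglyMeasurable
  have hJofReal : ∀ (x : ℝ) (v : ℝ≥0), 0 < v → v < t₀ →
      J v x = ENNReal.ofReal (∫ y, g y * gaussianPDFReal x v y) := by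
    intro x v hv hvt
    rw [ofReal_integral_eq_lintegral_ofReal (hIv x v hv hvt) (hnnpdf x v)]
  -- measurability of the two-variable kernel
  have hpairmeas : ∀ v : ℝ≥0, Measurable (fun p : ℝ × ℝ => gaussianPDFReal p.1 v p.2) := by
    intro v
    unfold gaussianPDFReal
    exact (((((measurable_snd.sub measurable_fst).pow_const 2).neg).div_const _).exp).const_mul _
  -- kernel Chapman-Kolmogorov (lintegral form)
  have hker : ∀ (x z : ℝ) (t s' : ℝ≥0), 0 < t → 0 < s' →
      (∫⁻ y, ENNReal.ofReal (gaussianPDFReal x t y) * ENNReal.ofReal (gaussianPDFReal y s' z))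
        = ENNReal.ofReal (gaussianPDFReal x (t + s') z) := by
    intro x z t s' ht hs'
    have heq : ∀ y : ℝ, ENNReal.ofReal (gaussianPDFReal x t y)
        * ENNReal.ofReal (gaussianPDFReal y s' z)
        = ENNReal.ofReal (gaussianPDFReal x t y * gaussianPDFReal y s' z) := fun y =>
      (ENNReal.ofReal_mul (gaussianPDFReal_nonneg _ _ _)).symm
    simp_rw [heq]
    rw [← ofReal_integral_eq_lintegral_ofReal (ebr_integrable_pdf_mul_pdf x z ht hs')
      (Eventually.of_forall fun y => mul_nonneg (gaussianPDFReal_nonneg _ _ _)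
        (gaussianPDFReal_nonneg _ _ _)), ebr_pdf_conv x z ht hs']
  -- Chapman-Kolmogorov for J
  have hCKL : ∀ (x : ℝ) (t s' : ℝ≥0), 0 < t → 0 < s' →
      J (t + s') x = ∫⁻ y, ENNReal.ofReal (gaussianPDFReal x t y) * J s' y := by
    intro x t s' ht hs'
    have hswap := lintegral_lintegral_swap (μ := volume) (ν := volume)
      (f := fun y z => ENNReal.ofReal (gaussianPDFReal x t y)
        * (ENNReal.ofReal (g z) * ENNReal.ofReal (gaussianPDFReal y s' z)))
      (by
        apply Measurable.aemeasurable
        refine Measurable.mul (f := fun p : ℝ × ℝ => ENNReal.ofReal (gaussianPDFReal x t p.1))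
          (g := fun p : ℝ × ℝ => ENNReal.ofReal (g p.2) * ENNReal.ofReal (gaussianPDFReal p.1 s' p.2)) ?_ ?_
        · exact ((measurable_gaussianPDFReal x t).comp measurable_fst).ennreal_ofReal
        · exact ((hmeas.comp measurable_snd).ennreal_ofReal.mul
            ((hpairmeas s').ennreal_ofReal)))
    calc J (t + s') x
        = ∫⁻ z, ENNReal.ofReal (g z) * ENNReal.ofReal (gaussianPDFReal x (t + s') z) := by
          simp_rw [hJdef, fun z => ENNReal.ofReal_mul (hnonneg z)]
      _ = ∫⁻ z, ENNReal.ofReal (g z) * ∫⁻ y, ENNReal.ofReal (gaussianPDFReal x t y)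
            * ENNReal.ofReal (gaussianPDFReal y s' z) := by
          simp_rw [fun z => hker x z t s' ht hs']
      _ = ∫⁻ z, ∫⁻ y, ENNReal.ofReal (gaussianPDFReal x t y)
            * (ENNReal.ofReal (g z) * ENNReal.ofReal (gaussianPDFReal y s' z)) := by
          apply lintegral_congr
          intro z
          rw [← lintegral_const_mul' _ _ ENNReal.ofReal_ne_top]
          apply lintegral_congr
          intro y
          ring
      _ = ∫⁻ y, ∫⁻ z, ENNReal.ofReal (gaussianPDFReal x t y)
            * (ENNReal.ofReal (g z) * ENNReal.ofReal (gaussianPDFReal y s' z)) := hswap.symm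
      _ = ∫⁻ y, ENNReal.ofReal (gaussianPDFReal x t y) * J s' y := by
          apply lintegral_congr
          intro y
          rw [lintegral_const_mul' _ _ ENNReal.ofReal_ne_top]
          congr 1
          simp_rw [hJdef, fun z => ENNReal.ofReal_mul (hnonneg z)]
  -- supermedian property for J
  have hJsuper : ∀ (x : ℝ) (t s' : ℝ≥0), 0 < t → 0 < s' → s' < t₀ →
      J (t + s') x ≤ ENNReal.ofReal (rexp (α * s')) * J t x := by
    intro x t s' ht hs' hst
    rw [hCKL x t s' ht hs']
    have hpt : ∀ y : ℝ, J s' y ≤ ENNReal.ofReal (rexp (α * s') * g y) := by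
      intro y
      rw [hJofReal y s' hs' hst]
      exact ENNReal.ofReal_le_ofReal (hexc s' hs' y)
    calc (∫⁻ y, ENNReal.ofReal (gaussianPDFReal x t y) * J s' y)
        ≤ ∫⁻ y, ENNReal.ofReal (gaussianPDFReal x t y)
            * ENNReal.ofReal (rexp (α * s') * g y) :=
          lintegral_mono fun y => mul_le_mul_right (hpt y) _
      _ = ∫⁻ y, ENNReal.ofReal (rexp (α * s'))
            * ENNReal.ofReal (g y * gaussianPDFReal x t y) := by
          apply lintegral_congr
          intro y
          rw [ENNReal.ofReal_mul (Real.exp_pos _).le, ENNReal.ofReal_mul (hnonneg y)]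
          ring
      _ = ENNReal.ofReal (rexp (α * s')) * J t x := by
          rw [lintegral_const_mul (f := fun y => ENNReal.ofReal (g y * gaussianPDFReal x t y)) _ (hmeas.mul (measurable_gaussianPDFReal x t)).ennreal_ofReal]
  -- the regularized functions H t
  set H : ℝ≥0 → ℝ → ℝ :=
    fun t x => rexp (-(α*t)) * ∫ y, g y * gaussianPDFReal x t y with hHdef
  have hHnn : ∀ (t : ℝ≥0) (x : ℝ), 0 ≤ H t x := by
    intro t x
    apply mul_nonneg (Real.exp_pos _).le
    exact integral_nonneg fun y => mul_nonneg (hnonneg y) (gaussianPDFReal_nonneg _ _ _)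
  -- continuity of H t
  have hHcont : ∀ t : ℝ≥0, 0 < t → t < t₀ → Continuous (H t) := by
    intro t ht htt
    apply continuous_const.mul
    rw [continuous_iff_continuousAt]
    intro x₁
    set w : ℝ≥0 := (t + t₀)/2 with hwdef
    have hw1 : t < w := by
      rw [← NNReal.coe_lt_coe]
      push_cast [hwdef]
      rw [← NNReal.coe_lt_coe] at htt
      linarith
    have hw2 : w < t₀ := by
      rw [← NNReal.coe_lt_coe]
      push_cast [hwdef]
      rw [← NNReal.coe_lt_coe] at htt
      linarith
    obtain ⟨C, hC, hle⟩ := ebr_pdf_le ht hw1 x₁ 1 zero_le_one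
    apply continuousAt_of_dominated (bound := fun y => C * (g y * gaussianPDFReal x₁ w y))
    · filter_upwards with x
      exact (hmeas.mul (measurable_gaussianPDFReal x t)).aestronglyMeasurable
    · filter_upwards [Metric.ball_mem_nhds x₁ one_pos] with x hx
      filter_upwards with y
      rw [Real.norm_eq_abs,
        abs_of_nonneg (mul_nonneg (hnonneg y) (gaussianPDFReal_nonneg _ _ _))]
      have hxx₁ : |x - x₁| ≤ 1 := by
        rw [Metric.mem_ball, Real.dist_eq] at hx
        exact hx.le
      calc g y * gaussianPDFReal x t y ≤ g y * (C * gaussianPDFReal x₁ w y) :=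
            mul_le_mul_of_nonneg_left (hle x y hxx₁) (hnonneg y)
        _ = C * (g y * gaussianPDFReal x₁ w y) := by ring
    · exact (hIv x₁ w (lt_trans ht hw1) hw2).const_mul C
    · filter_upwards with y
      apply Continuous.continuousAt
      apply Continuous.mul continuous_const
      unfold gaussianPDFReal
      fun_prop
  -- the time window
  set τ : ℝ≥0 := t₀/2 with hτdef
  have hτ : 0 < τ := by
    rw [← NNReal.coe_lt_coe]
    push_cast [hτdef]
    rw [← NNReal.coe_lt_coe] at ht₀
    push_cast at ht₀
    linarith
  have hττ : τ < t₀ := NNReal.half_lt_self ht₀.ne'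
  have hsum : ∀ s t : ℝ≥0, s < τ → t < τ → s + t < t₀ := by
    intro s t hs ht
    rw [← NNReal.coe_lt_coe] at hs ht ⊢
    push_cast [hτdef] at hs ht ⊢
    linarith
  -- integrability and value of ∫ H t y pdf x s y
  have hHint : ∀ (t : ℝ≥0), 0 < t → t < τ → ∀ (x : ℝ) (s : ℝ≥0), 0 < s → s < τ →
      Integrable (fun y => H t y * gaussianPDFReal x s y) ∧
      (∫ y, H t y * gaussianPDFReal x s y) = rexp (-(α*t)) * (J (s + t) x).toReal := by
    intro t ht htτ x s hs hsτ
    have htt₀ : t < t₀ := lt_trans htτ hττ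
    have hstt₀ : s + t < t₀ := hsum s t hsτ htτ
    have hHmeas : Measurable (H t) := by
      have := hHcont t ht htt₀
      exact this.measurable
    have hnnH : (0:ℝ → ℝ) ≤ᵐ[volume] fun y => H t y * gaussianPDFReal x s y :=
      Eventually.of_forall fun y => mul_nonneg (hHnn t y) (gaussianPDFReal_nonneg _ _ _)
    have key : (∫⁻ y, ENNReal.ofReal (H t y * gaussianPDFReal x s y))
        = ENNReal.ofReal (rexp (-(α*t))) * J (s + t) x := by
      have heq : ∀ y : ℝ, ENNReal.ofReal (H t y * gaussianPDFReal x s y)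
          = ENNReal.ofReal (rexp (-(α*t))) * (ENNReal.ofReal (gaussianPDFReal x s y) * J t y) := by
        intro y
        have h1 : H t y * gaussianPDFReal x s y
            = rexp (-(α*t)) * (gaussianPDFReal x s y * (∫ z, g z * gaussianPDFReal y t z)) := by
          rw [hHdef]; ring
        rw [h1, ENNReal.ofReal_mul (Real.exp_pos _).le,
          ENNReal.ofReal_mul (gaussianPDFReal_nonneg _ _ _), hJval y t,
          ENNReal.ofReal_toReal (hJfin y t ht htt₀)]
      simp_rw [heq]
      rw [lintegral_const_mul' _ _ ENNReal.ofReal_ne_top, ← hCKL x s t hs ht]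
    have hfin : (∫⁻ y, ENNReal.ofReal (H t y * gaussianPDFReal x s y)) ≠ ⊤ := by
      rw [key]
      exact ENNReal.mul_ne_top ENNReal.ofReal_ne_top (hJfin x (s+t) (by positivity) hstt₀)
    constructor
    · refine ⟨(hHmeas.mul (measurable_gaussianPDFReal x s)).aestronglyMeasurable, ?_⟩
      rw [hasFiniteIntegral_iff_ofReal hnnH]
      exact hfin.lt_top
    · rw [integral_eq_lintegral_of_nonneg_ae hnnH
        (hHmeas.mul (measurable_gaussianPDFReal x s)).aestronglyMeasurable, key,
        ENNReal.toReal_mul, ENNReal.toReal_ofReal (Real.exp_pos _).le]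
  -- supermedian property of H t
  have hHsuper : ∀ (t : ℝ≥0), 0 < t → t < τ → ∀ (x : ℝ) (s : ℝ≥0), 0 < s → s < τ →
      rexp (-(α*s)) * (∫ y, H t y * gaussianPDFReal x s y) ≤ H t x := by
    intro t ht htτ x s hs hsτ
    rw [(hHint t ht htτ x s hs hsτ).2]
    have htt₀ : t < t₀ := lt_trans htτ hττ
    have hst : s + t = t + s := add_comm s t
    have h1 : J (s + t) x ≤ ENNReal.ofReal (rexp (α * s)) * J t x := by
      rw [hst]
      exact hJsuper x t s ht hs (lt_trans hsτ hττ)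
    have h2 : (J (s + t) x).toReal ≤ rexp (α * s) * (J t x).toReal := by
      have := ENNReal.toReal_mono (ENNReal.mul_ne_top ENNReal.ofReal_ne_top
        (hJfin x t ht htt₀)) h1
      rwa [ENNReal.toReal_mul, ENNReal.toReal_ofReal (Real.exp_pos _).le] at this
    have h3 : H t x = rexp (-(α*t)) * (J t x).toReal := by
      rw [hHdef]
      simp only
      rw [hJval x t]
    rw [h3]
    calc rexp (-(α*s)) * (rexp (-(α*t)) * (J (s+t) x).toReal)
        ≤ rexp (-(α*s)) * (rexp (-(α*t)) * (rexp (α * s) * (J t x).toReal)) := by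
          apply mul_le_mul_of_nonneg_left _ (Real.exp_pos _).le
          apply mul_le_mul_of_nonneg_left h2 (Real.exp_pos _).le
      _ = (rexp (-(α*s)) * rexp (α * s)) * (rexp (-(α*t)) * (J t x).toReal) := by ring
      _ = rexp (-(α*t)) * (J t x).toReal := by
          rw [← Real.exp_add]
          simp
  -- the interpolation inequality for g
  have hstar : ∀ a b : ℝ, a < b → ∃ A B : ℝ,
      (A * rexp (γ*a) + B * rexp (-(γ*a)) = g a) ∧
      (A * rexp (γ*b) + B * rexp (-(γ*b)) = g b) ∧
      ∀ x ∈ Icc a b, A * rexp (γ*x) + B * rexp (-(γ*x)) ≤ g x := by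
    intro a b hab
    set u : ℝ := rexp (γ*a) with hudef
    set U : ℝ := rexp (γ*b) with hUdef
    have hu : 0 < u := Real.exp_pos _
    have hU : 0 < U := Real.exp_pos _
    have huU : u < U := by
      rw [hudef, hUdef]
      exact Real.exp_lt_exp.2 (mul_lt_mul_of_pos_left hab hγ)
    have hdenom : U^2 - u^2 ≠ 0 := by
      have hsq : u^2 < U^2 := by
        have h1 : u * u < U * U := mul_lt_mul'' huU huU hu.le hu.le
        calc u^2 = u * u := sq u
          _ < U * U := h1
          _ = U^2 := (sq U).symm
      exact sub_ne_zero.2 hsq.ne'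
    set Af : ℝ → ℝ → ℝ := fun p q => (q*U - p*u)/(U^2 - u^2) with hAfdef
    set Bf : ℝ → ℝ → ℝ := fun p q => (p - Af p q * u) * u with hBfdef
    have hsolve1 : ∀ p q : ℝ, Af p q * u + Bf p q * u⁻¹ = p := by
      intro p q
      simp only [hAfdef, hBfdef]
      field_simp
      ring
    have hsolve2 : ∀ p q : ℝ, Af p q * U + Bf p q * U⁻¹ = q := by
      intro p q
      simp only [hAfdef, hBfdef]
      field_simp
      ring
    have hexpnegu : rexp (-(γ*a)) = u⁻¹ := by rw [Real.exp_neg, hudef]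
    have hexpnegU : rexp (-(γ*b)) = U⁻¹ := by rw [Real.exp_neg, hUdef]
    -- the inequality for H t, t small
    have hts : ∀ t : ℝ≥0, t ∈ Ioo (0:ℝ≥0) τ → ∀ x ∈ Icc a b,
        Af (H t a) (H t b) * rexp (γ*x) + Bf (H t a) (H t b) * rexp (-(γ*x)) ≤ H t x := by
      intro t ht
      have h1 : Continuous (H t) := hHcont t ht.1 (lt_trans ht.2 hττ)
      exact ebr_max_principle α hα (H t) h1 (hHnn t) τ hτ
        (fun x s hs hsτ => (hHint t ht.1 ht.2 x s hs hsτ).1)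
        (fun x s hs hsτ => hHsuper t ht.1 ht.2 x s hs hsτ)
        (Af (H t a) (H t b)) (Bf (H t a) (H t b)) a b hab
        (by rw [← hγdef, hexpnegu, ← hudef]; exact (hsolve1 _ _).le)
        (by rw [← hγdef, hexpnegU, ← hUdef]; exact (hsolve2 _ _).le)
    refine ⟨Af (g a) (g b), Bf (g a) (g b), ?_, ?_, ?_⟩
    · rw [hexpnegu]; exact hsolve1 _ _
    · rw [hexpnegU]; exact hsolve2 _ _
    intro x hx
    have hHa : Tendsto (fun t : ℝ≥0 => H t a) (nhdsWithin 0 (Ioi 0)) (nhds (g a)) := hlim a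
    have hHb : Tendsto (fun t : ℝ≥0 => H t b) (nhdsWithin 0 (Ioi 0)) (nhds (g b)) := hlim b
    have hHx : Tendsto (fun t : ℝ≥0 => H t x) (nhdsWithin 0 (Ioi 0)) (nhds (g x)) := hlim x
    have hAften : Tendsto (fun t : ℝ≥0 => Af (H t a) (H t b)) (nhdsWithin 0 (Ioi 0))
        (nhds (Af (g a) (g b))) := by
      simp only [hAfdef]
      exact ((hHb.mul_const U).sub (hHa.mul_const u)).div_const _
    have hBften : Tendsto (fun t : ℝ≥0 => Bf (H t a) (H t b)) (nhdsWithin 0 (Ioi 0))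
        (nhds (Bf (g a) (g b))) := by
      simp only [hBfdef]
      exact ((hHa.sub (((hHb.mul_const U).sub (hHa.mul_const u)).div_const _ |>.mul_const u)).mul_const u)
    apply le_of_tendsto_of_tendsto
      ((hAften.mul_const (rexp (γ*x))).add (hBften.mul_const (rexp (-(γ*x))))) hHx
    filter_upwards [Ioo_mem_nhdsGT hτ] with t ht
    exact hts t ht x hx
  -- definition of W and conclusion
  set W : ℝ → ℝ := fun r => Real.sqrt r * g (Real.log r / (2*γ)) with hWdef
  have hWnn : ∀ r ∈ Ioi (0:ℝ), 0 ≤ W r := fun r _ =>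
    mul_nonneg (Real.sqrt_nonneg r) (hnonneg _)
  -- basic exp facts
  have hsqrt_exp : ∀ z : ℝ, Real.sqrt (rexp (2*γ*z)) = rexp (γ*z) := by
    intro z
    rw [show 2*γ*z = (γ*z) + (γ*z) by ring, Real.exp_add, Real.sqrt_mul_self (Real.exp_pos _).le]
  have hlog_exp : ∀ z : ℝ, Real.log (rexp (2*γ*z)) / (2*γ) = z := by
    intro z
    rw [Real.log_exp]
    field_simp
  have hWexp : ∀ z : ℝ, W (rexp (2*γ*z)) = rexp (γ*z) * g z := by
    intro z
    rw [hWdef]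
    simp only
    rw [hsqrt_exp z, hlog_exp z]
  -- the key concavity inequality
  have hkey : ∀ u v p q : ℝ, 0 < u → u < v → 0 < p → 0 < q → p + q = 1 →
      p * W u + q * W v ≤ W (p*u + q*v) := by
    intro u v p q hu huv hp hq hpq
    have hv0 : 0 < v := lt_trans hu huv
    set a : ℝ := Real.log u / (2*γ) with hadef
    set b : ℝ := Real.log v / (2*γ) with hbdef
    have hab : a < b := by
      rw [hadef, hbdef]
      have h := Real.log_lt_log hu huv
      gcongr
    have hexpa : rexp (2*γ*a) = u := by
      rw [hadef, show 2*γ*(Real.log u / (2*γ)) = Real.log u by field_simp, Real.exp_log hu]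
    have hexpb : rexp (2*γ*b) = v := by
      rw [hbdef, show 2*γ*(Real.log v / (2*γ)) = Real.log v by field_simp, Real.exp_log hv0]
    set w : ℝ := p*u + q*v with hwdef
    have hpu : p*u + q*u = u := by linear_combination u * hpq
    have hpv : p*v + q*v = v := by linear_combination v * hpq
    have huw : u < w := by
      have := mul_pos hq (sub_pos.2 huv)
      rw [hwdef]
      linarith
    have hwv : w < v := by
      have := mul_pos hp (sub_pos.2 huv)
      rw [hwdef]
      linarith
    have hw0 : 0 < w := lt_trans hu huw
    set x : ℝ := Real.log w / (2*γ) with hxdef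
    have hexpw : rexp (2*γ*x) = w := by
      rw [hxdef, show 2*γ*(Real.log w / (2*γ)) = Real.log w by field_simp, Real.exp_log hw0]
    have hx : x ∈ Icc a b := by
      constructor
      · rw [hadef, hxdef]
        have h := Real.log_le_log hu huw.le
        gcongr
      · rw [hbdef, hxdef]
        have h := Real.log_le_log hw0 hwv.le
        gcongr
    obtain ⟨A, B, hma, hmb, hineq⟩ := hstar a b hab
    -- values of W in terms of A, B
    have hprod : ∀ z : ℝ, rexp (γ*z) * rexp (-(γ*z)) = 1 := by
      intro z
      rw [← Real.exp_add]
      simp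
    have hsq : ∀ z : ℝ, rexp (γ*z) * rexp (γ*z) = rexp (2*γ*z) := by
      intro z
      rw [← Real.exp_add]
      congr 1
      ring
    have hWu : W u = A * u + B := by
      rw [← hexpa, hWexp a, ← hma]
      linear_combination A * hsq a + B * hprod a
    have hWv : W v = A * v + B := by
      rw [← hexpb, hWexp b, ← hmb]
      linear_combination A * hsq b + B * hprod b
    have hWw : A * w + B ≤ W w := by
      rw [← hexpw, hWexp x]
      have h1 := hineq x hx
      have h2 : rexp (γ*x) * (A * rexp (γ*x) + B * rexp (-(γ*x))) ≤ rexp (γ*x) * g x :=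
        mul_le_mul_of_nonneg_left h1 (Real.exp_pos _).le
      calc A * rexp (2*γ*x) + B
          = rexp (γ*x) * (A * rexp (γ*x) + B * rexp (-(γ*x))) := by
            linear_combination (-A) * hsq x + (-B) * hprod x
        _ ≤ rexp (γ*x) * g x := h2
    have hcomb : p * W u + q * W v = A * w + B := by
      rw [hWu, hWv, hwdef]
      linear_combination B * hpq
    rw [hcomb]
    exact hWw
  refine ⟨W, hWnn, ⟨convex_Ioi 0, ?_⟩, ?_⟩
  · intro r hr r' hr' p q hp hq hpq
    simp only [smul_eq_mul]
    rcases eq_or_lt_of_le hp with hp0 | hp0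
    · rw [← hp0] at hpq ⊢
      simp only [zero_mul, zero_add, one_mul] at *
      rw [hpq]
      simp
    rcases eq_or_lt_of_le hq with hq0 | hq0
    · rw [← hq0] at hpq ⊢
      simp only [mul_zero, add_zero, zero_mul] at *
      rw [hpq]
      simp
    rcases lt_trichotomy r r' with hrr | hrr | hrr
    · exact hkey r r' p q hr hrr hp0 hq0 hpq
    · rw [hrr, show p * W r' + q * W r' = W r' by linear_combination (W r') * hpq,
        show p * r' + q * r' = r' by linear_combination r' * hpq]
    · have := hkey r' r q p hr' hrr hq0 hp0 (by linarith)
      calc p * W r + q * W r' = q * W r' + p * W r := by ring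
        _ ≤ W (q * r' + p * r) := this
        _ = W (p * r + q * r') := by rw [add_comm]
  · intro x
    have h1 : W (rexp (2*γ*x)) = rexp (γ*x) * g x := hWexp x
    rw [h1, ← mul_assoc, ← Real.exp_add, show -γ*x + γ*x = 0 by ring, Real.exp_zero,
      one_mul]
end

section
/- Let σ be a Borel probability measure on [0,∞) with mean m := ∫ u dσ(u) ∈ (0,∞), and define c(r) = (∫ |u − r| dσ(u) + r + m)/2. Then for every s ∈ (0,m), the set of minimizers M(s) := argmin_{r>0} (c(r) − s)/r is nonempty and bounded, and the minimum value φ(s) := min_{r>0} (c(r) − s)/r satisfies 0 < φ(s) < 1. -/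
open MeasureTheory Set Filter

/-- For `s ∈ (0,m)`, the set of minimizers of `r ↦ (c(r) − s)/r` over `r > 0` is
nonempty and bounded, and the minimum value `φ(s)` lies in `(0,1)`. Here
`c(r) = (∫ |u − r| dσ(u) + r + m)/2` is the potential function of a probability
measure `σ` on `[0,∞)` with mean `m ∈ (0,∞)`. -/
theorem potential_tangent_minimizers (σ : Measure ℝ) [IsProbabilityMeasure σ]
    (hsupp : σ (Set.Iio 0) = 0)
    (hint : Integrable (fun u : ℝ => u) σ)
    (m : ℝ) (hm : m = ∫ u, u ∂σ) (hmpos : 0 < m)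
    (c : ℝ → ℝ) (hc : ∀ r, c r = ((∫ u, |u - r| ∂σ) + r + m) / 2)
    (s : ℝ) (hs : s ∈ Set.Ioo 0 m)
    (M : Set ℝ)
    (hM : M = {r : ℝ | 0 < r ∧ ∀ r' : ℝ, 0 < r' → (c r - s) / r ≤ (c r' - s) / r'}) :
    M.Nonempty ∧ Bornology.IsBounded M ∧
      ∀ r ∈ M, 0 < (c r - s) / r ∧ (c r - s) / r < 1 := by
  obtain ⟨hs0, hsm⟩ := hs
  set g : ℝ → ℝ := fun r => ∫ u, max (u - r) 0 ∂σ with hgdef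
  have hsubint : ∀ r : ℝ, Integrable (fun u : ℝ => u - r) σ := fun r =>
    hint.sub (integrable_const r)
  have hintg : ∀ r : ℝ, Integrable (fun u => max (u - r) 0) σ := fun r =>
    (hsubint r).pos_part
  have hintsum : ∀ r : ℝ, Integrable (fun u => max (u - r) 0 + r) σ := fun r =>
    (hintg r).add (integrable_const r)
  -- integral of (u - r)
  have hintval : ∀ r : ℝ, (∫ u, (u - r) ∂σ) = m - r := by
    intro r
    have h := integral_sub hint (integrable_const r)
    rw [integral_const, probReal_univ, ← hm] at h
    simpa using h
  -- c r = g r + r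
  have hcg : ∀ r : ℝ, c r = g r + r := by
    intro r
    have hpt : (fun u : ℝ => |u - r|) = fun u => 2 * max (u - r) 0 - (u - r) := by
      funext u
      rcases le_total (u - r) 0 with h | h
      · rw [abs_of_nonpos h, max_eq_right h]; ring
      · rw [abs_of_nonneg h, max_eq_left h]; ring
    have h1 : (∫ u, |u - r| ∂σ) = 2 * g r - (m - r) := by
      rw [hpt, integral_sub ((hintg r).const_mul 2) (hsubint r), integral_const_mul,
        hintval r]
    rw [hc, h1]; ring
  have hg0 : ∀ r : ℝ, 0 ≤ g r := fun r =>
    integral_nonneg fun u => le_max_right _ _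
  -- m ≤ c r
  have hcm : ∀ r : ℝ, m ≤ c r := by
    intro r
    have h2 : m ≤ ∫ u, (max (u - r) 0 + r) ∂σ := by
      rw [hm]
      apply integral_mono hint (hintsum r)
      intro u
      have := le_max_left (u - r) 0
      dsimp only
      linarith
    rw [integral_add (hintg r) (integrable_const r), integral_const, probReal_univ] at h2
    rw [hcg]
    simpa using h2
  -- g is 1-Lipschitz
  have hlip : LipschitzWith 1 g := by
    apply LipschitzWith.of_dist_le_mul
    intro r₁ r₂
    rw [Real.dist_eq, Real.dist_eq, NNReal.coe_one, one_mul]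
    have hsub : g r₁ - g r₂ = ∫ u, (max (u - r₁) 0 - max (u - r₂) 0) ∂σ := by
      rw [integral_sub (hintg r₁) (hintg r₂)]
    rw [hsub]
    calc |∫ u, (max (u - r₁) 0 - max (u - r₂) 0) ∂σ|
        ≤ ∫ u, |max (u - r₁) 0 - max (u - r₂) 0| ∂σ := by
          simpa [Real.norm_eq_abs] using
            norm_integral_le_integral_norm (fun u => max (u - r₁) 0 - max (u - r₂) 0) (μ := σ)
      _ ≤ ∫ u, |r₁ - r₂| ∂σ := by
          apply integral_mono ((hintg r₁).sub (hintg r₂)).abs (integrable_const _)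
          intro u
          dsimp only
          calc |max (u - r₁) 0 - max (u - r₂) 0| ≤ |(u - r₁) - (u - r₂)| :=
                abs_max_sub_max_le_abs _ _ _
            _ = |r₁ - r₂| := by
                rw [show (u - r₁) - (u - r₂) = -(r₁ - r₂) by ring, abs_neg]
      _ = |r₁ - r₂| := by simp
  have hcontc : Continuous c := by
    have hceq : c = fun r => g r + r := funext hcg
    rw [hceq]
    exact hlip.continuous.add continuous_id
  -- g tends to 0 at infinity
  have htend : Tendsto g atTop (nhds 0) := by
    have h0 : (0 : ℝ) = ∫ _u, (0 : ℝ) ∂σ := by simp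
    rw [h0]
    apply tendsto_integral_filter_of_dominated_convergence (fun u => |u|)
    · exact Eventually.of_forall fun r => (hintg r).aestronglyMeasurable
    · filter_upwards [eventually_ge_atTop (0 : ℝ)] with r hr
      apply Eventually.of_forall
      intro u
      rw [Real.norm_eq_abs, abs_of_nonneg (le_max_right _ _)]
      rcases le_total (u - r) 0 with h | h
      · rw [max_eq_right h]; exact abs_nonneg u
      · rw [max_eq_left h]
        have := le_abs_self u
        linarith
    · exact hint.abs
    · apply Eventually.of_forall
      intro u
      have hev : ∀ᶠ r in atTop, (fun _ : ℝ => (0 : ℝ)) r = max (u - r) 0 := by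
        filter_upwards [eventually_ge_atTop u] with r hr
        exact (max_eq_right (by linarith)).symm
      exact tendsto_const_nhds.congr' hev
  -- choose R with g R < s
  have hgev : ∀ᶠ r in atTop, g r < s := htend.eventually (eventually_lt_nhds hs0)
  obtain ⟨R, hgR, hR1⟩ := (hgev.and (eventually_ge_atTop (1 : ℝ))).exists
  have hRpos : (0 : ℝ) < R := lt_of_lt_of_le one_pos hR1
  set fR : ℝ := (c R - s) / R with hfRdef
  have hfRpos : 0 < fR := by
    apply div_pos _ hRpos
    have := hcm R
    linarith
  have hfR1 : fR < 1 := by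
    rw [hfRdef, div_lt_one hRpos, hcg]
    linarith
  -- lower bounds for f
  have hlow1 : ∀ r : ℝ, 0 < r → 1 - s / r ≤ (c r - s) / r := by
    intro r hr
    have h5 : (r - s) / r ≤ (c r - s) / r := by
      apply (div_le_div_iff_of_pos_right hr).mpr
      have := hg0 r
      rw [hcg]
      linarith
    have h6 : (r - s) / r = 1 - s / r := by
      field_simp
    linarith
  have hlow2 : ∀ r : ℝ, 0 < r → (m - s) / r ≤ (c r - s) / r := by
    intro r hr
    apply (div_le_div_iff_of_pos_right hr).mpr
    have := hcm r
    linarith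
  set b0 : ℝ := s / (1 - fR) with hb0def
  set b : ℝ := b0 + 1 with hbdef
  have h1fR : 0 < 1 - fR := by linarith
  have hb0pos : 0 < b0 := div_pos hs0 h1fR
  -- for r > b0, f r > fR
  have hbig : ∀ r : ℝ, b0 < r → fR < (c r - s) / r := by
    intro r hr
    have hrpos : 0 < r := lt_trans hb0pos hr
    have h7 : s < r * (1 - fR) := (div_lt_iff₀ h1fR).mp hr
    have h8 : s / r < 1 - fR := (div_lt_iff₀ hrpos).mpr (by nlinarith)
    have h9 : fR < 1 - s / r := by linarith
    exact lt_of_lt_of_le h9 (hlow1 r hrpos)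
  -- R ≤ b0
  have hRb0 : R ≤ b0 := by
    rw [hb0def, le_div_iff₀ h1fR]
    have h9 := hlow1 R hRpos
    rw [← hfRdef] at h9
    have h12 : (1 - fR) ≤ s / R := by linarith
    calc R * (1 - fR) ≤ R * (s / R) :=
          mul_le_mul_of_nonneg_left h12 (le_of_lt hRpos)
      _ = s := by field_simp
  -- a : lower end of the compact interval
  set a : ℝ := min R ((m - s) / (fR + 1)) with hadef
  have hapos : 0 < a := lt_min hRpos (div_pos (by linarith) (by linarith))
  have hsmall : ∀ r : ℝ, 0 < r → r < a → fR < (c r - s) / r := by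
    intro r hrpos hra
    have hra2 : r < (m - s) / (fR + 1) := lt_of_lt_of_le hra (min_le_right _ _)
    have h13 : r * (fR + 1) < m - s := (lt_div_iff₀ (by linarith)).mp hra2
    have h14 : fR < (m - s) / r := by
      rw [lt_div_iff₀ hrpos]
      nlinarith
    exact lt_of_lt_of_le h14 (hlow2 r hrpos)
  have haR : a ≤ R := min_le_left _ _
  have hRb : R ≤ b := by rw [hbdef]; linarith
  have hab : a ≤ b := le_trans haR hRb
  -- minimize on the compact interval [a, b]
  have hfcont : ContinuousOn (fun r => (c r - s) / r) (Icc a b) := by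
    apply ContinuousOn.div ((hcontc.sub continuous_const).continuousOn) continuousOn_id
    intro x hx
    exact ne_of_gt (lt_of_lt_of_le hapos hx.1)
  obtain ⟨r₀, hr₀mem, hminon⟩ :=
    isCompact_Icc.exists_isMinOn ⟨R, haR, hRb⟩ hfcont
  have hr₀pos : 0 < r₀ := lt_of_lt_of_le hapos hr₀mem.1
  have hmin : ∀ y ∈ Icc a b, (c r₀ - s) / r₀ ≤ (c y - s) / y := fun y hy => hminon hy
  have hr₀R : (c r₀ - s) / r₀ ≤ fR := hmin R ⟨haR, hRb⟩
  -- r₀ is a global minimizer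
  have hglob : ∀ r' : ℝ, 0 < r' → (c r₀ - s) / r₀ ≤ (c r' - s) / r' := by
    intro r' hr'
    rcases lt_or_ge r' a with h | h
    · exact le_of_lt (lt_of_le_of_lt hr₀R (hsmall r' hr' h))
    rcases le_or_gt r' b with h2 | h2
    · exact hmin r' ⟨h, h2⟩
    · have hbr : b0 < r' := by rw [hbdef] at h2; linarith
      exact le_of_lt (lt_of_le_of_lt hr₀R (hbig r' hbr))
  have hr₀M : r₀ ∈ M := by
    rw [hM]
    exact ⟨hr₀pos, hglob⟩
  refine ⟨⟨r₀, hr₀M⟩, ?_, ?_⟩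
  · -- boundedness
    apply (Metric.isBounded_Icc 0 b).subset
    intro r hr
    rw [hM] at hr
    obtain ⟨hrpos, hrmin⟩ := hr
    refine ⟨le_of_lt hrpos, ?_⟩
    by_contra hcon
    push_neg at hcon
    have hb0r : b0 < r := by rw [hbdef] at hcon; linarith
    have h15 := hbig r hb0r
    have h16 := hrmin R hRpos
    rw [← hfRdef] at h16
    linarith
  · intro r hr
    rw [hM] at hr
    obtain ⟨hrpos, hrmin⟩ := hr
    constructor
    · apply div_pos _ hrpos
      have := hcm r
      linarith
    · have h17 := hrmin R hRpos
      rw [← hfRdef] at h17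
      linarith
end

section
/- Let σ be a Borel probability measure on [0,∞) with mean m := ∫ u dσ(u) ∈ (0,∞), define c(r) = (∫ |u − r| dσ(u) + r + m)/2, and for s ∈ (0,m) set φ(s) := min_{r>0} (c(r) − s)/r and ζ(s) := sup{r > 0 : (c(r) − s)/r = φ(s)}. Then φ is non-increasing on (0,m), and for every s ∈ (0,m) and every δ ∈ (0,s) one has φ(s − δ) ≤ φ(s) + δ/ζ(s); in particular, φ is Lipschitz on every closed subinterval of (0,m). -/
open MeasureTheory Set Filter
open Topology

/-- Lemma 5.4 (regularity part): with `c` the potential function of a probability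
measure `σ` on `[0,∞)` with mean `m ∈ (0,∞)`, `φ(s) = min_{r>0} (c(r) − s)/r` and
`ζ(s)` the largest minimizer, the function `φ` is non-increasing on `(0,m)`,
satisfies `φ(s − δ) ≤ φ(s) + δ/ζ(s)` for `0 < δ < s < m`, and is Lipschitz on every
closed subinterval of `(0,m)`. -/
theorem tangent_gradient_lipschitz (σ : Measure ℝ) [IsProbabilityMeasure σ]
    (hsupp : σ (Set.Iio 0) = 0)
    (hint : Integrable (fun u : ℝ => u) σ)
    (m : ℝ) (hm : m = ∫ u, u ∂σ) (hmpos : 0 < m)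
    (c : ℝ → ℝ) (hc : ∀ r, c r = ((∫ u, |u - r| ∂σ) + r + m) / 2)
    (φ ζ : ℝ → ℝ)
    (hφ : ∀ s ∈ Set.Ioo 0 m,
      IsLeast ((fun r => (c r - s) / r) '' Set.Ioi 0) (φ s))
    (hζ : ∀ s ∈ Set.Ioo 0 m,
      ζ s = sSup {r : ℝ | 0 < r ∧ (c r - s) / r = φ s}) :
    AntitoneOn φ (Set.Ioo 0 m) ∧
    (∀ s ∈ Set.Ioo 0 m, ∀ δ ∈ Set.Ioo 0 s, φ (s - δ) ≤ φ s + δ / ζ s) ∧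
    (∀ a b : ℝ, 0 < a → a ≤ b → b < m →
      ∃ K : NNReal, LipschitzOnWith K φ (Set.Icc a b)) := by
  -- the "excess" function E r = ∫ (u - r)⁺
  have hintsub : ∀ r : ℝ, Integrable (fun u : ℝ => u - r) σ :=
    fun r => hint.sub (integrable_const r)
  have hEint : ∀ r : ℝ, Integrable (fun u : ℝ => max (u - r) 0) σ :=
    fun r => (hintsub r).pos_part
  set E : ℝ → ℝ := fun r => ∫ u, max (u - r) 0 ∂σ with hE
  have hEnonneg : ∀ r, 0 ≤ E r := fun r =>
    integral_nonneg fun u => le_max_right _ _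
  have hsubint : ∀ r : ℝ, ∫ u, (u - r) ∂σ = m - r := by
    intro r
    rw [integral_sub hint (integrable_const r), integral_const]
    simp [hm]
  have hcE : ∀ r, c r = r + E r := by
    intro r
    have habs : ∀ u : ℝ, |u - r| = (r - u) + 2 * max (u - r) 0 := by
      intro u
      rcases le_total u r with h | h
      · rw [abs_of_nonpos (by linarith), max_eq_right (by linarith)]; ring
      · rw [abs_of_nonneg (by linarith), max_eq_left (by linarith)]; ring
    have hiabs : ∫ u, |u - r| ∂σ = (r - m) + 2 * E r := by
      calc ∫ u, |u - r| ∂σ = ∫ u, ((r - u) + 2 * max (u - r) 0) ∂σ := by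
            simp_rw [habs]
        _ = (∫ u, (r - u) ∂σ) + ∫ u, 2 * max (u - r) 0 ∂σ :=
            integral_add ((integrable_const r).sub hint) ((hEint r).const_mul 2)
        _ = (r - m) + 2 * E r := by
            rw [integral_const_mul]
            have : ∫ u, (r - u) ∂σ = r - m := by
              rw [integral_sub (integrable_const r) hint, integral_const]
              simp [hm]
            rw [this]
    rw [hc r, hiabs]; ring
  have hclb : ∀ r, m - r ≤ E r := by
    intro r
    rw [← hsubint r]
    exact integral_mono (hintsub r) (hEint r) fun u => le_max_left _ _
  have hcm : ∀ r, m ≤ c r := by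
    intro r; rw [hcE r]; linarith [hclb r]
  have hcr : ∀ r, r ≤ c r := by
    intro r; rw [hcE r]; linarith [hEnonneg r]
  -- E n → 0 along ℕ
  have hEtend : Tendsto (fun n : ℕ => E (n : ℝ)) atTop (𝓝 0) := by
    have h := tendsto_integral_of_dominated_convergence (μ := σ)
      (F := fun n : ℕ => fun u : ℝ => max (u - (n : ℝ)) 0)
      (f := fun _ : ℝ => (0 : ℝ)) (bound := fun u => |u|)
      (fun n => (hEint (n : ℝ)).aestronglyMeasurable)
      hint.abs
      (fun n => ae_of_all _ fun u => by
        show ‖max (u - (n : ℝ)) 0‖ ≤ |u|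
        rw [Real.norm_eq_abs, abs_of_nonneg (le_max_right _ _)]
        rcases le_total (u - (n : ℝ)) 0 with h | h
        · rw [max_eq_right h]; exact abs_nonneg u
        · rw [max_eq_left h]
          have : (0 : ℝ) ≤ (n : ℝ) := Nat.cast_nonneg n
          have := le_abs_self u
          linarith)
      (ae_of_all _ fun u => by
        show Filter.Tendsto (fun n : ℕ => max (u - (n : ℝ)) 0) atTop (nhds 0)
        have hev : ∀ᶠ n : ℕ in atTop, max (u - (n : ℝ)) 0 = 0 := by
          obtain ⟨N, hN⟩ := exists_nat_ge u
          filter_upwards [eventually_ge_atTop N] with n hn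
          have : (N : ℝ) ≤ (n : ℝ) := Nat.cast_le.mpr hn
          exact max_eq_right (by linarith)
        exact Tendsto.congr' (hev.mono fun n h => h.symm) tendsto_const_nhds)
    simpa using h
  have hsmall : ∀ s' : ℝ, 0 < s' → ∃ r : ℝ, 0 < r ∧ E r < s' := by
    intro s' hs'
    have h1 := hEtend.eventually_lt_const hs'
    obtain ⟨n, hn1, hn2⟩ := (h1.and (eventually_ge_atTop 1)).exists
    exact ⟨(n : ℝ), by exact_mod_cast Nat.lt_of_lt_of_le Nat.zero_lt_one hn2, hn1⟩
  -- basic facts about φ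
  have hφle : ∀ s ∈ Set.Ioo 0 m, ∀ r : ℝ, 0 < r → φ s ≤ (c r - s) / r :=
    fun s hs r hr => (hφ s hs).2 ⟨r, hr, rfl⟩
  have hφlt1 : ∀ s ∈ Set.Ioo 0 m, φ s < 1 := by
    intro s hs
    obtain ⟨r0, hr0, hEr0⟩ := hsmall s hs.1
    have h1 := hφle s hs r0 hr0
    have h2 : (c r0 - s) / r0 < 1 := by
      rw [div_lt_one hr0, hcE r0]; linarith
    linarith
  have hmin : ∀ s ∈ Set.Ioo 0 m, ∃ r : ℝ, 0 < r ∧ (c r - s) / r = φ s := by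
    intro s hs
    obtain ⟨r, hr, hre⟩ := (hφ s hs).1
    exact ⟨r, hr, hre⟩
  have hφpos : ∀ s ∈ Set.Ioo 0 m, 0 < φ s := by
    intro s hs
    obtain ⟨r, hr, hre⟩ := hmin s hs
    rw [← hre]
    exact div_pos (by linarith [hcm r, hs.2]) hr
  -- the minimizer set
  have hMub : ∀ s ∈ Set.Ioo 0 m, ∀ r ∈ {r : ℝ | 0 < r ∧ (c r - s) / r = φ s},
      r ≤ s / (1 - φ s) := by
    intro s hs r hrM
    obtain ⟨hr, hre⟩ := hrM
    have hmul : c r - s = φ s * r := (div_eq_iff (ne_of_gt hr)).mp hre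
    have h1 : φ s < 1 := hφlt1 s hs
    rw [le_div_iff₀ (by linarith)]
    have := hcr r
    nlinarith
  have hMbdd : ∀ s ∈ Set.Ioo 0 m,
      BddAbove {r : ℝ | 0 < r ∧ (c r - s) / r = φ s} :=
    fun s hs => ⟨s / (1 - φ s), fun r hr => hMub s hs r hr⟩
  have hζlb : ∀ s ∈ Set.Ioo 0 m, (m - s) / φ s ≤ ζ s ∧ 0 < ζ s := by
    intro s hs
    obtain ⟨r, hr, hre⟩ := hmin s hs
    have hrmem : r ∈ {r : ℝ | 0 < r ∧ (c r - s) / r = φ s} := ⟨hr, hre⟩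
    have hle : r ≤ ζ s := by
      rw [hζ s hs]; exact le_csSup (hMbdd s hs) hrmem
    have hmul : c r - s = φ s * r := (div_eq_iff (ne_of_gt hr)).mp hre
    have hrlb : (m - s) / φ s ≤ r := by
      rw [div_le_iff₀ (hφpos s hs)]
      have := hcm r
      nlinarith
    have hζpos : 0 < ζ s := lt_of_lt_of_le hr hle
    exact ⟨le_trans hrlb hle, hζpos⟩
  -- antitone
  have hAnti : AntitoneOn φ (Set.Ioo 0 m) := by
    intro s1 h1 s2 h2 h12
    obtain ⟨r, hr, hre⟩ := hmin s1 h1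
    have h3 := hφle s2 h2 r hr
    have h4 : (c r - s2) / r ≤ (c r - s1) / r := by gcongr
    rw [hre] at h4; linarith
  -- key inequality
  have hkey : ∀ s ∈ Set.Ioo 0 m, ∀ δ ∈ Set.Ioo 0 s, φ (s - δ) ≤ φ s + δ / ζ s := by
    intro s hs δ hδ
    have hsδ : s - δ ∈ Set.Ioo 0 m := ⟨by linarith [hδ.2], by linarith [hs.2, hδ.1]⟩
    have hζpos := (hζlb s hs).2
    by_cases hA : φ (s - δ) ≤ φ s
    · have : 0 ≤ δ / ζ s := div_nonneg (le_of_lt hδ.1) (le_of_lt hζpos)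
      linarith
    · push_neg at hA
      have hsup : ζ s ≤ δ / (φ (s - δ) - φ s) := by
        rw [hζ s hs]
        obtain ⟨r0, hr0, hre0⟩ := hmin s hs
        refine csSup_le ⟨r0, ⟨hr0, hre0⟩⟩ fun r hrM => ?_
        obtain ⟨hr, hre⟩ := hrM
        have h1 := hφle (s - δ) hsδ r hr
        have h2 : (c r - (s - δ)) / r = φ s + δ / r := by
          rw [← hre]; field_simp; ring
        rw [h2] at h1
        have h3 : φ (s - δ) - φ s ≤ δ / r := by linarith
        rw [le_div_iff₀ hr] at h3
        rw [le_div_iff₀ (by linarith)]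
        nlinarith
      rw [le_div_iff₀ (by linarith)] at hsup
      have h4 : φ (s - δ) - φ s ≤ δ / ζ s := by
        rw [le_div_iff₀ hζpos]; nlinarith
      linarith
  refine ⟨hAnti, hkey, ?_⟩
  -- Lipschitz part
  intro a b ha hab hbm
  have haIoo : a ∈ Set.Ioo 0 m := ⟨ha, lt_of_le_of_lt hab hbm⟩
  set ρ : ℝ := (m - b) / φ a with hρ
  have hρpos : 0 < ρ := div_pos (by linarith) (hφpos a haIoo)
  have hζs : ∀ s ∈ Set.Icc a b, ρ ≤ ζ s := by
    intro s hsI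
    have hsIoo : s ∈ Set.Ioo 0 m := ⟨lt_of_lt_of_le ha hsI.1, lt_of_le_of_lt hsI.2 hbm⟩
    have h1 : ρ ≤ (m - s) / φ s := by
      rw [hρ]
      exact div_le_div₀ (by linarith [hsIoo.2]) (by linarith [hsI.2]) (hφpos s hsIoo)
        (hAnti haIoo hsIoo hsI.1)
    exact h1.trans (hζlb s hsIoo).1
  refine ⟨⟨1 / ρ, by positivity⟩, ?_⟩
  apply LipschitzOnWith.of_dist_le_mul
  have hstep : ∀ x ∈ Set.Icc a b, ∀ y ∈ Set.Icc a b, x ≤ y →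
      dist (φ x) (φ y) ≤ (1 / ρ) * dist x y := by
    intro x hx y hy hxy
    rcases eq_or_lt_of_le hxy with rfl | hlt
    · simp
    · have hxIoo : x ∈ Set.Ioo 0 m := ⟨lt_of_lt_of_le ha hx.1, lt_of_le_of_lt hx.2 hbm⟩
      have hyIoo : y ∈ Set.Ioo 0 m := ⟨lt_of_lt_of_le ha hy.1, lt_of_le_of_lt hy.2 hbm⟩
      have hmono : φ y ≤ φ x := hAnti hxIoo hyIoo hxy
      have hδ : y - x ∈ Set.Ioo 0 y := ⟨by linarith, by linarith [hxIoo.1]⟩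
      have h1 := hkey y hyIoo (y - x) hδ
      have h2 : y - (y - x) = x := by ring
      rw [h2] at h1
      have hζy := hζs y hy
      have hζypos : 0 < ζ y := lt_of_lt_of_le hρpos hζy
      have h3 : (y - x) / ζ y ≤ (y - x) / ρ := div_le_div_of_nonneg_left (by linarith) hρpos hζy
      have h4 : φ x - φ y ≤ (y - x) / ρ := by linarith
      rw [Real.dist_eq, Real.dist_eq, abs_of_nonneg (by linarith : (0:ℝ) ≤ φ x - φ y),
        abs_of_nonpos (by linarith : x - y ≤ 0)]
      rw [div_eq_mul_inv] at h4
      calc φ x - φ y ≤ (y - x) * ρ⁻¹ := h4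
        _ = 1 / ρ * -(x - y) := by ring
  intro x hx y hy
  rcases le_total x y with h | h
  · have := hstep x hx y hy h
    exact this
  · have := hstep y hy x hx h
    rw [dist_comm (φ x) (φ y), dist_comm x y]
    exact this
end

section
/- Let σ be a Borel probability measure on [0,∞) with mean m := ∫ u dσ(u) ∈ (0,∞), define c(r) = (∫ |u − r| dσ(u) + r + m)/2, and for s ∈ (0,m) set φ(s) := min_{r>0} (c(r) − s)/r and ζ(s) := sup{r > 0 : (c(r) − s)/r = φ(s)}. Then for every s ∈ (0,m), φ(s) = 1 − ∫₀^s (1/ζ(u)) du. -/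
open MeasureTheory Set Filter
open Topology



private lemma aux_eq_zero_of_abs_le {D C : ℝ} (h : ∀ n : ℕ, |D| ≤ C / (n + 1)) : D = 0 := by
  have h1 : Tendsto (fun n : ℕ => ((n : ℝ) + 1)) atTop atTop :=
    tendsto_atTop_add_const_right _ _ tendsto_natCast_atTop_atTop
  have hC : Tendsto (fun n : ℕ => C / ((n : ℝ) + 1)) atTop (𝓝 0) :=
    Tendsto.div_atTop tendsto_const_nhds h1
  have : |D| ≤ 0 := ge_of_tendsto' hC h
  exact abs_eq_zero.mp (le_antisymm this (abs_nonneg D))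


/-- Lemma 5.4: with `c` the potential function of a probability measure `σ` on
`[0,∞)` with mean `m ∈ (0,∞)`, `φ(s) = min_{r>0} (c(r) − s)/r` and `ζ(s)` the
largest minimizer, one has `φ(s) = 1 − ∫₀^s du/ζ(u)` for every `s ∈ (0,m)`. -/
theorem tangent_gradient_integral_formula (σ : Measure ℝ) [IsProbabilityMeasure σ]
    (hsupp : σ (Set.Iio 0) = 0)
    (hint : Integrable (fun u : ℝ => u) σ)
    (m : ℝ) (hm : m = ∫ u, u ∂σ) (hmpos : 0 < m)
    (c : ℝ → ℝ) (hc : ∀ r, c r = ((∫ u, |u - r| ∂σ) + r + m) / 2)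
    (φ ζ : ℝ → ℝ)
    (hφ : ∀ s ∈ Set.Ioo 0 m,
      IsLeast ((fun r => (c r - s) / r) '' Set.Ioi 0) (φ s))
    (hζ : ∀ s ∈ Set.Ioo 0 m,
      ζ s = sSup {r : ℝ | 0 < r ∧ (c r - s) / r = φ s}) :
    ∀ s ∈ Set.Ioo 0 m, φ s = 1 - ∫ u in (0 : ℝ)..s, 1 / ζ u := by
  have hae : ∀ᵐ u ∂σ, 0 ≤ u := by
    rw [ae_iff]
    simp only [not_le]
    exact hsupp
  have hint_sub : ∀ r : ℝ, Integrable (fun u => u - r) σ := fun r =>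
    hint.sub (integrable_const r)
  have hint_abs : ∀ r : ℝ, Integrable (fun u => |u - r|) σ := fun r => (hint_sub r).abs
  have hintsub_val : ∀ r : ℝ, ∫ u, (u - r) ∂σ = m - r := by
    intro r
    rw [integral_sub hint (integrable_const r), integral_const]
    simp [hm]
  -- c r ≥ m
  have hcm : ∀ r, m ≤ c r := by
    intro r
    have h1 : ∫ u, (u - r) ∂σ ≤ ∫ u, |u - r| ∂σ :=
      integral_mono (hint_sub r) (hint_abs r) fun u => le_abs_self _
    rw [hintsub_val r] at h1
    rw [hc r]; linarith
  -- c r ≥ r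
  have hcr : ∀ r, r ≤ c r := by
    intro r
    have h1 : ∫ u, (r - u) ∂σ ≤ ∫ u, |u - r| ∂σ := by
      refine integral_mono ((integrable_const r).sub hint) (hint_abs r) fun u => ?_
      rw [abs_sub_comm]; exact le_abs_self _
    have h2 : ∫ u, (r - u) ∂σ = r - m := by
      rw [integral_sub (integrable_const r) hint, integral_const]; simp [hm]
    rw [h2] at h1
    rw [hc r]; linarith
  -- c is continuous
  have hclip : ∀ r1 r2 : ℝ, |c r1 - c r2| ≤ |r1 - r2| := by
    intro r1 r2
    have h1 : |∫ u, |u - r1| ∂σ - ∫ u, |u - r2| ∂σ| ≤ |r1 - r2| := by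
      rw [← integral_sub (hint_abs r1) (hint_abs r2)]
      have hni := norm_integral_le_integral_norm (μ := σ) (fun u => |u - r1| - |u - r2|)
      simp only [Real.norm_eq_abs] at hni
      refine hni.trans ?_
      have h2 : ∫ u, |(|u - r1| - |u - r2|)| ∂σ ≤ ∫ _u, |r1 - r2| ∂σ := by
        refine integral_mono ((hint_abs r1).sub (hint_abs r2)).abs (integrable_const _)
          fun u => ?_
        refine (abs_abs_sub_abs_le_abs_sub _ _).trans ?_
        rw [show u - r1 - (u - r2) = -(r1 - r2) by ring, abs_neg]
      simpa using h2
    have h3 : c r1 - c r2 = ((∫ u, |u - r1| ∂σ - ∫ u, |u - r2| ∂σ) + (r1 - r2)) / 2 := by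
      rw [hc, hc]; ring
    rw [h3, abs_div, abs_two]
    have h4 := abs_add_le (∫ u, |u - r1| ∂σ - ∫ u, |u - r2| ∂σ) (r1 - r2)
    linarith
  have hccont : Continuous c := by
    have hlip : LipschitzWith 1 c := by
      refine LipschitzWith.of_dist_le_mul fun r1 r2 => ?_
      rw [Real.dist_eq, Real.dist_eq, NNReal.coe_one, one_mul]
      exact hclip r1 r2
    exact hlip.continuous
  -- c r - r → 0
  have hctend : Tendsto (fun r : ℝ => c r - r) atTop (𝓝 0) := by
    have h0 : Tendsto (fun r : ℝ => ∫ u, (|u - r| - (r - u)) ∂σ) atTop (𝓝 (∫ _u, (0:ℝ) ∂σ)) := by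
      refine tendsto_integral_filter_of_dominated_convergence (fun u => 2 * |u|) ?_ ?_ ?_ ?_
      · exact Eventually.of_forall fun r =>
          (((continuous_id.sub continuous_const).abs.sub
            (continuous_const.sub continuous_id)).aestronglyMeasurable)
      · filter_upwards [eventually_ge_atTop (0:ℝ)] with r hr
        filter_upwards [hae] with u hu
        have h1 : r - u ≤ |u - r| := by rw [abs_sub_comm]; exact le_abs_self _
        have h2 : |u - r| ≤ u + r := abs_le.2 ⟨by linarith, by linarith⟩
        rw [Real.norm_eq_abs, abs_of_nonneg (by linarith), abs_of_nonneg hu]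
        linarith
      · exact (hint.abs.const_mul 2)
      · refine Eventually.of_forall fun u => ?_
        refine Tendsto.congr' ?_ tendsto_const_nhds
        filter_upwards [eventually_ge_atTop u] with r hr
        rw [abs_sub_comm, abs_of_nonneg (by linarith)]
        ring
    simp only [integral_zero] at h0
    have heq : ∀ r : ℝ, c r - r = (∫ u, (|u - r| - (r - u)) ∂σ) / 2 := by
      intro r
      have h2 : ∫ u, (r - u) ∂σ = r - m := by
        rw [integral_sub (integrable_const r) hint, integral_const]; simp [hm]
      have h5 : ∫ u, (|u - r| - (r - u)) ∂σ = (∫ u, |u - r| ∂σ) - (r - m) := by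
        rw [← h2]; exact integral_sub (hint_abs r) ((integrable_const r).sub hint)
      rw [hc r, h5]; ring
    have := h0.div_const 2
    simpa [heq, zero_div] using this.congr fun r => (heq r).symm
  -- existence of large r with c r - r < s
  have hbig : ∀ s : ℝ, 0 < s → ∃ r : ℝ, 0 < r ∧ c r - r < s := by
    intro s hs
    have h1 : ∀ᶠ r in atTop, c r - r < s := hctend.eventually (eventually_lt_nhds hs)
    exact ((eventually_gt_atTop (0:ℝ)).and h1).exists
  have hφ_ub : ∀ s ∈ Set.Ioo 0 m, ∀ r : ℝ, 0 < r → φ s ≤ (c r - s) / r := by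
    intro s hs r hr; exact (hφ s hs).2 ⟨r, hr, rfl⟩
  have hφ_lb : ∀ s ∈ Set.Ioo 0 m, (m - s) / m ≤ φ s := by
    intro s hs
    obtain ⟨⟨r, hr, hrs⟩, -⟩ := hφ s hs
    rw [← hrs]
    simp only [mem_Ioi] at hr
    rw [div_le_div_iff₀ hmpos hr]
    rcases le_total r m with h | h
    · nlinarith [hcm r, hs.2, hs.1]
    · nlinarith [hcr r, hs.2, hs.1]
  have hφ_lt1 : ∀ s ∈ Set.Ioo 0 m, φ s < 1 := by
    intro s hs
    obtain ⟨r, hr, hlt⟩ := hbig s hs.1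
    refine lt_of_le_of_lt (hφ_ub s hs r hr) ?_
    rw [div_lt_one hr]; linarith
  have hφ_pos : ∀ s ∈ Set.Ioo 0 m, 0 < φ s := by
    intro s hs
    refine lt_of_lt_of_le ?_ (hφ_lb s hs)
    exact div_pos (by linarith [hs.2]) hmpos
  -- ζ s is a minimizer
  have hζ_spec : ∀ s ∈ Set.Ioo 0 m, 0 < ζ s ∧ c (ζ s) - s = φ s * ζ s ∧ m - s ≤ ζ s := by
    intro s hs
    obtain ⟨⟨r₀, hr₀, hr₀eq⟩, -⟩ := hφ s hs
    simp only [mem_Ioi] at hr₀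
    have h1 : φ s < 1 := hφ_lt1 s hs
    set S := {r : ℝ | 0 < r ∧ (c r - s) / r = φ s} with hS
    have hne : S.Nonempty := ⟨r₀, hr₀, hr₀eq⟩
    have hbdd : BddAbove S := by
      refine ⟨s / (1 - φ s), fun r hr => ?_⟩
      obtain ⟨hrpos, hreq⟩ := hr
      rw [div_eq_iff (ne_of_gt hrpos)] at hreq
      rw [le_div_iff₀ (by linarith : (0:ℝ) < 1 - φ s)]
      nlinarith [hcr r]
    have hz : ζ s = sSup S := hζ s hs
    obtain ⟨u, -, hu_tend, hu_mem⟩ := exists_seq_tendsto_sSup hne hbdd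
    have hzpos : 0 < ζ s := lt_of_lt_of_le (hu_mem 0).1 (hz ▸ le_csSup hbdd (hu_mem 0))
    have hcont : ContinuousAt (fun r => (c r - s) / r) (ζ s) :=
      ContinuousAt.div ((hccont.sub continuous_const).continuousAt) continuousAt_id
        (ne_of_gt hzpos)
    have htend2 : Tendsto (fun n => (c (u n) - s) / (u n)) atTop
        (𝓝 ((c (ζ s) - s) / (ζ s))) := by
      refine hcont.tendsto.comp ?_
      rw [hz]; exact hu_tend
    have heq : (c (ζ s) - s) / (ζ s) = φ s := by
      refine tendsto_nhds_unique htend2 ?_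
      have : (fun n => (c (u n) - s) / (u n)) = fun _ => φ s := funext fun n => (hu_mem n).2
      rw [this]; exact tendsto_const_nhds
    have heq2 : c (ζ s) - s = φ s * ζ s := (div_eq_iff (ne_of_gt hzpos)).1 heq
    refine ⟨hzpos, heq2, ?_⟩
    nlinarith [hcm (ζ s)]
  -- supergradient inequality
  have hsuper : ∀ s ∈ Set.Ioo 0 m, ∀ t ∈ Set.Ioo 0 m,
      φ t * ζ s ≤ φ s * ζ s + (s - t) := by
    intro s hs t ht
    obtain ⟨hzpos, hzeq, -⟩ := hζ_spec s hs
    have h1 : φ t ≤ (c (ζ s) - t) / (ζ s) := hφ_ub t ht (ζ s) hzpos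
    rw [le_div_iff₀ hzpos] at h1
    linarith
  -- 1/ζ is nondecreasing
  have hmono : ∀ s ∈ Set.Ioo 0 m, ∀ t ∈ Set.Ioo 0 m, s ≤ t → 1 / ζ s ≤ 1 / ζ t := by
    intro s hs t ht hst
    rcases eq_or_lt_of_le hst with rfl | hst
    · exact le_refl _
    obtain ⟨hzs, -, -⟩ := hζ_spec s hs
    obtain ⟨hzt, -, -⟩ := hζ_spec t ht
    have h1 := hsuper s hs t ht
    have h2 := hsuper t ht s hs
    have hd : 0 < φ s - φ t := by
      by_contra hcon
      push_neg at hcon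
      nlinarith
    have hzz : ζ t ≤ ζ s := by nlinarith
    exact one_div_le_one_div_of_le hzt hzz
  -- === main argument ===
  intro s hs
  have hs0 : 0 < s := hs.1
  have hsm : s < m := hs.2
  have hmin_mem : ∀ u : ℝ, 0 < u → min u s ∈ Set.Ioo 0 m := fun u hu =>
    ⟨lt_min hu hs0, lt_of_le_of_lt (min_le_right _ _) hsm⟩
  set G : ℝ → ℝ := fun u => if u ≤ 0 then 0 else 1 / ζ (min u s) with hGdef
  have hGapp : ∀ u, G u = if u ≤ 0 then 0 else 1 / ζ (min u s) := fun u => by rw [hGdef]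
  have hGval : ∀ u : ℝ, 0 < u → u ≤ s → G u = 1 / ζ u := by
    intro u h1 h2
    rw [hGapp, if_neg (not_le.2 h1), min_eq_left h2]
  have hGnonneg : ∀ u, 0 ≤ G u := by
    intro u
    rw [hGapp]
    by_cases h : u ≤ 0
    · rw [if_pos h]
    · rw [if_neg h]
      push_neg at h
      obtain ⟨hz, -, -⟩ := hζ_spec (min u s) (hmin_mem u h)
      positivity
  have hGmono : Monotone G := by
    intro x y hxy
    by_cases hx : x ≤ 0
    · rw [hGapp x, if_pos hx]; exact hGnonneg y
    push_neg at hx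
    have hy : 0 < y := lt_of_lt_of_le hx hxy
    rw [hGapp x, hGapp y, if_neg (not_le.2 hx), if_neg (not_le.2 hy)]
    exact hmono _ (hmin_mem x hx) _ (hmin_mem y hy) (min_le_min hxy (le_refl s))
  have hGint : ∀ a b : ℝ, IntervalIntegrable G volume a b := fun a b =>
    (hGmono.monotoneOn _).intervalIntegrable
  -- Riemann sum identity
  have key : ∀ a : ℝ, 0 < a → a < s → φ a - φ s = ∫ u in a..s, G u := by
    intro a ha has
    have hD : (φ a - φ s) - (∫ u in a..s, G u) = 0 := by
      refine aux_eq_zero_of_abs_le (C := (s - a) * (G s - G a)) ?_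
      intro n
      set Δ : ℝ := (s - a) / (n + 1) with hΔ
      have hn1 : (0:ℝ) < (n:ℝ) + 1 := by positivity
      have hΔpos : 0 < Δ := div_pos (by linarith) hn1
      set t : ℕ → ℝ := fun i => a + i * Δ with ht
      have ht0 : t 0 = a := by simp [ht]
      have hn1' : ((n:ℝ) + 1) ≠ 0 := ne_of_gt hn1
      have htN : t (n + 1) = s := by
        rw [ht]; dsimp only; rw [hΔ]
        push_cast
        field_simp
        ring
      have htmem : ∀ i ≤ n + 1, a ≤ t i ∧ t i ≤ s := by
        intro i hi
        have h0 : (0:ℝ) ≤ (i:ℝ) * Δ := mul_nonneg (Nat.cast_nonneg i) hΔpos.le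
        have h1 : (i:ℝ) ≤ (n:ℝ) + 1 := by exact_mod_cast hi
        have h2 : (i:ℝ) * Δ ≤ ((n:ℝ) + 1) * Δ := mul_le_mul_of_nonneg_right h1 hΔpos.le
        have h3 : ((n:ℝ) + 1) * Δ = s - a := by rw [hΔ]; field_simp
        constructor
        · rw [ht]; dsimp only; linarith
        · rw [ht]; dsimp only; linarith
      have hstep : ∀ i : ℕ, t (i + 1) = t i + Δ := by
        intro i; rw [ht]; dsimp only; push_cast; ring
      have hterm : ∀ i < n + 1, |(φ (t i) - φ (t (i + 1))) - ∫ u in t i..t (i + 1), G u|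
          ≤ Δ * (G (t (i + 1)) - G (t i)) := by
        intro i hi
        obtain ⟨hai, his⟩ := htmem i (le_of_lt hi)
        obtain ⟨hai1, hi1s⟩ := htmem (i + 1) hi
        have hx : t i ∈ Set.Ioo 0 m := ⟨lt_of_lt_of_le ha hai, lt_of_le_of_lt his hsm⟩
        have hy : t (i + 1) ∈ Set.Ioo 0 m := ⟨lt_of_lt_of_le ha hai1, lt_of_le_of_lt hi1s hsm⟩
        have hyx : t (i + 1) - t i = Δ := by rw [hstep]; ring
        have hxy : t i ≤ t (i + 1) := by linarith
        obtain ⟨hzx, -, -⟩ := hζ_spec (t i) hx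
        obtain ⟨hzy, -, -⟩ := hζ_spec (t (i + 1)) hy
        have hGx : G (t i) = 1 / ζ (t i) := hGval _ (lt_of_lt_of_le ha hai) his
        have hGy : G (t (i + 1)) = 1 / ζ (t (i + 1)) := hGval _ (lt_of_lt_of_le ha hai1) hi1s
        have h1 := hsuper (t i) hx (t (i + 1)) hy
        have h2 := hsuper (t (i + 1)) hy (t i) hx
        have hφ1 : Δ * G (t i) ≤ φ (t i) - φ (t (i + 1)) := by
          rw [hGx, mul_one_div, div_le_iff₀ hzx]
          nlinarith
        have hφ2 : φ (t i) - φ (t (i + 1)) ≤ Δ * G (t (i + 1)) := by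
          rw [hGy, mul_one_div, le_div_iff₀ hzy]
          nlinarith
        have hint1 : Δ * G (t i) ≤ ∫ u in t i..t (i + 1), G u := by
          have h4 := intervalIntegral.integral_mono_on (μ := volume) hxy
            (intervalIntegrable_const (c := G (t i))) (hGint _ _)
            (fun x hx' => hGmono hx'.1)
          rw [intervalIntegral.integral_const, hyx, smul_eq_mul] at h4
          exact h4
        have hint2 : (∫ u in t i..t (i + 1), G u) ≤ Δ * G (t (i + 1)) := by
          have h4 := intervalIntegral.integral_mono_on (μ := volume) hxy
            (hGint _ _) (intervalIntegrable_const (c := G (t (i + 1))))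
            (fun x hx' => hGmono hx'.2)
          rw [intervalIntegral.integral_const, hyx, smul_eq_mul] at h4
          exact h4
        rw [abs_le]
        exact ⟨by linarith, by linarith⟩
      have hsum1 : φ a - φ s = ∑ i ∈ Finset.range (n + 1), (φ (t i) - φ (t (i + 1))) := by
        rw [Finset.sum_range_sub' (fun i => φ (t i)), ht0, htN]
      have hsum2 : (∫ u in a..s, G u) = ∑ i ∈ Finset.range (n + 1),
          ∫ u in t i..t (i + 1), G u := by
        rw [intervalIntegral.sum_integral_adjacent_intervals (fun i _ => hGint _ _), ht0, htN]
      rw [hsum1, hsum2, ← Finset.sum_sub_distrib]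
      refine le_trans (Finset.abs_sum_le_sum_abs _ _) ?_
      refine le_trans (Finset.sum_le_sum fun i hi => hterm i (Finset.mem_range.1 hi)) ?_
      have h3 : ∑ i ∈ Finset.range (n + 1), Δ * (G (t (i + 1)) - G (t i))
          = Δ * (G s - G a) := by
        rw [← Finset.mul_sum, Finset.sum_range_sub (fun i => G (t i)), ht0, htN]
      rw [h3, hΔ, div_mul_eq_mul_div]
    linarith
  -- limit a → 0
  have hGs0 : 0 ≤ G s := hGnonneg s
  have hfinal : φ s - (1 - ∫ u in (0:ℝ)..s, G u) = 0 := by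
    refine aux_eq_zero_of_abs_le (C := s * (1 / m + G s)) ?_
    intro n
    set a : ℝ := s / (n + 2) with haa
    have hn2 : (0:ℝ) < (n:ℝ) + 2 := by positivity
    have ha : 0 < a := div_pos hs0 hn2
    have has : a < s := by
      rw [haa, div_lt_iff₀ hn2]
      nlinarith
    have haIoo : a ∈ Set.Ioo 0 m := ⟨ha, lt_trans has hsm⟩
    have hkey := key a ha has
    have hsplit : (∫ u in (0:ℝ)..s, G u) = (∫ u in (0:ℝ)..a, G u) + ∫ u in a..s, G u :=
      (intervalIntegral.integral_add_adjacent_intervals (hGint _ _) (hGint _ _)).symm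
    have hφa1 : φ a ≤ 1 := le_of_lt (hφ_lt1 a haIoo)
    have hφa2 : 1 - a * (1 / m) ≤ φ a := by
      have h5 := hφ_lb a haIoo
      rw [sub_div, div_self (ne_of_gt hmpos)] at h5
      rw [mul_one_div]
      linarith
    have hI0a1 : (∫ u in (0:ℝ)..a, G u) ≤ a * G s := by
      have h4 := intervalIntegral.integral_mono_on (μ := volume) ha.le (hGint _ _)
        (intervalIntegrable_const (c := G s)) (fun x hx' => hGmono (le_trans hx'.2 has.le))
      rw [intervalIntegral.integral_const, smul_eq_mul, sub_zero] at h4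
      exact h4
    have hI0a2 : 0 ≤ ∫ u in (0:ℝ)..a, G u := by
      have h4 := intervalIntegral.integral_mono_on (μ := volume) ha.le
        (intervalIntegrable_const (c := (0:ℝ))) (hGint _ _) (fun x _ => hGnonneg x)
      rw [intervalIntegral.integral_const, smul_eq_mul, mul_zero] at h4
      exact h4
    have hEq : φ s - (1 - ∫ u in (0:ℝ)..s, G u) = (φ a - 1) + ∫ u in (0:ℝ)..a, G u := by
      rw [hsplit]; linarith
    have h1m : 0 ≤ 1 / m := le_of_lt (by positivity)
    have hb1 : |(φ a - 1) + ∫ u in (0:ℝ)..a, G u| ≤ a * (1 / m + G s) := by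
      have hsplit2 : a * (1 / m + G s) = a * (1 / m) + a * G s := by ring
      rw [abs_le]
      constructor
      · linarith [mul_nonneg ha.le hGs0]
      · linarith [mul_nonneg ha.le h1m]
    rw [hEq]
    refine hb1.trans ?_
    have hC0 : 0 ≤ s * (1 / m + G s) := by positivity
    have h6 : a * (1 / m + G s) = s * (1 / m + G s) / ((n:ℝ) + 2) := by
      rw [haa]; ring
    rw [h6]
    apply div_le_div_of_nonneg_left hC0 (by positivity) (by linarith)
  have hcong : (∫ u in (0:ℝ)..s, G u) = ∫ u in (0:ℝ)..s, 1 / ζ u := by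
    refine intervalIntegral.integral_congr_ae (Eventually.of_forall fun x hx => ?_)
    rw [Set.uIoc_of_le hs0.le] at hx
    exact hGval x hx.1 hx.2
  linarith
end

section
/- Let Ψ : [0,∞) → ℝ be convex with non-decreasing right derivative Ψ'₊ bounded above, let Ψ'(+∞) := lim_{x→∞} Ψ'₊(x), and let dΨ'' denote the Lebesgue–Stieltjes measure associated with Ψ'₊. Let Δ : [0,∞) → [0,∞) be non-decreasing and locally absolutely continuous with almost-everywhere derivative Δ'. Then for every l ≥ 0, Ψ'(+∞) − ∫_l^∞ Δ'(m) e^{Δ(m)} (∫_{(m,∞)} e^{−Δ(n)} dΨ''(n)) dm = Ψ'₊(l) + e^{Δ(l)} ∫_{(l,∞)} e^{−Δ(n)} dΨ''(n). -/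
open MeasureTheory Set Filter Real

private lemma aux_deriv_nonneg {Δ : ℝ → ℝ} (hΔmono : MonotoneOn Δ (Set.Ici 0))
    {x d : ℝ} (hx : 0 < x) (hd : HasDerivAt Δ d x) : 0 ≤ d := by
  have hmono : Monotone fun y => Δ (max y 0) := fun a b hab =>
    hΔmono (le_max_right a 0) (le_max_right b 0) (max_le_max hab le_rfl)
  have hev : (fun y => Δ (max y 0)) =ᶠ[nhds x] Δ := by
    filter_upwards [eventually_gt_nhds hx] with y hy
    simp [max_eq_left hy.le]
  have hd' : HasDerivAt (fun y => Δ (max y 0)) d x := hd.congr_of_eventuallyEq hev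
  have hslope : Tendsto (slope (fun y => Δ (max y 0)) x) (nhdsWithin x (Set.Ioi x)) (nhds d) :=
    (hasDerivAt_iff_tendsto_slope.mp hd').mono_left
      (nhdsWithin_mono x fun y hy => ne_of_gt hy)
  refine ge_of_tendsto hslope ?_
  filter_upwards [self_mem_nhdsWithin] with y hy
  rw [slope_def_field]
  have hxy : x ≤ y := le_of_lt hy
  exact div_nonneg (sub_nonneg.mpr (hmono hxy)) (sub_nonneg.mpr hxy)

private lemma aux_prod_int {Δ Δ' : ℝ → ℝ} (hΔmono : MonotoneOn Δ (Set.Ici 0))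
    {l n : ℝ} (hl : 0 ≤ l) (hln : l ≤ n) (hint : IntegrableOn Δ' (Set.Ioo l n)) :
    IntegrableOn (fun x => Δ' x * Real.exp (Δ x)) (Set.Ioo l n) := by
  have hmem : ∀ x : ℝ, max (min x n) l ∈ Set.Ici (0:ℝ) := fun x =>
    le_trans hl (le_max_right _ _)
  have hggmono : Monotone fun x => Δ (max (min x n) l) := fun a b hab =>
    hΔmono (hmem a) (hmem b) (max_le_max (min_le_min_right _ hab) le_rfl)
  have hggm : Measurable fun x => Δ (max (min x n) l) := hggmono.measurable
  have h1 : IntegrableOn (fun x => Real.exp (Δ (max (min x n) l)) * Δ' x) (Set.Ioo l n) := by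
    refine Integrable.bdd_mul (c := Real.exp (Δ n)) hint
      ((Real.measurable_exp.comp hggm).aestronglyMeasurable) ?_
    refine ae_of_all _ fun x => ?_
    rw [Real.norm_eq_abs, abs_of_pos (Real.exp_pos _)]
    refine Real.exp_le_exp.mpr (hΔmono (hmem x) (le_trans hl hln) ?_)
    exact max_le (min_le_right _ _) hln
  refine h1.congr_fun (fun x hx => ?_) measurableSet_Ioo
  have h2 : max (min x n) l = x := by
    rw [min_eq_left hx.2.le, max_eq_left hx.1.le]
  dsimp only
  rw [h2, mul_comm]

/-- FTC with only an a.e. derivative, via the change-of-variables theorem applied on the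
(measurable, injective) set where the derivative exists and is positive. -/
private lemma aux_ftc_exp {Δ Δ' D' : ℝ → ℝ} (hΔmono : MonotoneOn Δ (Set.Ici 0))
    (hae : ∀ᵐ x : ℝ, x ∈ Set.Ioi (0 : ℝ) → HasDerivAt Δ (Δ' x) x)
    (hD'm : Measurable D') {l n : ℝ} (hl : 0 ≤ l) (hln : l < n)
    (hD'eq : ∀ᵐ x ∂(volume.restrict (Set.Ioo l n)), Δ' x = D' x)
    (hint : IntegrableOn Δ' (Set.Ioo l n))
    (hsum : ∫ x in Set.Ioo l n, Δ' x = Δ n - Δ l) :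
    ∫ x in Set.Ioo l n, Δ' x * Real.exp (Δ x) = Real.exp (Δ n) - Real.exp (Δ l) := by
  have hn0 : (0:ℝ) ≤ n := le_trans hl hln.le
  have hΔln : Δ l ≤ Δ n := hΔmono hl hn0 hln.le
  have hintprod : IntegrableOn (fun x => Δ' x * Real.exp (Δ x)) (Set.Ioo l n) :=
    aux_prod_int hΔmono hl hln.le hint
  -- null sets
  set T : Set ℝ := toMeasurable volume {x | ¬ (x ∈ Set.Ioi (0:ℝ) → HasDerivAt Δ (Δ' x) x)}
    with hTdef
  have hTmeas : MeasurableSet T := measurableSet_toMeasurable _ _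
  have hTnull : volume T = 0 := by
    rw [hTdef, measure_toMeasurable]
    exact ae_iff.mp hae
  have hbad : volume ({x | ¬ Δ' x = D' x} ∩ Set.Ioo l n) = 0 := by
    have h := ae_iff.mp hD'eq
    rwa [Measure.restrict_apply' measurableSet_Ioo] at h
  set M : Set ℝ := toMeasurable volume ({x | ¬ Δ' x = D' x} ∩ Set.Ioo l n) with hMdef
  have hMmeas : MeasurableSet M := measurableSet_toMeasurable _ _
  have hMnull : volume M = 0 := by rw [hMdef, measure_toMeasurable]; exact hbad
  -- the good set E
  set E : Set ℝ := (Set.Ioo l n ∩ {x | 0 < D' x}) \ (T ∪ M) with hEdef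
  have hEmeas : MeasurableSet E :=
    (measurableSet_Ioo.inter (measurableSet_lt measurable_const hD'm)).diff
      (hTmeas.union hMmeas)
  have hEsub : E ⊆ Set.Ioo l n := fun x hx => hx.1.1
  have hEkey : ∀ x ∈ E, HasDerivAt Δ (Δ' x) x ∧ 0 < Δ' x := by
    intro x hx
    have hxIoo : x ∈ Set.Ioo l n := hx.1.1
    have hxpos : 0 < x := lt_of_le_of_lt hl hxIoo.1
    have hxT : x ∉ T := fun h => hx.2 (Or.inl h)
    have hxM : x ∉ M := fun h => hx.2 (Or.inr h)
    have hd : HasDerivAt Δ (Δ' x) x := by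
      by_contra hcon
      exact hxT (subset_toMeasurable _ _ (fun h => hcon (h hxpos)))
    have heq : Δ' x = D' x := by
      by_contra hcon
      exact hxM (subset_toMeasurable _ _ ⟨hcon, hxIoo⟩)
    exact ⟨hd, heq ▸ hx.1.2⟩
  -- injectivity on E
  have hinjlt : ∀ x y, x ∈ E → y ∈ E → Δ x = Δ y → x < y → False := by
    intro x y hx hy hxy hlt
    have hx0 : (0:ℝ) ≤ x := le_trans hl (hEsub hx).1.le
    have hconst : ∀ t ∈ Set.Icc x y, Δ t = (fun _ : ℝ => Δ x) t := by
      intro t ht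
      have ht0 : (0:ℝ) ≤ t := le_trans hx0 ht.1
      have h1 : Δ x ≤ Δ t := hΔmono hx0 ht0 ht.1
      have h2 : Δ t ≤ Δ y := hΔmono ht0 (le_trans ht0 ht.2) ht.2
      exact le_antisymm (hxy ▸ h2) h1
    have hder : HasDerivWithinAt Δ (Δ' x) (Set.Icc x y) x :=
      (hEkey x hx).1.hasDerivWithinAt
    have hder0 : HasDerivWithinAt Δ 0 (Set.Icc x y) x :=
      (hasDerivWithinAt_const x _ (Δ x)).congr hconst (hconst x ⟨le_rfl, hlt.le⟩)
    have hu : UniqueDiffWithinAt ℝ (Set.Icc x y) x := uniqueDiffOn_Icc hlt x ⟨le_rfl, hlt.le⟩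
    have h0 : Δ' x = 0 := (hder.derivWithin hu).symm.trans (hder0.derivWithin hu)
    exact (hEkey x hx).2.ne' h0
  have hinj : Set.InjOn Δ E := by
    intro x hx y hy hxy
    rcases lt_trichotomy x y with h | h | h
    · exact (hinjlt x y hx hy hxy h).elim
    · exact h
    · exact (hinjlt y x hy hx hxy.symm h).elim
  have hE' : ∀ x ∈ E, HasDerivWithinAt Δ (Δ' x) E x := fun x hx =>
    (hEkey x hx).1.hasDerivWithinAt
  -- a.e. vanishing off E
  have hzero : ∀ᵐ x ∂volume, x ∈ Set.Ioo l n \ E → Δ' x = 0 := by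
    have hTM : volume (T ∪ M) = 0 :=
      le_antisymm (le_trans (measure_union_le _ _) (by simp [hTnull, hMnull])) zero_le
    filter_upwards [measure_eq_zero_iff_ae_notMem.mp hTM] with x hx hxd
    have hxIoo : x ∈ Set.Ioo l n := hxd.1
    have hxT : x ∉ T := fun h => hx (Or.inl h)
    have hxM : x ∉ M := fun h => hx (Or.inr h)
    have hd : HasDerivAt Δ (Δ' x) x := by
      by_contra hcon
      exact hxT (subset_toMeasurable _ _ (fun h => hcon (h (lt_of_le_of_lt hl hxIoo.1))))
    have heq : Δ' x = D' x := by
      by_contra hcon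
      exact hxM (subset_toMeasurable _ _ ⟨hcon, hxIoo⟩)
    have hnonneg : 0 ≤ Δ' x := aux_deriv_nonneg hΔmono (lt_of_le_of_lt hl hxIoo.1) hd
    have hnpos : ¬ 0 < D' x := fun hpos =>
      hxd.2 ⟨⟨hxIoo, hpos⟩, fun h => h.elim hxT hxM⟩
    have hle : Δ' x ≤ 0 := heq ▸ le_of_not_gt hnpos
    linarith
  -- splitting the integral over `Ioo l n` into `E` and a null-contribution part
  have hsplit : ∀ f : ℝ → ℝ, IntegrableOn f (Set.Ioo l n) →
      (∀ᵐ x ∂volume, x ∈ Set.Ioo l n \ E → f x = 0) →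
      ∫ x in Set.Ioo l n, f x = ∫ x in E, f x := by
    intro f hf hf0
    have hdm : MeasurableSet (Set.Ioo l n \ E) := measurableSet_Ioo.diff hEmeas
    have h2 : ∫ x in Set.Ioo l n \ E, f x = 0 := by
      rw [setIntegral_congr_ae hdm (hf0.mono fun x hx h => hx h)]
      simp
    have hunion : Set.Ioo l n = E ∪ (Set.Ioo l n \ E) := (Set.union_diff_cancel hEsub).symm
    rw [hunion, setIntegral_union disjoint_sdiff_self_right hdm
      (hf.mono_set hEsub) (hf.mono_set Set.diff_subset), h2, add_zero]
  -- volume of the image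
  have h1 := integral_image_eq_integral_abs_deriv_smul hEmeas hE' hinj (fun _ => (1:ℝ))
  simp only [setIntegral_const, smul_eq_mul, mul_one] at h1
  have habs : ∫ x in E, |Δ' x| = ∫ x in E, Δ' x :=
    setIntegral_congr_ae hEmeas (ae_of_all _ fun x hx => abs_of_pos (hEkey x hx).2)
  have hEint : ∫ x in E, Δ' x = Δ n - Δ l := by
    rw [← hsplit Δ' hint (hzero.mono fun x h hx => h hx)]
    exact hsum
  have hKsub : Δ '' E ⊆ Set.Icc (Δ l) (Δ n) := by
    rintro _ ⟨x, hx, rfl⟩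
    have hxIoo := hEsub hx
    exact ⟨hΔmono hl (le_trans hl hxIoo.1.le) hxIoo.1.le,
      hΔmono (le_trans hl hxIoo.1.le) hn0 hxIoo.2.le⟩
  have hIccvol : volume (Set.Icc (Δ l) (Δ n)) = ENNReal.ofReal (Δ n - Δ l) := Real.volume_Icc
  have hKle : volume (Δ '' E) ≤ ENNReal.ofReal (Δ n - Δ l) := by
    calc volume (Δ '' E) ≤ volume (Set.Icc (Δ l) (Δ n)) := measure_mono hKsub
      _ = ENNReal.ofReal (Δ n - Δ l) := hIccvol
  have hKne : volume (Δ '' E) ≠ ⊤ := (lt_of_le_of_lt hKle ENNReal.ofReal_lt_top).ne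
  have hKtoReal : (volume (Δ '' E)).toReal = Δ n - Δ l := by rw [← measureReal_def, h1, habs, hEint]
  have hKvol : volume (Δ '' E) = ENNReal.ofReal (Δ n - Δ l) := by
    rw [← hKtoReal, ENNReal.ofReal_toReal hKne]
  -- the image has full measure in `Icc (Δ l) (Δ n)`, so the restricted measures agree
  have hres : volume.restrict (Δ '' E) = volume.restrict (Set.Icc (Δ l) (Δ n)) := by
    have key : ∀ B : Set ℝ, MeasurableSet B →
        volume.restrict (Δ '' E) B ≤ volume.restrict (Set.Icc (Δ l) (Δ n)) B := by
      intro B hB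
      rw [Measure.restrict_apply hB, Measure.restrict_apply hB]
      exact measure_mono (Set.inter_subset_inter_right _ hKsub)
    refine Measure.ext fun A hA => le_antisymm (key A hA) ?_
    have huniv : volume.restrict (Δ '' E) Set.univ
        = volume.restrict (Set.Icc (Δ l) (Δ n)) Set.univ := by
      rw [Measure.restrict_apply_univ, Measure.restrict_apply_univ, hKvol, hIccvol]
    have hsumA : volume.restrict (Set.Icc (Δ l) (Δ n)) A
          + volume.restrict (Set.Icc (Δ l) (Δ n)) Aᶜ
        = volume.restrict (Δ '' E) A + volume.restrict (Δ '' E) Aᶜ := by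
      rw [measure_add_measure_compl hA, measure_add_measure_compl hA, huniv]
    have hfinAc : volume.restrict (Set.Icc (Δ l) (Δ n)) Aᶜ ≠ ⊤ := by
      refine ne_of_lt (lt_of_le_of_lt (measure_mono (Set.subset_univ _)) ?_)
      rw [Measure.restrict_apply_univ, hIccvol]
      exact ENNReal.ofReal_lt_top
    refine ENNReal.le_of_add_le_add_right hfinAc ?_
    calc volume.restrict (Set.Icc (Δ l) (Δ n)) A + volume.restrict (Set.Icc (Δ l) (Δ n)) Aᶜ
        = volume.restrict (Δ '' E) A + volume.restrict (Δ '' E) Aᶜ := hsumA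
      _ ≤ volume.restrict (Δ '' E) A + volume.restrict (Set.Icc (Δ l) (Δ n)) Aᶜ :=
          add_le_add le_rfl (key Aᶜ hA.compl)
  -- conclude
  have h2 := integral_image_eq_integral_abs_deriv_smul hEmeas hE' hinj Real.exp
  have habs2 : ∫ x in E, |Δ' x| • Real.exp (Δ x) = ∫ x in E, Δ' x * Real.exp (Δ x) :=
    setIntegral_congr_ae hEmeas (ae_of_all _ fun x hx => by
      rw [smul_eq_mul, abs_of_pos (hEkey x hx).2])
  have hIcc : ∫ y in Set.Icc (Δ l) (Δ n), Real.exp y = Real.exp (Δ n) - Real.exp (Δ l) := by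
    rw [MeasureTheory.integral_Icc_eq_integral_Ioc, ← intervalIntegral.integral_of_le hΔln,
      integral_exp]
  calc ∫ x in Set.Ioo l n, Δ' x * Real.exp (Δ x)
      = ∫ x in E, Δ' x * Real.exp (Δ x) :=
        hsplit _ hintprod (hzero.mono fun x h hx => by rw [h hx, zero_mul])
    _ = ∫ x in E, |Δ' x| • Real.exp (Δ x) := habs2.symm
    _ = ∫ y in Δ '' E, Real.exp y := h2.symm
    _ = ∫ y in Set.Icc (Δ l) (Δ n), Real.exp y := by rw [hres]
    _ = Real.exp (Δ n) - Real.exp (Δ l) := hIcc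

private noncomputable def auxG (ψ : StieltjesFunction ℝ) (Δ : ℝ → ℝ) (x : ℝ) : ENNReal :=
  ∫⁻ n in Set.Ioi x, ENNReal.ofReal (Real.exp (-(Δ n))) ∂ψ.measure

/-- The computation in the proof of the optimality theorem (Section 5.2): for a
convex `Ψ` on `[0,∞)` whose right derivative `ψ = Ψ'₊` (a Stieltjes function, with
associated Lebesgue–Stieltjes measure `ψ.measure = dΨ''`) is bounded above with
limit `ψinf = Ψ'(+∞)` at infinity, and for a non-decreasing, non-negative, locally
absolutely continuous `Δ` with a.e. derivative `Δ'`, one has for every `l ≥ 0`: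
`Ψ'(+∞) − ∫_l^∞ Δ'(m) e^{Δ(m)} (∫_{(m,∞)} e^{−Δ(n)} dΨ''(n)) dm
  = Ψ'₊(l) + e^{Δ(l)} ∫_{(l,∞)} e^{−Δ(n)} dΨ''(n)`. -/
theorem stieltjes_exponential_identity
    (Ψ : ℝ → ℝ) (ψ : StieltjesFunction ℝ)
    (hconv : ConvexOn ℝ (Set.Ici 0) Ψ)
    (hderiv : ∀ x ∈ Set.Ici (0 : ℝ), HasDerivWithinAt Ψ (ψ x) (Set.Ici x) x)
    (B : ℝ) (hbdd : ∀ x, ψ x ≤ B)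
    (ψinf : ℝ) (hlim : Tendsto (fun x => ψ x) atTop (nhds ψinf))
    (Δ Δ' : ℝ → ℝ)
    (hΔmono : MonotoneOn Δ (Set.Ici 0))
    (hΔnonneg : ∀ x ∈ Set.Ici (0 : ℝ), 0 ≤ Δ x)
    (hae : ∀ᵐ x : ℝ, x ∈ Set.Ioi (0 : ℝ) → HasDerivAt Δ (Δ' x) x)
    (hΔ'int : ∀ a b : ℝ, 0 ≤ a → a ≤ b → IntervalIntegrable Δ' volume a b)
    (hAC : ∀ a b : ℝ, 0 ≤ a → a ≤ b → Δ b - Δ a = ∫ x in a..b, Δ' x)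
    (l : ℝ) (hl : 0 ≤ l) :
    ψinf - (∫⁻ x in Set.Ioi l, ENNReal.ofReal (Δ' x * Real.exp (Δ x) *
        (∫⁻ n in Set.Ioi x, ENNReal.ofReal (Real.exp (-(Δ n))) ∂ψ.measure).toReal)).toReal
      = ψ l + Real.exp (Δ l) *
        (∫⁻ n in Set.Ioi l, ENNReal.ofReal (Real.exp (-(Δ n))) ∂ψ.measure).toReal := by
  have hψl : ψ l ≤ ψinf := ψ.mono.ge_of_tendsto hlim l
  -- measure of `Ioi`
  have hμIoi : ∀ x : ℝ, ψ.measure (Set.Ioi x) = ENNReal.ofReal (ψinf - ψ x) := by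
    intro x
    have h1 := tendsto_measure_iUnion_atTop (μ := ψ.measure)
      (s := fun y : ℝ => Set.Ioc x y) (antitone_const.Ioc monotone_id)
    rw [Set.iUnion_Ioc_right] at h1
    have h2 : Tendsto (fun y => ψ.measure (Set.Ioc x y)) atTop
        (nhds (ENNReal.ofReal (ψinf - ψ x))) := by
      simp only [StieltjesFunction.measure_Ioc]
      exact ENNReal.tendsto_ofReal (hlim.sub_const _)
    exact tendsto_nhds_unique h1 h2
  have hμfin : ψ.measure (Set.Ioi l) ≠ ⊤ := by
    rw [hμIoi l]; exact ENNReal.ofReal_ne_top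
  -- finiteness of G
  have hGle1 : ∀ x : ℝ, l ≤ x → auxG ψ Δ x ≤ ψ.measure (Set.Ioi x) := by
    intro x hx
    have hle : ∀ᵐ nn ∂(ψ.measure.restrict (Set.Ioi x)),
        ENNReal.ofReal (Real.exp (-(Δ nn))) ≤ 1 := by
      filter_upwards [ae_restrict_mem measurableSet_Ioi] with nn hnn
      refine ENNReal.ofReal_le_one.mpr (Real.exp_le_one_iff.mpr ?_)
      exact neg_nonpos.mpr (hΔnonneg nn (le_trans hl (le_trans hx (le_of_lt hnn))))
    calc auxG ψ Δ x ≤ ∫⁻ _ in Set.Ioi x, 1 ∂ψ.measure := lintegral_mono_ae hle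
      _ = ψ.measure (Set.Ioi x) := by rw [lintegral_one, Measure.restrict_apply_univ]
  have hGfin : ∀ x : ℝ, l ≤ x → auxG ψ Δ x ≠ ⊤ := by
    intro x hx
    refine ne_of_lt (lt_of_le_of_lt (le_trans (hGle1 x hx)
      (measure_mono (Set.Ioi_subset_Ioi hx))) ?_)
    exact lt_of_le_of_ne le_top hμfin
  -- monotone extension of Δ
  have hgmono : Monotone fun x => Δ (max x l) := fun a b hab =>
    hΔmono (le_trans hl (le_max_right a l)) (le_trans hl (le_max_right b l))
      (max_le_max hab le_rfl)
  have hgm : Measurable fun x => Δ (max x l) := hgmono.measurable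
  have hgeq : ∀ x : ℝ, l ≤ x → Δ (max x l) = Δ x := fun x hx => by rw [max_eq_left hx]
  -- measurable a.e. version of Δ'
  have hD'ae : AEMeasurable Δ' (volume.restrict (Set.Ioi l)) := by
    have hUn : Set.Ioi l = ⋃ k : ℕ, Set.Ioc l (l + (k + 1)) := by
      ext x
      simp only [Set.mem_Ioi, Set.mem_iUnion, Set.mem_Ioc]
      constructor
      · intro hx
        obtain ⟨k, hk⟩ := exists_nat_ge (x - l)
        exact ⟨k, hx, by push_cast; linarith⟩
      · rintro ⟨k, hk, -⟩; exact hk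
    rw [hUn, aemeasurable_iUnion_iff]
    intro k
    have hk1 : l ≤ l + ((k : ℝ) + 1) := le_add_of_nonneg_right (by positivity)
    exact ((intervalIntegrable_iff_integrableOn_Ioc_of_le hk1).mp
      (hΔ'int l _ hl hk1)).aemeasurable
  set D' : ℝ → ℝ := hD'ae.mk Δ' with hD'def
  have hD'm : Measurable D' := hD'ae.measurable_mk
  have hD'eq : ∀ᵐ x ∂(volume.restrict (Set.Ioi l)), Δ' x = D' x := hD'ae.ae_eq_mk
  have hae' : ∀ᵐ x ∂(volume.restrict (Set.Ioi l)),
      x ∈ Set.Ioi (0:ℝ) → HasDerivAt Δ (Δ' x) x := ae_restrict_of_ae hae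
  have hΔ'nonneg : ∀ᵐ x ∂(volume.restrict (Set.Ioi l)), 0 ≤ Δ' x := by
    filter_upwards [hae', ae_restrict_mem measurableSet_Ioi] with x h1 h2
    exact aux_deriv_nonneg hΔmono (lt_of_le_of_lt hl h2) (h1 (lt_of_le_of_lt hl h2))
  -- value of the inner dm-integral
  have hJ : ∀ nn : ℝ, nn ∈ Set.Ioi l →
      (∫⁻ x in Set.Ioo l nn, ENNReal.ofReal (D' x * Real.exp (Δ (max x l)))) =
      ENNReal.ofReal (Real.exp (Δ nn) - Real.exp (Δ l)) := by
    intro nn hnn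
    have hnl : l < nn := hnn
    have hDeqOo : ∀ᵐ x ∂(volume.restrict (Set.Ioo l nn)), Δ' x = D' x :=
      ae_restrict_of_ae_restrict_of_subset Set.Ioo_subset_Ioi_self hD'eq
    have hintOo : IntegrableOn Δ' (Set.Ioo l nn) :=
      ((intervalIntegrable_iff_integrableOn_Ioc_of_le hnl.le).mp
        (hΔ'int l nn hl hnl.le)).mono_set Set.Ioo_subset_Ioc_self
    have hsum : ∫ x in Set.Ioo l nn, Δ' x = Δ nn - Δ l := by
      rw [← MeasureTheory.integral_Ioc_eq_integral_Ioo,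
        ← intervalIntegral.integral_of_le hnl.le]
      exact (hAC l nn hl hnl.le).symm
    have hcore := aux_ftc_exp hΔmono hae hD'm hl hnl hDeqOo hintOo hsum
    have hintprod : IntegrableOn (fun x => Δ' x * Real.exp (Δ x)) (Set.Ioo l nn) :=
      aux_prod_int hΔmono hl hnl.le hintOo
    have hnonneg : 0 ≤ᵐ[volume.restrict (Set.Ioo l nn)] fun x => Δ' x * Real.exp (Δ x) := by
      filter_upwards [ae_restrict_of_ae_restrict_of_subset Set.Ioo_subset_Ioi_self hΔ'nonneg]
        with x hx
      exact mul_nonneg hx (Real.exp_pos _).le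
    calc (∫⁻ x in Set.Ioo l nn, ENNReal.ofReal (D' x * Real.exp (Δ (max x l))))
        = ∫⁻ x in Set.Ioo l nn, ENNReal.ofReal (Δ' x * Real.exp (Δ x)) := by
          refine lintegral_congr_ae ?_
          filter_upwards [hDeqOo, ae_restrict_mem measurableSet_Ioo] with x h1 h2
          rw [← h1, hgeq x h2.1.le]
      _ = ENNReal.ofReal (∫ x in Set.Ioo l nn, Δ' x * Real.exp (Δ x)) :=
          (ofReal_integral_eq_lintegral_ofReal hintprod hnonneg).symm
      _ = ENNReal.ofReal (Real.exp (Δ nn) - Real.exp (Δ l)) := by rw [hcore]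
  -- Tonelli setup
  haveI hfinν : IsFiniteMeasure (ψ.measure.restrict (Set.Ioi l)) :=
    ⟨by rw [Measure.restrict_apply_univ]; exact lt_of_le_of_ne le_top hμfin⟩
  set F : ℝ × ℝ → ENNReal := fun p =>
    Set.indicator {q : ℝ × ℝ | q.1 < q.2}
      (fun q => ENNReal.ofReal (D' q.1 * Real.exp (Δ (max q.1 l))) *
        ENNReal.ofReal (Real.exp (-(Δ (max q.2 l))))) p with hFdef
  have hg1 : Measurable fun x : ℝ => ENNReal.ofReal (D' x * Real.exp (Δ (max x l))) :=
    ENNReal.measurable_ofReal.comp (hD'm.mul (Real.measurable_exp.comp hgm))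
  have hg2 : Measurable fun x : ℝ => ENNReal.ofReal (Real.exp (-(Δ (max x l)))) :=
    ENNReal.measurable_ofReal.comp (Real.measurable_exp.comp hgm.neg)
  have hFmeas : Measurable F :=
    ((hg1.comp measurable_fst).mul (hg2.comp measurable_snd)).indicator
      (measurableSet_lt measurable_fst measurable_snd)
  have hswap := MeasureTheory.lintegral_lintegral_swap
    (μ := volume.restrict (Set.Ioi l)) (ν := ψ.measure.restrict (Set.Ioi l))
    (f := fun x nn => F (x, nn)) hFmeas.aemeasurable
  -- identify the LHS integral with the double integral
  have hIeq : (∫⁻ x in Set.Ioi l, ENNReal.ofReal (Δ' x * Real.exp (Δ x) *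
        (auxG ψ Δ x).toReal))
      = ∫⁻ x in Set.Ioi l, ∫⁻ nn in Set.Ioi l, F (x, nn) ∂ψ.measure := by
    refine lintegral_congr_ae ?_
    filter_upwards [hD'eq, hΔ'nonneg, ae_restrict_mem measurableSet_Ioi] with x h1 h2 h3
    have hind : ∀ nn : ℝ, F (x, nn) = Set.indicator (Set.Ioi x)
        (fun nn => ENNReal.ofReal (D' x * Real.exp (Δ (max x l))) *
          ENNReal.ofReal (Real.exp (-(Δ (max nn l))))) nn := by
      intro nn
      by_cases h : x < nn
      · simp only [hFdef]
        rw [Set.indicator_of_mem (show (x, nn) ∈ {q : ℝ × ℝ | q.1 < q.2} from h),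
          Set.indicator_of_mem (Set.mem_Ioi.mpr h)]
      · simp only [hFdef]
        rw [Set.indicator_of_notMem (show (x, nn) ∉ {q : ℝ × ℝ | q.1 < q.2} from h),
          Set.indicator_of_notMem (show nn ∉ Set.Ioi x from h)]
    have hIoisub : Set.Ioi x ∩ Set.Ioi l = Set.Ioi x :=
      Set.inter_eq_self_of_subset_left (Set.Ioi_subset_Ioi h3.le)
    calc ENNReal.ofReal (Δ' x * Real.exp (Δ x) * (auxG ψ Δ x).toReal)
        = ENNReal.ofReal (D' x * Real.exp (Δ (max x l))) * auxG ψ Δ x := by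
          rw [hgeq x h3.le, ← h1,
            ENNReal.ofReal_mul (mul_nonneg h2 (Real.exp_pos _).le),
            ENNReal.ofReal_toReal (hGfin x h3.le)]
      _ = ENNReal.ofReal (D' x * Real.exp (Δ (max x l))) *
            ∫⁻ nn in Set.Ioi x, ENNReal.ofReal (Real.exp (-(Δ (max nn l)))) ∂ψ.measure := by
          congr 1
          refine setLIntegral_congr_fun measurableSet_Ioi (fun nn hnn => ?_)
          rw [hgeq nn (le_trans h3.le (le_of_lt hnn))]
      _ = ∫⁻ nn in Set.Ioi x, ENNReal.ofReal (D' x * Real.exp (Δ (max x l))) *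
            ENNReal.ofReal (Real.exp (-(Δ (max nn l)))) ∂ψ.measure :=
          (lintegral_const_mul' _ _ ENNReal.ofReal_ne_top).symm
      _ = ∫⁻ nn in Set.Ioi l, F (x, nn) ∂ψ.measure := by
          simp_rw [hind]
          rw [lintegral_indicator measurableSet_Ioi,
            Measure.restrict_restrict measurableSet_Ioi, hIoisub]
  -- evaluate after swapping
  have hval : ∀ᵐ nn ∂(ψ.measure.restrict (Set.Ioi l)),
      (∫⁻ x in Set.Ioi l, F (x, nn)) = 1 - ENNReal.ofReal (Real.exp (Δ l - Δ nn)) := by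
    filter_upwards [ae_restrict_mem measurableSet_Ioi] with nn hnn
    have hind : ∀ x : ℝ, F (x, nn) = Set.indicator (Set.Iio nn)
        (fun x => ENNReal.ofReal (D' x * Real.exp (Δ (max x l))) *
          ENNReal.ofReal (Real.exp (-(Δ (max nn l))))) x := by
      intro x
      by_cases h : x < nn
      · simp only [hFdef]
        rw [Set.indicator_of_mem (show (x, nn) ∈ {q : ℝ × ℝ | q.1 < q.2} from h),
          Set.indicator_of_mem (Set.mem_Iio.mpr h)]
      · simp only [hFdef]
        rw [Set.indicator_of_notMem (show (x, nn) ∉ {q : ℝ × ℝ | q.1 < q.2} from h),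
          Set.indicator_of_notMem (show x ∉ Set.Iio nn from h)]
    have hΔlnn : Δ l ≤ Δ nn := hΔmono hl (le_trans hl hnn.le) hnn.le
    calc (∫⁻ x in Set.Ioi l, F (x, nn))
        = ∫⁻ x in Set.Iio nn ∩ Set.Ioi l,
            ENNReal.ofReal (D' x * Real.exp (Δ (max x l))) *
            ENNReal.ofReal (Real.exp (-(Δ (max nn l)))) := by
          simp_rw [hind]
          rw [lintegral_indicator measurableSet_Iio,
            Measure.restrict_restrict measurableSet_Iio]
      _ = (∫⁻ x in Set.Ioo l nn, ENNReal.ofReal (D' x * Real.exp (Δ (max x l)))) *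
            ENNReal.ofReal (Real.exp (-(Δ (max nn l)))) := by
          rw [Set.Iio_inter_Ioi, lintegral_mul_const' _ _ ENNReal.ofReal_ne_top]
      _ = ENNReal.ofReal (Real.exp (Δ nn) - Real.exp (Δ l)) *
            ENNReal.ofReal (Real.exp (-(Δ nn))) := by
          rw [hJ nn hnn, hgeq nn hnn.le]
      _ = ENNReal.ofReal (1 - Real.exp (Δ l - Δ nn)) := by
          rw [← ENNReal.ofReal_mul (sub_nonneg.mpr (Real.exp_le_exp.mpr hΔlnn))]
          congr 1
          rw [sub_mul, ← Real.exp_add, ← Real.exp_add, add_neg_cancel, Real.exp_zero,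
            ← sub_eq_add_neg]
      _ = 1 - ENNReal.ofReal (Real.exp (Δ l - Δ nn)) := by
          rw [ENNReal.ofReal_sub _ (Real.exp_pos _).le, ENNReal.ofReal_one]
  have hsub_meas : AEMeasurable (fun nn => ENNReal.ofReal (Real.exp (Δ l - Δ nn)))
      (ψ.measure.restrict (Set.Ioi l)) := by
    refine AEMeasurable.congr
      (f := fun nn => ENNReal.ofReal (Real.exp (Δ l - Δ (max nn l)))) ?_ ?_
    · exact (ENNReal.measurable_ofReal.comp
        (Real.measurable_exp.comp (measurable_const.sub hgm))).aemeasurable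
    · filter_upwards [ae_restrict_mem measurableSet_Ioi] with nn hnn
      rw [hgeq nn hnn.le]
  have hsub_le : ∀ᵐ nn ∂(ψ.measure.restrict (Set.Ioi l)),
      ENNReal.ofReal (Real.exp (Δ l - Δ nn)) ≤ 1 := by
    filter_upwards [ae_restrict_mem measurableSet_Ioi] with nn hnn
    exact ENNReal.ofReal_le_one.mpr (Real.exp_le_one_iff.mpr
      (sub_nonpos.mpr (hΔmono hl (le_trans hl hnn.le) hnn.le)))
  have hsub_fin : (∫⁻ nn in Set.Ioi l, ENNReal.ofReal (Real.exp (Δ l - Δ nn)) ∂ψ.measure)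
      ≤ ψ.measure (Set.Ioi l) := by
    calc (∫⁻ nn in Set.Ioi l, ENNReal.ofReal (Real.exp (Δ l - Δ nn)) ∂ψ.measure)
        ≤ ∫⁻ _ in Set.Ioi l, 1 ∂ψ.measure := lintegral_mono_ae hsub_le
      _ = ψ.measure (Set.Ioi l) := by rw [lintegral_one, Measure.restrict_apply_univ]
  have hc : (∫⁻ nn in Set.Ioi l, ENNReal.ofReal (Real.exp (Δ l - Δ nn)) ∂ψ.measure)
      = ENNReal.ofReal (Real.exp (Δ l)) * auxG ψ Δ l := by
    calc (∫⁻ nn in Set.Ioi l, ENNReal.ofReal (Real.exp (Δ l - Δ nn)) ∂ψ.measure)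
        = ∫⁻ nn in Set.Ioi l, ENNReal.ofReal (Real.exp (Δ l)) *
            ENNReal.ofReal (Real.exp (-(Δ nn))) ∂ψ.measure := by
          refine lintegral_congr fun nn => ?_
          rw [← ENNReal.ofReal_mul (Real.exp_pos _).le, ← Real.exp_add, ← sub_eq_add_neg]
      _ = ENNReal.ofReal (Real.exp (Δ l)) * auxG ψ Δ l :=
          lintegral_const_mul' _ _ ENNReal.ofReal_ne_top
  have hI : (∫⁻ x in Set.Ioi l, ENNReal.ofReal (Δ' x * Real.exp (Δ x) *
        (auxG ψ Δ x).toReal))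
      = ψ.measure (Set.Ioi l) - ENNReal.ofReal (Real.exp (Δ l)) * auxG ψ Δ l := by
    rw [hIeq, hswap, lintegral_congr_ae hval,
      lintegral_sub' hsub_meas (lt_of_le_of_lt hsub_fin
        (lt_of_le_of_ne le_top hμfin)).ne hsub_le,
      lintegral_one, Measure.restrict_apply_univ, hc]
  have hcle : ENNReal.ofReal (Real.exp (Δ l)) * auxG ψ Δ l ≤ ψ.measure (Set.Ioi l) :=
    hc ▸ hsub_fin
  show ψinf - (∫⁻ x in Set.Ioi l, ENNReal.ofReal (Δ' x * Real.exp (Δ x) *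
        (auxG ψ Δ x).toReal)).toReal
      = ψ l + Real.exp (Δ l) * (auxG ψ Δ l).toReal
  rw [hI, ENNReal.toReal_sub_of_le hcle hμfin, hμIoi l,
    ENNReal.toReal_ofReal (sub_nonneg.mpr hψl), ENNReal.toReal_mul,
    ENNReal.toReal_ofReal (Real.exp_pos _).le]
  ring
end
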